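/- arXiv:math/0606287 — 7 statements merged into one kernel-verified Lean document; each statement's English description precedes it below -/
import Mathlib

section
/- For every integer k ≥ 1, every real α ≠ 0, and every x ∈ (0,1], the integral of (t₁^α + t₂^α + ⋯ + t_k^α)/(t₁t₂⋯t_k) over the simplex {1 ≥ t₁ ≥ ⋯ ≥ t_k ≥ x} equals ((-ln x)^{k-1}/(k-1)!) · (1 - x^α)/α. -/
open MeasureTheory Set

section SimplexAux


lemma my_restrict_pi {k : ℕ} (s : Set ℝ) :
    (volume : Measure (Fin k → ℝ)).restrict (Set.pi Set.univ fun _ => s)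
      = Measure.pi (fun _ : Fin k => volume.restrict s) := by
  refine (Measure.pi_eq (μ := fun _ : Fin k => volume.restrict s) fun t ht => ?_).symm
  rw [Measure.restrict_apply (MeasurableSet.univ_pi ht)]
  have : Set.pi Set.univ t ∩ Set.pi Set.univ (fun _ => s)
      = Set.pi Set.univ (fun i => t i ∩ s) := by
    ext u; simp [Set.mem_pi, forall_and]
  rw [this, volume_pi_pi]
  exact Finset.prod_congr rfl fun i _ => (Measure.restrict_apply (ht i)).symm

lemma my_cube_prod_integral {k : ℕ} {s : Set ℝ} (g : Fin k → ℝ → ℝ) :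
    ∫ t in Set.pi Set.univ (fun _ : Fin k => s), ∏ i, g i (t i) ∂volume
      = ∏ i, ∫ y in s, g i y := by
  rw [my_restrict_pi s]
  letI : MeasureSpace ℝ := ⟨volume.restrict s⟩
  haveI : SigmaFinite (volume : Measure ℝ) := Restrict.sigmaFinite _ s
  exact MeasureTheory.integral_fintype_prod_eq_prod g

lemma my_cube_prod_integrable {k : ℕ} {s : Set ℝ} (g : Fin k → ℝ → ℝ)
    (hg : ∀ i, IntegrableOn (g i) s) :
    IntegrableOn (fun t : Fin k → ℝ => ∏ i, g i (t i)) (Set.pi Set.univ fun _ => s) := by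
  rw [IntegrableOn, my_restrict_pi s]
  letI : MeasureSpace ℝ := ⟨volume.restrict s⟩
  haveI : SigmaFinite (volume : Measure ℝ) := Restrict.sigmaFinite _ s
  exact Integrable.fintype_prod hg

lemma my_hyperplane_null {k : ℕ} {i j : Fin k} (hij : i ≠ j) :
    volume {t : Fin k → ℝ | t i = t j} = 0 := by
  have h1 : {t : Fin k → ℝ | t i = t j}
      = (LinearMap.ker ((LinearMap.proj i : (Fin k → ℝ) →ₗ[ℝ] ℝ) - LinearMap.proj j) : Set _) := by
    ext t
    simp [LinearMap.mem_ker, sub_eq_zero]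
  rw [h1]
  refine Measure.addHaar_submodule _ _ (fun h => ?_)
  have h2 : (Pi.single i 1 : Fin k → ℝ) ∈ LinearMap.ker
      ((LinearMap.proj i : (Fin k → ℝ) →ₗ[ℝ] ℝ) - LinearMap.proj j) := by
    rw [h]; trivial
  simp [LinearMap.mem_ker, Pi.single_apply, hij.symm] at h2

lemma my_null_noninj {k : ℕ} : volume {t : Fin k → ℝ | ¬ Function.Injective t} = 0 := by
  have h1 : {t : Fin k → ℝ | ¬ Function.Injective t}
      ⊆ ⋃ (p : Fin k × Fin k) (_ : p.1 ≠ p.2), {t | t p.1 = t p.2} := by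
    intro t ht
    simp only [Function.Injective, not_forall, Set.mem_setOf_eq] at ht
    obtain ⟨a, b, hab, hne⟩ := ht
    exact Set.mem_iUnion.2 ⟨(a, b), Set.mem_iUnion.2 ⟨hne, hab⟩⟩
  refine measure_mono_null h1 (measure_iUnion_null fun p => measure_iUnion_null fun hne =>
    my_hyperplane_null hne)

lemma my_meas_sa {k : ℕ} (σ : Equiv.Perm (Fin k)) :
    MeasurableSet {t : Fin k → ℝ | StrictAnti (t ∘ σ)} := by
  have h : {t : Fin k → ℝ | StrictAnti (t ∘ σ)}
      = ⋂ (p : Fin k × Fin k) (_ : p.1 < p.2), {t | t (σ p.2) < t (σ p.1)} := by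
    ext t
    simp only [Set.mem_setOf_eq, Set.mem_iInter]
    exact ⟨fun h p hp => h hp, fun h a b hab => h (a, b) hab⟩
  rw [h]
  exact MeasurableSet.iInter fun p => MeasurableSet.iInter fun _ =>
    measurableSet_lt (measurable_pi_apply _) (measurable_pi_apply _)

lemma my_strictAnti_unique {k : ℕ} {t : Fin k → ℝ} {σ τ : Equiv.Perm (Fin k)}
    (hσ : StrictAnti (t ∘ σ)) (hτ : StrictAnti (t ∘ τ)) : σ = τ := by
  have hπ : StrictMono ⇑(τ.trans σ.symm) := by
    intro a b hab
    have h1 : (t ∘ σ) ((τ.trans σ.symm) b) < (t ∘ σ) ((τ.trans σ.symm) a) := by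
      simpa [Function.comp, Equiv.trans_apply] using hτ hab
    exact hσ.lt_iff_gt.mp h1
  haveI : WellFoundedLT (Fin k) := inferInstance
  have hr : Set.range ⇑(τ.trans σ.symm) = Set.range (id : Fin k → Fin k) := by
    rw [Set.range_id, Equiv.range_eq_univ]
  have h2 : ⇑(τ.trans σ.symm) = id := (hπ.range_inj strictMono_id).mp hr
  refine Equiv.ext fun i => ?_
  have h3 := congrFun h2 i
  simp only [Equiv.trans_apply, id_eq] at h3
  have h4 := congrArg σ h3
  rw [Equiv.apply_symm_apply] at h4
  exact h4.symm

lemma my_exists_sort {k : ℕ} {t : Fin k → ℝ} (ht : Function.Injective t) :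
    ∃ σ : Equiv.Perm (Fin k), StrictAnti (t ∘ σ) := by
  refine ⟨Tuple.sort (fun i => -t i), ?_⟩
  have h1 : Monotone ((fun i => -t i) ∘ Tuple.sort (fun i => -t i)) := Tuple.monotone_sort _
  have h2 : Antitone (t ∘ Tuple.sort (fun i => -t i)) := by
    intro a b hab
    have := h1 hab
    simpa using this
  exact h2.strictAnti_of_injective (ht.comp (Equiv.injective _))

lemma my_perm_integral {k : ℕ} (f : (Fin k → ℝ) → ℝ)
    (hsymm : ∀ (t : Fin k → ℝ) (π : Equiv.Perm (Fin k)), f (t ∘ π) = f t)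
    (C : Set (Fin k → ℝ))
    (hC : ∀ (t : Fin k → ℝ) (π : Equiv.Perm (Fin k)), t ∘ π ∈ C ↔ t ∈ C)
    (σ : Equiv.Perm (Fin k)) :
    ∫ t in {t : Fin k → ℝ | StrictAnti (t ∘ σ)} ∩ C, f t
      = ∫ t in {t : Fin k → ℝ | StrictAnti t} ∩ C, f t := by
  have hmp := volume_measurePreserving_piCongrLeft (fun _ : Fin k => ℝ) σ.symm
  set e := MeasurableEquiv.piCongrLeft (fun _ : Fin k => ℝ) σ.symm with he
  have hee : ∀ g : Fin k → ℝ, e g = g ∘ ⇑σ := by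
    intro g; funext i
    have h2 := Equiv.piCongrLeft_apply_apply (fun _ : Fin k => ℝ) σ.symm g (σ i)
    rw [he, MeasurableEquiv.coe_piCongrLeft]
    simpa using h2
  rw [← hmp.setIntegral_preimage_emb e.measurableEmbedding f
    ({t : Fin k → ℝ | StrictAnti t} ∩ C)]
  have hpre : e ⁻¹' ({t : Fin k → ℝ | StrictAnti t} ∩ C)
      = {t : Fin k → ℝ | StrictAnti (t ∘ σ)} ∩ C := by
    ext g
    simp only [Set.mem_preimage, Set.mem_inter_iff, Set.mem_setOf_eq, hee]
    exact and_congr Iff.rfl (hC g σ)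
  rw [hpre]
  simp only [hee, hsymm]

lemma my_int_inv {x : ℝ} (hx0 : 0 < x) (hx1 : x ≤ 1) :
    ∫ y in Set.Icc x 1, y⁻¹ = -Real.log x := by
  have h0 : (0:ℝ) ∉ Set.uIcc x 1 := notMem_uIcc_of_lt hx0 one_pos
  have h := integral_one_div h0
  simp only [one_div] at h
  rw [integral_Icc_eq_integral_Ioc, ← intervalIntegral.integral_of_le hx1, h, Real.log_inv]

lemma my_int_rpow {α x : ℝ} (hα : α ≠ 0) (hx0 : 0 < x) (hx1 : x ≤ 1) :
    ∫ y in Set.Icc x 1, y ^ (α - 1) = (1 - x ^ α) / α := by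
  have h0 : (0:ℝ) ∉ Set.uIcc x 1 := notMem_uIcc_of_lt hx0 one_pos
  have hne : α - 1 ≠ -1 := by intro h; apply hα; linarith
  have h := integral_rpow (a := x) (b := 1) (Or.inr ⟨hne, h0⟩)
  rw [sub_add_cancel] at h
  rw [integral_Icc_eq_integral_Ioc, ← intervalIntegral.integral_of_le hx1, h, Real.one_rpow]

lemma my_cube_integral {k : ℕ} {α x : ℝ} (hα : α ≠ 0) (hx0 : 0 < x) (hx1 : x ≤ 1) :
    ∫ t in Set.pi Set.univ (fun _ : Fin k => Set.Icc x 1), (∑ i, t i ^ α) / ∏ i, t i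
      = k * ((-Real.log x) ^ (k - 1) * ((1 - x ^ α) / α)) := by
  set g : Fin k → Fin k → ℝ → ℝ := fun i j y => if j = i then y ^ (α - 1) else y⁻¹ with hg
  have hgint : ∀ i j, IntegrableOn (g i j) (Set.Icc x 1) := by
    intro i j
    apply ContinuousOn.integrableOn_compact isCompact_Icc
    intro y hy
    have hy0 : y ≠ 0 := ne_of_gt (lt_of_lt_of_le hx0 hy.1)
    by_cases h : j = i
    · simp only [hg, h, if_pos rfl]
      exact (Real.continuousAt_rpow_const y (α - 1) (Or.inl hy0)).continuousWithinAt
    · simp only [hg, if_neg h]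
      exact (continuousAt_inv₀ hy0).continuousWithinAt
  have step1 : Set.EqOn (fun t : Fin k → ℝ => (∑ i, t i ^ α) / ∏ i, t i)
      (fun t => ∑ i, ∏ j, g i j (t j)) (Set.pi Set.univ fun _ => Set.Icc x 1) := by
    intro t ht
    have htpos : ∀ j, (0:ℝ) < t j := fun j => lt_of_lt_of_le hx0 (ht j (Set.mem_univ j)).1
    have hprod : (∏ j, t j) ≠ 0 := Finset.prod_ne_zero_iff.mpr fun j _ => ne_of_gt (htpos j)
    show (∑ i, t i ^ α) / ∏ i, t i = ∑ i, ∏ j, g i j (t j)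
    rw [div_eq_iff hprod, Finset.sum_mul]
    refine Finset.sum_congr rfl fun i _ => ?_
    rw [← Finset.prod_mul_distrib]
    have hterm : ∀ j, g i j (t j) * t j = if j = i then t j ^ α else 1 := by
      intro j
      by_cases h : j = i
      · subst h
        simp only [hg, if_pos rfl]
        rw [Real.rpow_sub_one (ne_of_gt (htpos j)), div_mul_cancel₀ _ (ne_of_gt (htpos j))]
        simp
      · simp [hg, h, inv_mul_cancel₀ (ne_of_gt (htpos j))]
    rw [Finset.prod_congr rfl (fun j _ => hterm j),
      Finset.prod_ite_eq' Finset.univ i (fun j => t j ^ α), if_pos (Finset.mem_univ i)]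
  rw [setIntegral_congr_fun (MeasurableSet.univ_pi fun _ => measurableSet_Icc) step1]
  rw [integral_finset_sum _ (fun i _ => my_cube_prod_integrable (g i) (hgint i))]
  have hprodint : ∀ i : Fin k, (∏ j, ∫ y in Set.Icc x 1, g i j y)
      = ((1 - x ^ α) / α) * (-Real.log x) ^ (k - 1) := by
    intro i
    have h1 : ∀ j, ∫ y in Set.Icc x 1, g i j y
        = if j = i then (1 - x ^ α) / α else -Real.log x := by
      intro j
      by_cases h : j = i
      · simp only [hg, h, if_pos rfl]
        exact my_int_rpow hα hx0 hx1
      · simp only [hg, if_neg h]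
        exact my_int_inv hx0 hx1
    rw [Finset.prod_congr rfl fun j _ => h1 j,
      ← Finset.mul_prod_erase Finset.univ _ (Finset.mem_univ i), if_pos rfl,
      Finset.prod_congr rfl (fun j hj => if_neg (Finset.ne_of_mem_erase hj)),
      Finset.prod_const, Finset.card_erase_of_mem (Finset.mem_univ i), Finset.card_univ,
      Fintype.card_fin]
  calc (∑ i : Fin k, ∫ t in Set.pi Set.univ (fun _ : Fin k => Set.Icc x 1), ∏ j, g i j (t j))
      = ∑ _i : Fin k, ((1 - x ^ α) / α) * (-Real.log x) ^ (k - 1) := by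
        refine Finset.sum_congr rfl fun i _ => ?_
        rw [my_cube_prod_integral (g i), hprodint i]
    _ = k * ((-Real.log x) ^ (k - 1) * ((1 - x ^ α) / α)) := by
        rw [Finset.sum_const, Finset.card_univ, Fintype.card_fin, nsmul_eq_mul]
        ring

end SimplexAux

theorem simplex_integral_sum_rpow (k : ℕ) (hk : 1 ≤ k) (α : ℝ) (hα : α ≠ 0)
    (x : ℝ) (hx : x ∈ Set.Ioc (0:ℝ) 1) :
    ∫ t in {t : Fin k → ℝ | Antitone t ∧ (∀ i, t i ≤ 1) ∧ ∀ i, x ≤ t i},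
      (∑ i, t i ^ α) / ∏ i, t i ∂volume
      = (-Real.log x) ^ (k - 1) / (Nat.factorial (k - 1)) * ((1 - x ^ α) / α) := by
  obtain ⟨hx0, hx1⟩ := hx
  set C : Set (Fin k → ℝ) := Set.pi Set.univ (fun _ : Fin k => Set.Icc x 1) with hCdef
  set f : (Fin k → ℝ) → ℝ := fun t => (∑ i, t i ^ α) / ∏ i, t i with hfdef
  have hCmeas : MeasurableSet C := MeasurableSet.univ_pi fun _ => measurableSet_Icc
  have hmemC : ∀ t : Fin k → ℝ, t ∈ C ↔ ∀ i, x ≤ t i ∧ t i ≤ 1 := by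
    intro t
    constructor
    · intro h i
      exact h i (Set.mem_univ i)
    · intro h i _
      exact h i
  have hsymm : ∀ (t : Fin k → ℝ) (π : Equiv.Perm (Fin k)), f (t ∘ π) = f t := by
    intro t π
    show (∑ i, (t ∘ π) i ^ α) / ∏ i, (t ∘ π) i = (∑ i, t i ^ α) / ∏ i, t i
    congr 1
    · exact Equiv.sum_comp π (fun i => t i ^ α)
    · exact Equiv.prod_comp π t
  have hCperm : ∀ (t : Fin k → ℝ) (π : Equiv.Perm (Fin k)), t ∘ π ∈ C ↔ t ∈ C := by
    intro t π
    rw [hmemC, hmemC]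
    constructor
    · intro h i
      simpa using h (π.symm i)
    · intro h i
      exact h (π i)
  set A : Equiv.Perm (Fin k) → Set (Fin k → ℝ) :=
    fun σ => {t : Fin k → ℝ | StrictAnti (t ∘ σ)} ∩ C with hAdef
  have hAmeas : ∀ σ, MeasurableSet (A σ) := fun σ => (my_meas_sa σ).inter hCmeas
  have hAdisj : Pairwise (Function.onFun Disjoint A) := by
    intro σ τ hne
    exact Set.disjoint_left.mpr fun t ht1 ht2 => hne (my_strictAnti_unique ht1.1 ht2.1)
  have hfint : IntegrableOn f C := by
    apply ContinuousOn.integrableOn_compact (isCompact_univ_pi fun _ => isCompact_Icc)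
    apply ContinuousOn.div
    · apply continuousOn_finset_sum
      intro i _
      apply ContinuousOn.rpow_const (continuous_apply i).continuousOn
      intro t ht
      exact Or.inl (ne_of_gt (lt_of_lt_of_le hx0 (ht i (Set.mem_univ i)).1))
    · exact (continuous_finset_prod _ fun i _ => continuous_apply i).continuousOn
    · intro t ht
      exact Finset.prod_ne_zero_iff.mpr fun i _ =>
        ne_of_gt (lt_of_lt_of_le hx0 (ht i (Set.mem_univ i)).1)
  have hfintA : ∀ σ, IntegrableOn f (A σ) := fun σ => hfint.mono_set Set.inter_subset_right
  have hUsub : (⋃ σ, A σ) ⊆ C := Set.iUnion_subset fun σ => Set.inter_subset_right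
  have hCdiff : C \ (⋃ σ, A σ) ⊆ {t : Fin k → ℝ | ¬ Function.Injective t} := by
    rintro t ⟨htC, htU⟩
    simp only [Set.mem_setOf_eq]
    intro hinj
    obtain ⟨σ, hσ⟩ := my_exists_sort hinj
    exact htU (Set.mem_iUnion.2 ⟨σ, hσ, htC⟩)
  have hae : (⋃ σ, A σ) =ᵐ[volume] C := by
    rw [MeasureTheory.ae_eq_set]
    constructor
    · rw [Set.diff_eq_empty.mpr hUsub]
      exact measure_empty
    · exact measure_mono_null hCdiff my_null_noninj
  have key : ∫ t in C, f t = (Nat.factorial k) * ∫ t in A 1, f t := by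
    rw [← setIntegral_congr_set hae, integral_iUnion_fintype hAmeas hAdisj hfintA]
    have h1 : ∀ σ : Equiv.Perm (Fin k), ∫ t in A σ, f t = ∫ t in A 1, f t := by
      intro σ
      rw [hAdef]
      have h2 := my_perm_integral f hsymm C hCperm σ
      rw [h2]
      have h3 : {t : Fin k → ℝ | StrictAnti t} = {t : Fin k → ℝ | StrictAnti (t ∘ ⇑(1 : Equiv.Perm (Fin k)))} := by
        ext t
        simp [Function.comp]
      rw [h3]
    rw [Finset.sum_congr rfl fun σ _ => h1 σ, Finset.sum_const, Finset.card_univ,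
      Fintype.card_perm, Fintype.card_fin, nsmul_eq_mul]
  have hSA : {t : Fin k → ℝ | Antitone t ∧ (∀ i, t i ≤ 1) ∧ ∀ i, x ≤ t i} =ᵐ[volume] A 1 := by
    rw [MeasureTheory.ae_eq_set]
    constructor
    · refine measure_mono_null ?_ (my_null_noninj (k := k))
      rintro t ⟨⟨hanti, hle, hge⟩, htA⟩
      simp only [Set.mem_setOf_eq]
      intro hinj
      apply htA
      refine ⟨?_, (hmemC t).2 fun i => ⟨hge i, hle i⟩⟩
      show StrictAnti (t ∘ ⇑(1 : Equiv.Perm (Fin k)))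
      have : t ∘ ⇑(1 : Equiv.Perm (Fin k)) = t := rfl
      rw [this]
      exact hanti.strictAnti_of_injective hinj
    · have hsub : A 1 ⊆ {t : Fin k → ℝ | Antitone t ∧ (∀ i, t i ≤ 1) ∧ ∀ i, x ≤ t i} := by
        rintro t ⟨hsa, htC⟩
        have hsa' : StrictAnti t := hsa
        exact ⟨hsa'.antitone, fun i => ((hmemC t).1 htC i).2, fun i => ((hmemC t).1 htC i).1⟩
      rw [Set.diff_eq_empty.mpr hsub]
      exact measure_empty
  rw [setIntegral_congr_set hSA]
  have hCint : ∫ t in C, f t = k * ((-Real.log x) ^ (k - 1) * ((1 - x ^ α) / α)) :=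
    my_cube_integral hα hx0 hx1
  rw [hCint] at key
  have hfacne : ((Nat.factorial k : ℝ)) ≠ 0 := Nat.cast_ne_zero.2 (Nat.factorial_ne_zero k)
  have hA1 : ∫ t in A 1, f t
      = (k * ((-Real.log x) ^ (k - 1) * ((1 - x ^ α) / α))) / (Nat.factorial k) := by
    rw [eq_div_iff hfacne, mul_comm]
    exact key.symm
  rw [hA1]
  have hkfac : (Nat.factorial k : ℝ) = k * (Nat.factorial (k - 1)) := by
    rw [← Nat.mul_factorial_pred (by omega : k ≠ 0)]
    push_cast
    ring
  rw [hkfac]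
  have hk0 : (k : ℝ) ≠ 0 := Nat.cast_ne_zero.2 (by omega)
  have hfac1 : ((Nat.factorial (k - 1) : ℝ)) ≠ 0 := Nat.cast_ne_zero.2 (Nat.factorial_ne_zero _)
  field_simp
end

section
/- Let k ≥ 1 and let u₁, …, u_{k+1} be pairwise distinct real numbers, and x ∈ (0,1]. Then the integral of t₁^{u₁-u₂-1} t₂^{u₂-u₃-1} ⋯ t_k^{u_k-u_{k+1}-1} over the simplex {1 ≥ t₁ ≥ ⋯ ≥ t_k ≥ x} equals the sum over i = 1,…,k+1 of x^{u_i - u_{k+1}} / ∏_{j ≠ i} (u_j - u_i). -/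
open MeasureTheory Finset

noncomputable section SimplexAux

namespace SimplexAux

/-- The simplex region. -/
def S (k : ℕ) (x : ℝ) : Set (Fin k → ℝ) :=
  {t | Antitone t ∧ (∀ i, t i ≤ 1) ∧ ∀ i, x ≤ t i}

/-- Lower bound for the next coordinate. -/
def B : ∀ {k : ℕ}, (Fin k → ℝ) → ℝ
  | 0, _ => 1
  | _ + 1, s => s (Fin.last _)

def F (k : ℕ) (u : Fin (k + 1) → ℝ) (x : ℝ) : ℝ :=
  ∫ t in S k x, (∏ i : Fin k, t i ^ (u i.castSucc - u i.succ - 1)) ∂volume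

def G (k : ℕ) (u : Fin (k + 1) → ℝ) (x : ℝ) : ℝ :=
  ∑ i : Fin (k + 1), x ^ (u i - u (Fin.last k)) / ∏ j ∈ Finset.univ.erase i, (u j - u i)

lemma S_eq (k : ℕ) (x : ℝ) :
    S k x = {t : Fin k → ℝ | Antitone t} ∩ Set.univ.pi fun _ => Set.Icc x 1 := by
  ext t
  simp only [S, Set.mem_setOf_eq, Set.mem_inter_iff, Set.mem_pi, Set.mem_univ, Set.mem_Icc,
    forall_const]
  exact ⟨fun ⟨a, b, c⟩ => ⟨a, fun i => ⟨c i, b i⟩⟩,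
    fun ⟨a, h⟩ => ⟨a, fun i => (h i).2, fun i => (h i).1⟩⟩

lemma isClosed_S (k : ℕ) (x : ℝ) : IsClosed (S k x) := by
  rw [S_eq]
  refine IsClosed.inter ?_ (isClosed_set_pi fun i _ => isClosed_Icc)
  have h : {t : Fin k → ℝ | Antitone t} =
      ⋂ p : {p : Fin k × Fin k // p.1 ≤ p.2}, {t : Fin k → ℝ | t p.1.2 ≤ t p.1.1} := by
    ext t
    simp only [Set.mem_setOf_eq, Set.mem_iInter, Subtype.forall, Prod.forall]
    exact ⟨fun h a b hab => h hab, fun h a b hab => h a b hab⟩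
  rw [h]
  exact isClosed_iInter fun p => isClosed_le (continuous_apply _) (continuous_apply _)

lemma measurableSet_S (k : ℕ) (x : ℝ) : MeasurableSet (S k x) :=
  (isClosed_S k x).measurableSet

lemma isCompact_S (k : ℕ) (x : ℝ) : IsCompact (S k x) := by
  refine IsCompact.of_isClosed_subset
    (isCompact_univ_pi (fun _ : Fin k => isCompact_Icc (a := x) (b := 1)))
    (isClosed_S k x) ?_
  rw [S_eq]; exact Set.inter_subset_right

lemma integrableOn_S (k : ℕ) (e : Fin k → ℝ) {x : ℝ} (hx : 0 < x) :
    IntegrableOn (fun t => ∏ i : Fin k, t i ^ e i) (S k x) volume := by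
  refine ContinuousOn.integrableOn_compact (isCompact_S k x) ?_
  refine continuousOn_finset_prod _ fun i _ => ?_
  refine continuousOn_of_forall_continuousAt fun t ht => ?_
  have h0 : t i ≠ 0 := ne_of_gt (lt_of_lt_of_le hx (ht.2.2 i))
  exact (continuousAt_apply i t).rpow_const (Or.inl h0)

lemma B_mem {k : ℕ} {x : ℝ} (hx1 : x ≤ 1) {s : Fin k → ℝ} (hs : s ∈ S k x) :
    x ≤ B s ∧ B s ≤ 1 := by
  cases k with
  | zero => exact ⟨hx1, le_refl _⟩
  | succ m => exact ⟨hs.2.2 _, hs.2.1 _⟩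

lemma slice {k : ℕ} {x : ℝ} (hx1 : x ≤ 1) {s : Fin k → ℝ} (hs : s ∈ S k x) (y : ℝ) :
    ((y ∈ Set.Icc x 1 ∧ ∀ i, y ≤ s i) ↔ y ∈ Set.Icc x (B s)) := by
  cases k with
  | zero => simp [B, hx1]
  | succ m =>
    obtain ⟨ha, h1, hxs⟩ := hs
    constructor
    · rintro ⟨⟨hxy, -⟩, h⟩; exact ⟨hxy, h _⟩
    · rintro ⟨hxy, hyB⟩
      exact ⟨⟨hxy, hyB.trans (h1 _)⟩, fun i => hyB.trans (ha (Fin.le_last i))⟩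

lemma merge (k : ℕ) (u : Fin (k + 2) → ℝ) {x : ℝ} (hx : 0 < x) {s : Fin k → ℝ}
    (hs : s ∈ S k x) :
    B s ^ (u ((Fin.last k).castSucc) - u (Fin.last (k + 1))) *
      ∏ i : Fin k, s i ^ ((u ∘ Fin.castSucc) i.castSucc - (u ∘ Fin.castSucc) i.succ - 1)
    = ∏ i : Fin k, s i ^ ((u ∘ ((Fin.last k).castSucc).succAbove) i.castSucc -
        (u ∘ ((Fin.last k).castSucc).succAbove) i.succ - 1) := by
  cases k with
  | zero => simp [B, Real.one_rpow]
  | succ m =>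
    have hlast : (0:ℝ) < s (Fin.last m) := lt_of_lt_of_le hx (hs.2.2 _)
    have hσ : ∀ j : Fin (m + 2), j ≠ Fin.last (m + 1) →
        ((Fin.last (m + 1)).castSucc).succAbove j = j.castSucc := fun j hj =>
      Fin.succAbove_of_castSucc_lt _ _
        (by rw [Fin.castSucc_lt_castSucc_iff]; exact Fin.lt_last_iff_ne_last.2 hj)
    have hσl : ((Fin.last (m + 1)).castSucc).succAbove (Fin.last (m + 1)) = Fin.last (m + 2) := by
      rw [Fin.succAbove_of_le_castSucc _ _ le_rfl, Fin.succ_last]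
    rw [Fin.prod_univ_castSucc, Fin.prod_univ_castSucc]
    have hP : (∏ j : Fin m, s j.castSucc ^
          ((u ∘ Fin.castSucc) (j.castSucc).castSucc - (u ∘ Fin.castSucc) (j.castSucc).succ - 1))
        = ∏ j : Fin m, s j.castSucc ^
          ((u ∘ ((Fin.last (m + 1)).castSucc).succAbove) (j.castSucc).castSucc -
            (u ∘ ((Fin.last (m + 1)).castSucc).succAbove) (j.castSucc).succ - 1) := by
      refine Finset.prod_congr rfl fun j _ => ?_
      simp only [Function.comp_apply, Fin.succ_castSucc]
      rw [hσ _ (Fin.castSucc_lt_last _).ne, hσ _ (Fin.castSucc_lt_last _).ne]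
    rw [hP, mul_left_comm]
    congr 1
    show s (Fin.last m) ^ _ * s (Fin.last m) ^ _ = s (Fin.last m) ^ _
    rw [← Real.rpow_add hlast]
    congr 1
    simp only [Function.comp_apply, Fin.succ_last]
    rw [hσ _ (Fin.castSucc_lt_last _).ne, hσl]
    ring

lemma inner_int {x c aa : ℝ} (hx : 0 < x) (hxc : x ≤ c) (ha : aa ≠ 0) :
    ∫ y in Set.Icc x c, y ^ (aa - 1) = (c ^ aa - x ^ aa) / aa := by
  rw [integral_Icc_eq_integral_Ioc, ← intervalIntegral.integral_of_le hxc,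
    integral_rpow (Or.inr ⟨by intro h; apply ha; linarith [sub_eq_iff_eq_add.mp h], ?_⟩)]
  · norm_num
  · rw [Set.uIcc_of_le hxc]
    rintro ⟨h0, -⟩
    exact absurd hx (not_lt.2 h0)

lemma F_zero (u : Fin 1 → ℝ) (x : ℝ) : F 0 u x = 1 := by
  have hS : S 0 x = Set.univ := by
    ext t
    refine ⟨fun _ => trivial, fun _ => ⟨fun i => i.elim0, fun i => i.elim0, fun i => i.elim0⟩⟩
  simp [F, hS, Measure.restrict_univ, integral_const, volume_pi, Measure.pi_empty_univ, measureReal_def]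

lemma G_zero (u : Fin 1 → ℝ) (x : ℝ) : G 0 u x = 1 := by
  have h : (Finset.univ.erase (0 : Fin 1)) = (∅ : Finset (Fin 1)) := by decide
  simp [G, Fin.sum_univ_one, h, Fin.last]

def Tset (k : ℕ) (x : ℝ) : Set (ℝ × (Fin k → ℝ)) :=
  {p | p.2 ∈ S k x ∧ p.1 ∈ Set.Icc x 1 ∧ ∀ i, p.1 ≤ p.2 i}

def gfun (k : ℕ) (u : Fin (k + 2) → ℝ) : ℝ × (Fin k → ℝ) → ℝ := fun p =>
  p.1 ^ (u ((Fin.last k).castSucc) - u (Fin.last (k + 1)) - 1) *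
    ∏ i : Fin k, p.2 i ^ ((u ∘ Fin.castSucc) i.castSucc - (u ∘ Fin.castSucc) i.succ - 1)

lemma isClosed_Tset (k : ℕ) (x : ℝ) : IsClosed (Tset k x) := by
  have h1 : IsClosed {p : ℝ × (Fin k → ℝ) | p.2 ∈ S k x} :=
    (isClosed_S k x).preimage continuous_snd
  have h2 : IsClosed {p : ℝ × (Fin k → ℝ) | p.1 ∈ Set.Icc x 1} :=
    isClosed_Icc.preimage continuous_fst
  have h3 : IsClosed {p : ℝ × (Fin k → ℝ) | ∀ i, p.1 ≤ p.2 i} := by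
    have h : {p : ℝ × (Fin k → ℝ) | ∀ i, p.1 ≤ p.2 i}
        = ⋂ i, {p : ℝ × (Fin k → ℝ) | p.1 ≤ p.2 i} := by ext p; simp
    rw [h]
    exact isClosed_iInter fun i =>
      isClosed_le continuous_fst ((continuous_apply i).comp continuous_snd)
  exact h1.inter (h2.inter h3)

lemma preimage_Tset (k : ℕ) (x : ℝ) :
    S (k + 1) x = ⇑(MeasurableEquiv.piFinSuccAbove (fun _ : Fin (k + 1) => ℝ) (Fin.last k)) ⁻¹'
      Tset k x := by
  have het : ∀ t : Fin (k + 1) → ℝ,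
      (MeasurableEquiv.piFinSuccAbove (fun _ : Fin (k + 1) => ℝ) (Fin.last k)) t
        = (t (Fin.last k), fun j => t j.castSucc) := by
    intro t
    simp only [MeasurableEquiv.piFinSuccAbove_apply, Fin.insertNthEquiv_symm_apply]
    refine Prod.ext rfl ?_
    funext j
    simp [Fin.removeNth, Fin.succAbove_last]
  ext t
  rw [Set.mem_preimage, het]
  constructor
  · rintro ⟨hanti, h1, hx2⟩
    exact ⟨⟨fun i j hij => hanti (Fin.castSucc_le_castSucc_iff.2 hij),
        fun i => h1 _, fun i => hx2 _⟩,
      ⟨hx2 _, h1 _⟩, fun i => hanti (Fin.le_last i.castSucc)⟩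
  · rintro ⟨⟨hanti, h1, hx2⟩, ⟨hxl, hl1⟩, hle⟩
    refine ⟨?_, ?_, ?_⟩
    · intro i j hij
      induction j using Fin.lastCases with
      | last =>
        induction i using Fin.lastCases with
        | last => exact le_refl _
        | cast i' => exact hle i'
      | cast j' =>
        induction i using Fin.lastCases with
        | last => exact absurd hij (not_le.2 (Fin.castSucc_lt_last j'))
        | cast i' => exact hanti (Fin.castSucc_le_castSucc_iff.1 hij)
    · intro i
      induction i using Fin.lastCases with
      | last => exact hl1
      | cast i' => exact h1 i'
    · intro i
      induction i using Fin.lastCases with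
      | last => exact hxl
      | cast i' => exact hx2 i'

lemma F_rec (k : ℕ) (u : Fin (k + 2) → ℝ) {x : ℝ} (hx : x ∈ Set.Ioc (0:ℝ) 1)
    (ha : u ((Fin.last k).castSucc) - u (Fin.last (k + 1)) ≠ 0) :
    F (k + 1) u x = (F k (u ∘ ((Fin.last k).castSucc).succAbove) x
        - x ^ (u ((Fin.last k).castSucc) - u (Fin.last (k + 1))) * F k (u ∘ Fin.castSucc) x)
      / (u ((Fin.last k).castSucc) - u (Fin.last (k + 1))) := by
  obtain ⟨hx0, hx1⟩ := hx
  have het : ∀ t : Fin (k + 1) → ℝ,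
      (MeasurableEquiv.piFinSuccAbove (fun _ : Fin (k + 1) => ℝ) (Fin.last k)) t
        = (t (Fin.last k), fun j => t j.castSucc) := by
    intro t
    simp only [MeasurableEquiv.piFinSuccAbove_apply, Fin.insertNthEquiv_symm_apply]
    refine Prod.ext rfl ?_
    funext j
    simp [Fin.removeNth, Fin.succAbove_last]
  have hTm : MeasurableSet (Tset k x) := (isClosed_Tset k x).measurableSet
  -- the integrand upstairs equals gfun composed with the equivalence
  have hfg : (fun t : Fin (k + 1) → ℝ => ∏ i : Fin (k + 1), t i ^ (u i.castSucc - u i.succ - 1))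
      = fun t => gfun k u
          ((MeasurableEquiv.piFinSuccAbove (fun _ : Fin (k + 1) => ℝ) (Fin.last k)) t) := by
    funext t
    rw [het]
    show (∏ i : Fin (k + 1), t i ^ (u i.castSucc - u i.succ - 1))
        = t (Fin.last k) ^ (u ((Fin.last k).castSucc) - u (Fin.last (k + 1)) - 1) *
          ∏ i : Fin k, t i.castSucc ^
            ((u ∘ Fin.castSucc) i.castSucc - (u ∘ Fin.castSucc) i.succ - 1)
    have hlast : t (Fin.last k) ^ (u ((Fin.last k).castSucc) - u ((Fin.last k).succ) - 1)
        = t (Fin.last k) ^ (u ((Fin.last k).castSucc) - u (Fin.last (k + 1)) - 1) := by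
      rw [Fin.succ_last]
    rw [Fin.prod_univ_castSucc, hlast, mul_comm]
    congr 1
  -- transfer to the product space
  have key : F (k + 1) u x = ∫ p in Tset k x, gfun k u p
      ∂((volume : Measure ℝ).prod (Measure.pi fun _ : Fin k => volume)) := by
    rw [F, hfg, preimage_Tset k x, volume_pi]
    exact (measurePreserving_piFinSuccAbove (fun _ : Fin (k + 1) => (volume : Measure ℝ))
      (Fin.last k)).setIntegral_preimage_emb (MeasurableEquiv.measurableEmbedding _) (gfun k u)
      (Tset k x)
  -- integrability of the indicator on the product space
  have hint0 : IntegrableOn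
      (fun t => gfun k u
        ((MeasurableEquiv.piFinSuccAbove (fun _ : Fin (k + 1) => ℝ) (Fin.last k)) t))
      (⇑(MeasurableEquiv.piFinSuccAbove (fun _ : Fin (k + 1) => ℝ) (Fin.last k)) ⁻¹' Tset k x)
      (Measure.pi fun _ : Fin (k + 1) => volume) := by
    rw [← preimage_Tset k x, ← volume_pi, ← hfg]
    exact integrableOn_S (k + 1) (fun i => u i.castSucc - u i.succ - 1) hx0
  have hTint : Integrable ((Tset k x).indicator (gfun k u))
      ((volume : Measure ℝ).prod (Measure.pi fun _ : Fin k => volume)) := by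
    rw [← (measurePreserving_piFinSuccAbove (fun _ : Fin (k + 1) => (volume : Measure ℝ))
      (Fin.last k)).integrable_comp_emb (MeasurableEquiv.measurableEmbedding _)]
    have heq : (Tset k x).indicator (gfun k u) ∘
        ⇑(MeasurableEquiv.piFinSuccAbove (fun _ : Fin (k + 1) => ℝ) (Fin.last k))
        = (⇑(MeasurableEquiv.piFinSuccAbove (fun _ : Fin (k + 1) => ℝ) (Fin.last k)) ⁻¹'
            Tset k x).indicator (fun t => gfun k u
              ((MeasurableEquiv.piFinSuccAbove (fun _ : Fin (k + 1) => ℝ) (Fin.last k)) t)) := by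
      funext t
      by_cases h : t ∈ ⇑(MeasurableEquiv.piFinSuccAbove (fun _ : Fin (k + 1) => ℝ)
          (Fin.last k)) ⁻¹' Tset k x
      · rw [Function.comp_apply, Set.indicator_of_mem h, Set.indicator_of_mem
          (show (MeasurableEquiv.piFinSuccAbove (fun _ : Fin (k + 1) => ℝ) (Fin.last k)) t
              ∈ Tset k x from h)]
      · rw [Function.comp_apply, Set.indicator_of_notMem h, Set.indicator_of_notMem
          (show (MeasurableEquiv.piFinSuccAbove (fun _ : Fin (k + 1) => ℝ) (Fin.last k)) t
              ∉ Tset k x from h)]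
    rw [heq, integrable_indicator_iff (hTm.preimage (MeasurableEquiv.measurable _))]
    exact hint0
  -- Fubini and evaluation of the inner integral
  have step2 : (∫ p in Tset k x, gfun k u p
        ∂((volume : Measure ℝ).prod (Measure.pi fun _ : Fin k => volume)))
      = ∫ s in S k x,
          (∏ i : Fin k, s i ^ ((u ∘ Fin.castSucc) i.castSucc - (u ∘ Fin.castSucc) i.succ - 1)) *
            ((B s ^ (u ((Fin.last k).castSucc) - u (Fin.last (k + 1)))
              - x ^ (u ((Fin.last k).castSucc) - u (Fin.last (k + 1))))
              / (u ((Fin.last k).castSucc) - u (Fin.last (k + 1)))) ∂volume := by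
    rw [← integral_indicator hTm, integral_prod_symm _ hTint, volume_pi,
      ← integral_indicator (measurableSet_S k x)]
    refine integral_congr_ae (Filter.Eventually.of_forall fun s => ?_)
    by_cases hs : s ∈ S k x
    · have hslice : ∀ y : ℝ, (Tset k x).indicator (gfun k u) (y, s)
          = (Set.Icc x (B s)).indicator (fun y => gfun k u (y, s)) y := by
        intro y
        by_cases hy : (y, s) ∈ Tset k x
        · have hy' : y ∈ Set.Icc x (B s) := (slice hx1 hs y).1 ⟨hy.2.1, hy.2.2⟩
          rw [Set.indicator_of_mem hy, Set.indicator_of_mem hy']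
        · have hy' : y ∉ Set.Icc x (B s) := fun hmem =>
            hy ⟨hs, ((slice hx1 hs y).2 hmem).1, ((slice hx1 hs y).2 hmem).2⟩
          rw [Set.indicator_of_notMem hy, Set.indicator_of_notMem hy']
      rw [Set.indicator_of_mem hs]
      calc (∫ y, (Tset k x).indicator (gfun k u) (y, s))
          = ∫ y, (Set.Icc x (B s)).indicator (fun y => gfun k u (y, s)) y := by
            simp only [hslice]
        _ = ∫ y in Set.Icc x (B s), gfun k u (y, s) := integral_indicator measurableSet_Icc
        _ = ∫ y in Set.Icc x (B s),
              y ^ (u ((Fin.last k).castSucc) - u (Fin.last (k + 1)) - 1) *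
                ∏ i : Fin k, s i ^
                  ((u ∘ Fin.castSucc) i.castSucc - (u ∘ Fin.castSucc) i.succ - 1) := rfl
        _ = (∫ y in Set.Icc x (B s),
              y ^ (u ((Fin.last k).castSucc) - u (Fin.last (k + 1)) - 1)) *
                ∏ i : Fin k, s i ^
                  ((u ∘ Fin.castSucc) i.castSucc - (u ∘ Fin.castSucc) i.succ - 1) :=
            integral_mul_const _ _
        _ = (∏ i : Fin k, s i ^
              ((u ∘ Fin.castSucc) i.castSucc - (u ∘ Fin.castSucc) i.succ - 1)) *
                ((B s ^ (u ((Fin.last k).castSucc) - u (Fin.last (k + 1)))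
                  - x ^ (u ((Fin.last k).castSucc) - u (Fin.last (k + 1))))
                  / (u ((Fin.last k).castSucc) - u (Fin.last (k + 1)))) := by
            rw [inner_int hx0 (B_mem hx1 hs).1 ha]
            exact mul_comm _ _
    · have hzero : ∀ y : ℝ, (Tset k x).indicator (gfun k u) (y, s) = 0 := fun y =>
        Set.indicator_of_notMem (fun hy => hs hy.1) _
      rw [Set.indicator_of_notMem hs]
      simp only [hzero, integral_zero]
  -- put everything together
  have hI1 : IntegrableOn (fun s : Fin k → ℝ => ∏ i : Fin k, s i ^
      ((u ∘ ((Fin.last k).castSucc).succAbove) i.castSucc -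
        (u ∘ ((Fin.last k).castSucc).succAbove) i.succ - 1)) (S k x) volume :=
    integrableOn_S k _ hx0
  have hI2 : IntegrableOn (fun s : Fin k → ℝ =>
      x ^ (u ((Fin.last k).castSucc) - u (Fin.last (k + 1))) *
        ∏ i : Fin k, s i ^ ((u ∘ Fin.castSucc) i.castSucc - (u ∘ Fin.castSucc) i.succ - 1))
      (S k x) volume :=
    (integrableOn_S k _ hx0).const_mul _
  have hmerge : Set.EqOn
      (fun s : Fin k → ℝ =>
        (∏ i : Fin k, s i ^ ((u ∘ Fin.castSucc) i.castSucc - (u ∘ Fin.castSucc) i.succ - 1)) *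
          ((B s ^ (u ((Fin.last k).castSucc) - u (Fin.last (k + 1)))
            - x ^ (u ((Fin.last k).castSucc) - u (Fin.last (k + 1))))
            / (u ((Fin.last k).castSucc) - u (Fin.last (k + 1)))))
      (fun s : Fin k → ℝ =>
        (u ((Fin.last k).castSucc) - u (Fin.last (k + 1)))⁻¹ •
          ((∏ i : Fin k, s i ^ ((u ∘ ((Fin.last k).castSucc).succAbove) i.castSucc -
              (u ∘ ((Fin.last k).castSucc).succAbove) i.succ - 1))
            - x ^ (u ((Fin.last k).castSucc) - u (Fin.last (k + 1))) *
              ∏ i : Fin k, s i ^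
                ((u ∘ Fin.castSucc) i.castSucc - (u ∘ Fin.castSucc) i.succ - 1)))
      (S k x) := by
    intro s hs
    have hm := merge k u hx0 hs
    simp only [smul_eq_mul]
    rw [← hm]
    field_simp
  rw [key, step2, setIntegral_congr_fun (measurableSet_S k x) hmerge, integral_smul,
    integral_sub hI1 hI2, integral_const_mul, smul_eq_mul, inv_mul_eq_div]
  rfl

lemma image_succAbove_univ {n : ℕ} (p : Fin (n + 1)) :
    Finset.image p.succAbove Finset.univ = Finset.univ.erase p := by
  ext j
  simp only [mem_image, mem_univ, true_and, mem_erase, and_true]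
  constructor
  · rintro ⟨i, rfl⟩; exact p.succAbove_ne i
  · intro h; exact Fin.exists_succAbove_eq h

lemma image_succAbove_erase {n : ℕ} (p : Fin (n + 1)) (i : Fin n) :
    Finset.image p.succAbove (Finset.univ.erase i)
      = (Finset.univ.erase p).erase (p.succAbove i) := by
  ext j
  simp only [mem_image, mem_erase, mem_univ, and_true, true_and]
  constructor
  · rintro ⟨i', hi', rfl⟩
    exact ⟨fun h => hi' (Fin.succAbove_right_injective h), p.succAbove_ne i'⟩
  · rintro ⟨hji, hjp⟩
    obtain ⟨z, rfl⟩ := Fin.exists_succAbove_eq hjp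
    exact ⟨z, fun h => hji (by rw [h]), rfl⟩

lemma G_comp (k : ℕ) (u : Fin (k + 2) → ℝ) (p : Fin (k + 2)) (x : ℝ) :
    (∑ i ∈ Finset.univ.erase p,
        x ^ (u i - u (p.succAbove (Fin.last k))) /
          ∏ j ∈ (Finset.univ.erase p).erase i, (u j - u i))
      = G k (u ∘ p.succAbove) x := by
  rw [G, ← image_succAbove_univ p,
    Finset.sum_image (fun a _ b _ h => Fin.succAbove_right_injective h)]
  refine Finset.sum_congr rfl fun i _ => ?_
  rw [image_succAbove_univ p, ← image_succAbove_erase p i,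
    Finset.prod_image (fun a _ b _ h => Fin.succAbove_right_injective h)]
  rfl

lemma erase_erase_comm {α : Type*} [DecidableEq α] (s : Finset α) (a b : α) :
    (s.erase a).erase b = (s.erase b).erase a := by
  ext j; simp only [mem_erase]; tauto

lemma G_rec (k : ℕ) (u : Fin (k + 2) → ℝ) (hu : Function.Injective u) {x : ℝ} (hx : 0 < x) :
    G (k + 1) u x
      = (G k (u ∘ ((Fin.last k).castSucc).succAbove) x
          - x ^ (u ((Fin.last k).castSucc) - u (Fin.last (k + 1))) * G k (u ∘ Fin.castSucc) x)
        / (u ((Fin.last k).castSucc) - u (Fin.last (k + 1))) := by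
  have hpq : ((Fin.last k).castSucc : Fin (k + 2)) ≠ Fin.last (k + 1) :=
    (Fin.castSucc_lt_last (Fin.last k)).ne
  set p : Fin (k + 2) := (Fin.last k).castSucc with hp
  set q : Fin (k + 2) := Fin.last (k + 1) with hq
  have ha : u p - u q ≠ 0 := sub_ne_zero.2 (hu.ne hpq)
  have ha' : u q - u p ≠ 0 := sub_ne_zero.2 (hu.ne (Ne.symm hpq))
  have hprod : ∀ (i : Fin (k + 2)) (s : Finset (Fin (k + 2))), i ∉ s →
      (∏ j ∈ s, (u j - u i)) ≠ 0 := fun i s his =>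
    Finset.prod_ne_zero_iff.2 fun j hj => sub_ne_zero.2 (hu.ne (ne_of_mem_of_not_mem hj his))
  have hcast : (Fin.castSucc : Fin (k + 1) → Fin (k + 2)) = q.succAbove := Fin.succAbove_last.symm
  have hpl : p.succAbove (Fin.last k) = q := by
    rw [hp, Fin.succAbove_of_le_castSucc _ _ le_rfl, Fin.succ_last, hq]
  have hql : q.succAbove (Fin.last k) = p := by rw [hq, Fin.succAbove_last, hp]
  rw [eq_div_iff ha, hcast, ← G_comp k u p x, ← G_comp k u q x, hpl, hql, G, ← hq,
    Finset.sum_mul, Finset.mul_sum]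
  have hqmem : q ∈ Finset.univ.erase p := Finset.mem_erase.2 ⟨Ne.symm hpq, Finset.mem_univ q⟩
  have hpmem : p ∈ Finset.univ.erase q := Finset.mem_erase.2 ⟨hpq, Finset.mem_univ p⟩
  have e3 : ((Finset.univ.erase q).erase p : Finset (Fin (k + 2)))
      = (Finset.univ.erase p).erase q := erase_erase_comm _ _ _
  rw [← Finset.add_sum_erase _ _ (Finset.mem_univ p), ← Finset.add_sum_erase _ _ hqmem,
    ← Finset.add_sum_erase _ _ hqmem, ← Finset.add_sum_erase _ _ hpmem]
  simp only [e3]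
  -- the three termwise identities
  have hE : ∀ i ∈ (Finset.univ.erase p).erase q,
      x ^ (u i - u q) / (∏ j ∈ Finset.univ.erase i, (u j - u i)) * (u p - u q)
        = x ^ (u i - u q) / ∏ j ∈ (Finset.univ.erase p).erase i, (u j - u i)
          - x ^ (u p - u q) *
              (x ^ (u i - u p) / ∏ j ∈ (Finset.univ.erase q).erase i, (u j - u i)) := by
    intro i hi
    have hiq : i ≠ q := (Finset.mem_erase.1 hi).1
    have hip : i ≠ p := (Finset.mem_erase.1 (Finset.mem_erase.1 hi).2).1
    have hd1 : u p - u i ≠ 0 := sub_ne_zero.2 (hu.ne (Ne.symm hip))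
    have hd2 : u q - u i ≠ 0 := sub_ne_zero.2 (hu.ne (Ne.symm hiq))
    have hpmem' : p ∈ Finset.univ.erase i := Finset.mem_erase.2 ⟨Ne.symm hip, Finset.mem_univ p⟩
    have hqmem' : q ∈ (Finset.univ.erase i).erase p :=
      Finset.mem_erase.2 ⟨Ne.symm hpq, Finset.mem_erase.2 ⟨Ne.symm hiq, Finset.mem_univ q⟩⟩
    have hqmem'' : q ∈ Finset.univ.erase i := Finset.mem_erase.2 ⟨Ne.symm hiq, Finset.mem_univ q⟩
    have hpmem'' : p ∈ (Finset.univ.erase i).erase q :=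
      Finset.mem_erase.2 ⟨hpq, Finset.mem_erase.2 ⟨Ne.symm hip, Finset.mem_univ p⟩⟩
    have hK : (∏ j ∈ ((Finset.univ.erase i).erase p).erase q, (u j - u i)) ≠ 0 :=
      hprod i _ (fun hmem => Finset.notMem_erase i Finset.univ
        (Finset.mem_of_mem_erase (Finset.mem_of_mem_erase hmem)))
    have hP : (∏ j ∈ Finset.univ.erase i, (u j - u i))
        = (u p - u i) * ((u q - u i) * ∏ j ∈ ((Finset.univ.erase i).erase p).erase q,
            (u j - u i)) := by
      rw [← Finset.mul_prod_erase _ _ hpmem', ← Finset.mul_prod_erase _ _ hqmem']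
    have hQ : (∏ j ∈ (Finset.univ.erase p).erase i, (u j - u i))
        = (u q - u i) * ∏ j ∈ ((Finset.univ.erase i).erase p).erase q, (u j - u i) := by
      rw [erase_erase_comm Finset.univ p i, ← Finset.mul_prod_erase _ _ hqmem']
    have hR : (∏ j ∈ (Finset.univ.erase q).erase i, (u j - u i))
        = (u p - u i) * ∏ j ∈ ((Finset.univ.erase i).erase p).erase q, (u j - u i) := by
      rw [erase_erase_comm Finset.univ q i, ← Finset.mul_prod_erase _ _ hpmem'',
        erase_erase_comm (Finset.univ.erase i) q p]
    have hxp : x ^ (u p - u q) * x ^ (u i - u p) = x ^ (u i - u q) := by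
      rw [← Real.rpow_add hx]; congr 1; ring
    rw [hP, hQ, hR, ← mul_div_assoc, hxp]
    field_simp
    ring
  have hsum : ∑ i ∈ (Finset.univ.erase p).erase q,
      x ^ (u i - u q) / (∏ j ∈ Finset.univ.erase i, (u j - u i)) * (u p - u q)
        = (∑ i ∈ (Finset.univ.erase p).erase q,
            x ^ (u i - u q) / ∏ j ∈ (Finset.univ.erase p).erase i, (u j - u i))
          - ∑ i ∈ (Finset.univ.erase p).erase q,
              x ^ (u p - u q) *
                (x ^ (u i - u p) / ∏ j ∈ (Finset.univ.erase q).erase i, (u j - u i)) := by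
    rw [← Finset.sum_sub_distrib]
    exact Finset.sum_congr rfl hE
  have hfq : x ^ (u q - u q) / (∏ j ∈ Finset.univ.erase q, (u j - u q)) * (u p - u q)
      = x ^ (u q - u q) / ∏ j ∈ (Finset.univ.erase p).erase q, (u j - u q) := by
    have hPq : (∏ j ∈ Finset.univ.erase q, (u j - u q))
        = (u p - u q) * ∏ j ∈ (Finset.univ.erase p).erase q, (u j - u q) := by
      rw [← Finset.mul_prod_erase _ _ hpmem, e3]
    have hC : (∏ j ∈ (Finset.univ.erase p).erase q, (u j - u q)) ≠ 0 :=
      hprod q _ (Finset.notMem_erase q _)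
    rw [hPq]
    field_simp
  have hfp : x ^ (u p - u q) / (∏ j ∈ Finset.univ.erase p, (u j - u p)) * (u p - u q)
      = -(x ^ (u p - u q) *
          (x ^ (u p - u p) / ∏ j ∈ (Finset.univ.erase p).erase q, (u j - u p))) := by
    have hPp : (∏ j ∈ Finset.univ.erase p, (u j - u p))
        = (u q - u p) * ∏ j ∈ (Finset.univ.erase p).erase q, (u j - u p) := by
      rw [← Finset.mul_prod_erase _ _ hqmem]
    have hD : (∏ j ∈ (Finset.univ.erase p).erase q, (u j - u p)) ≠ 0 :=
      hprod p _ (fun hmem => Finset.notMem_erase p Finset.univ (Finset.mem_of_mem_erase hmem))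
    rw [hPp, sub_self, Real.rpow_zero]
    field_simp
    ring
  linarith [hsum, hfq, hfp]

lemma main (k : ℕ) (u : Fin (k + 1) → ℝ) (hu : Function.Injective u)
    (x : ℝ) (hx : x ∈ Set.Ioc (0:ℝ) 1) : F k u x = G k u x := by
  induction k with
  | zero => rw [F_zero, G_zero]
  | succ n ih =>
    have ha : u ((Fin.last n).castSucc) - u (Fin.last (n + 1)) ≠ 0 :=
      sub_ne_zero.2 (hu.ne (Fin.castSucc_lt_last (Fin.last n)).ne)
    rw [F_rec n u hx ha, ih _ (hu.comp Fin.succAbove_right_injective),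
      ih _ (hu.comp (Fin.castSucc_injective _)), G_rec n u hu hx.1]

end SimplexAux

end SimplexAux

theorem simplex_integral_distinct_exponents (k : ℕ) (hk : 1 ≤ k)
    (u : Fin (k + 1) → ℝ) (hu : Function.Injective u)
    (x : ℝ) (hx : x ∈ Set.Ioc (0:ℝ) 1) :
    ∫ t in {t : Fin k → ℝ | Antitone t ∧ (∀ i, t i ≤ 1) ∧ ∀ i, x ≤ t i},
      (∏ i : Fin k, t i ^ (u i.castSucc - u i.succ - 1)) ∂volume
      = ∑ i : Fin (k + 1),
          x ^ (u i - u (Fin.last k)) / ∏ j ∈ Finset.univ.erase i, (u j - u i) := by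
  exact SimplexAux.main k u hu x hx
end

section
/- Let k ≥ 1 and let u₁, …, u_{k+1} be pairwise distinct elements of a field. Then ∑_{i=1}^{k} 1/((u_i - u_{k+1}) ∏_{j=1, j≠i}^{k} (u_j - u_i)) = 1/∏_{j=1}^{k} (u_j - u_{k+1}). -/
open Finset Polynomial

theorem partial_fraction_identity {F : Type*} [Field F] (k : ℕ) (hk : 1 ≤ k)
    (u : Fin (k + 1) → F) (hu : Function.Injective u) :
    ∑ i : Fin k, 1 / ((u i.castSucc - u (Fin.last k)) *
        ∏ j ∈ Finset.univ.erase i, (u j.castSucc - u i.castSucc))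
      = 1 / ∏ j : Fin k, (u j.castSucc - u (Fin.last k)) := by
  set v : Fin k → F := fun i => u i.castSucc with hv
  set w : F := u (Fin.last k) with hw
  have hvw : ∀ i : Fin k, v i ≠ w := by
    intro i h
    exact absurd (hu h) (by simp [Fin.ext_iff, Fin.castSucc, Fin.last]; omega)
  have hvv : ∀ i j : Fin k, i ≠ j → v i ≠ v j := by
    intro i j hij h
    exact hij (by simpa [Fin.ext_iff] using hu h)
  -- Lagrange basis sums to 1
  have hinj : Set.InjOn v (Finset.univ : Finset (Fin k)) := by
    intro a _ b _ h
    by_contra hab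
    exact hvv a b hab h
  have hne : (Finset.univ : Finset (Fin k)).Nonempty := by
    have : Nonempty (Fin k) := ⟨⟨0, hk⟩⟩
    exact Finset.univ_nonempty
  have hsum := Lagrange.sum_basis hinj hne
  have hsum' : ∑ i : Fin k, ∏ j ∈ Finset.univ.erase i,
      ((v i - v j)⁻¹ * (w - v j)) = 1 := by
    have := congrArg (Polynomial.eval w) hsum
    simpa [Lagrange.basis, Lagrange.basisDivisor, Polynomial.eval_finset_sum,
      Polynomial.eval_prod] using this
  -- rewrite each term
  have key : ∀ i : Fin k, 1 / ((v i - w) * ∏ j ∈ Finset.univ.erase i, (v j - v i))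
      = (∏ j ∈ Finset.univ.erase i, ((v i - v j)⁻¹ * (w - v j)))
        * (∏ j : Fin k, (v j - w))⁻¹ := by
    intro i
    rw [← Finset.mul_prod_erase (Finset.univ) _ (Finset.mem_univ i), mul_inv,
      mul_comm ((v i - w)⁻¹), ← mul_assoc, ← Finset.prod_inv_distrib,
      ← Finset.prod_mul_distrib, one_div, mul_inv, ← Finset.prod_inv_distrib,
      mul_comm]
    congr 1
    apply Finset.prod_congr rfl
    intro j hj
    have hji : v j ≠ v i := hvv j i (Finset.ne_of_mem_erase hj)
    have hjw : v j - w ≠ 0 := sub_ne_zero_of_ne (hvw j)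
    rw [mul_assoc, show w - v j = -(v j - w) by ring, neg_mul,
      mul_inv_cancel₀ hjw, mul_neg_one, ← inv_neg, neg_sub]
  show ∑ i : Fin k, 1 / ((v i - w) * ∏ j ∈ Finset.univ.erase i, (v j - v i))
      = 1 / ∏ j : Fin k, (v j - w)
  simp_rw [key]
  rw [← Finset.sum_mul, hsum', one_mul, one_div]
end

section
/- Let u, v > 0 be real with u ≠ v, z complex with |z| < 1, and s > 0 real. Then ∫₀¹∫₀¹ x₁^{u-1} x₂^{v-1}/(1 - z x₁ x₂) · (-ln(x₁x₂))^s dx₁ dx₂ = Γ(s+1) · (Φ(z,s+1,v) - Φ(z,s+1,u))/(u - v), where Φ(z,t,w) = ∑_{n=0}^{∞} z^n/(w+n)^t. -/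
open MeasureTheory Set Filter Real Topology
open scoped ENNReal NNReal

namespace GS

variable {s : ℝ}

lemma rpow_cont (hs : 0 < s) : Continuous fun w : ℝ => w ^ s := by
  rw [continuous_iff_continuousAt]
  exact fun x => Real.continuousAt_rpow_const x s (Or.inr hs.le)

lemma g_int (hs : 0 < s) {a : ℝ} (ha : 0 < a) :
    IntegrableOn (fun w : ℝ => Real.exp (-(a * w)) * w ^ s) (Ioi (0:ℝ)) := by
  apply integrable_of_isBigO_exp_neg (half_pos ha)
  · exact ((Real.continuous_exp.comp (by continuity)).mul (rpow_cont hs)).continuousOn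
  · have h := tendsto_rpow_mul_exp_neg_mul_atTop_nhds_zero s (a/2) (half_pos ha)
    rw [Asymptotics.isBigO_iff]
    refine ⟨1, ?_⟩
    filter_upwards [h.eventually (eventually_le_nhds (by norm_num : (0:ℝ) < 1)),
      eventually_ge_atTop (0:ℝ)] with x hx hx0
    have h1 : Real.exp (-(a*x)) = Real.exp (-(a/2) * x) * Real.exp (-(a/2)*x) := by
      rw [← Real.exp_add]; ring_nf
    rw [Real.norm_eq_abs, Real.norm_eq_abs, abs_of_nonneg (by positivity),
      abs_of_nonneg (Real.exp_pos _).le, h1, one_mul]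
    calc Real.exp (-(a/2) * x) * Real.exp (-(a/2)*x) * x ^ s
        = (x ^ s * Real.exp (-(a/2) * x)) * Real.exp (-(a/2)*x) := by ring
      _ ≤ 1 * Real.exp (-(a/2)*x) := by
          apply mul_le_mul_of_nonneg_right _ (Real.exp_pos _).le
          exact hx.trans_eq rfl
      _ = Real.exp (-(a/2)*x) := one_mul _

lemma L_val (hs : 0 < s) {a : ℝ} (ha : 0 < a) :
    ∫ w in Ioi (0:ℝ), Real.exp (-(a * w)) * w ^ s = Real.Gamma (s+1) / a ^ (s+1) := by
  have h := Real.integral_rpow_mul_exp_neg_mul_Ioi (a := s+1) (r := a) (by linarith) ha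
  simp only [add_sub_cancel_right] at h
  rw [show (∫ w in Ioi (0:ℝ), Real.exp (-(a * w)) * w ^ s)
      = ∫ t in Ioi (0:ℝ), t ^ s * Real.exp (-(a * t)) from by
    exact setIntegral_congr_fun measurableSet_Ioi (fun t _ => by ring), h]
  rw [Real.div_rpow zero_le_one ha.le, Real.one_rpow]
  ring

lemma trans_Ioi {E : Type*} [NormedAddCommGroup E] [NormedSpace ℝ E]
    (F : ℝ → E) (r : ℝ) : ∫ w in Ioi r, F w = ∫ t in Ioi (0:ℝ), F (t + r) := by
  have himg : (fun t : ℝ => t + r) '' Ioi 0 = Ioi r := by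
    rw [image_add_const_Ioi, zero_add]
  have h2 := integral_image_eq_integral_abs_deriv_smul (f := fun t : ℝ => t + r)
    (f' := fun _ : ℝ => (1:ℝ)) (s := Ioi (0:ℝ)) measurableSet_Ioi
    (fun x _ => ((hasDerivAt_id x).add_const r).hasDerivWithinAt)
    (fun x _ y _ h => by simpa using h) F
  rw [himg] at h2
  simpa using h2

/-- P b t = ∫_{x>0} e^{-bx} (x+t)^s dx -/
noncomputable def P (s b t : ℝ) : ℝ := ∫ x in Ioi (0:ℝ), Real.exp (-(b * x)) * (x + t) ^ s

/-- G b r = ∫_{w>r} e^{-bw} w^s dw -/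
noncomputable def G (s b r : ℝ) : ℝ := ∫ w in Ioi r, Real.exp (-(b * w)) * w ^ s

lemma G_eq_P {b r : ℝ} : G s b r = Real.exp (-(b * r)) * P s b r := by
  rw [G, trans_Ioi, P, ← integral_const_mul]
  congr 1; ext x
  rw [← mul_assoc, ← Real.exp_add]; ring_nf

lemma P_nonneg (ht : 0 ≤ t) : 0 ≤ P s b t := by
  apply setIntegral_nonneg measurableSet_Ioi
  intro x hx
  have : (0:ℝ) ≤ (x + t) ^ s := Real.rpow_nonneg (by linarith [(mem_Ioi.1 hx).le]) s
  positivity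

lemma two_rpow_bound (hs : 0 < s) {x y : ℝ} (hx : 0 ≤ x) (hy : 0 ≤ y) :
    (x + y) ^ s ≤ 2 ^ s * (x ^ s + y ^ s) := by
  have h1 : (x + y) ^ s ≤ (2 * max x y) ^ s := by
    apply Real.rpow_le_rpow (by linarith)
    · rcases le_total x y with h | h
      · simp [max_eq_right h]; linarith
      · simp [max_eq_left h]; linarith
    · exact hs.le
  rw [Real.mul_rpow (by norm_num) (le_max_iff.2 (Or.inl hx))] at h1
  refine h1.trans (mul_le_mul_of_nonneg_left ?_ (Real.rpow_nonneg (by norm_num) s))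
  rcases le_total x y with h | h
  · rw [max_eq_right h]
    have := Real.rpow_nonneg hx s
    linarith
  · rw [max_eq_left h]
    have := Real.rpow_nonneg hy s
    linarith

lemma exp_int {b : ℝ} (hb : 0 < b) (c : ℝ) :
    IntegrableOn (fun x : ℝ => Real.exp (-(b * x))) (Ioi c) := by
  simpa [neg_mul] using exp_neg_integrableOn_Ioi c hb

lemma integral_exp_b {b : ℝ} (hb : 0 < b) :
    ∫ x in Ioi (0:ℝ), Real.exp (-(b * x)) = 1 / b := by
  have := integral_comp_mul_left_Ioi (fun x => Real.exp (-x)) 0 hb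
  simp only [mul_zero, integral_exp_neg_Ioi, neg_zero, Real.exp_zero, smul_eq_mul,
    mul_one] at this
  rw [show (fun x : ℝ => Real.exp (-(b * x))) = fun x => Real.exp (-(b * x)) from rfl]
  simpa [one_div] using this

lemma P_le (hs : 0 < s) {b : ℝ} (hb : 0 < b) {t : ℝ} (ht : 0 ≤ t) :
    P s b t ≤ 2 ^ s * (Real.Gamma (s+1) / b ^ (s+1) + t ^ s / b) := by
  have hint : IntegrableOn
      (fun x : ℝ => 2 ^ s * (Real.exp (-(b*x)) * x ^ s + Real.exp (-(b*x)) * t ^ s))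
      (Ioi 0) := by
    exact ((g_int hs hb).add ((exp_int hb 0).mul_const _)).const_mul _
  have hle : P s b t ≤ ∫ x in Ioi (0:ℝ),
      2 ^ s * (Real.exp (-(b*x)) * x ^ s + Real.exp (-(b*x)) * t ^ s) := by
    apply setIntegral_mono_on ?_ hint measurableSet_Ioi
    · intro x hx
      have h2 := two_rpow_bound hs (le_of_lt hx) ht
      have := mul_le_mul_of_nonneg_left h2 (Real.exp_pos (-(b*x))).le
      calc Real.exp (-(b*x)) * (x + t) ^ s
          ≤ Real.exp (-(b*x)) * (2 ^ s * (x ^ s + t ^ s)) := this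
        _ = 2 ^ s * (Real.exp (-(b*x)) * x ^ s + Real.exp (-(b*x)) * t ^ s) := by ring
    · -- integrability of the left side
      apply Integrable.mono hint
      · apply ContinuousOn.aestronglyMeasurable ?_ measurableSet_Ioi
        apply ContinuousOn.mul (Continuous.continuousOn (by continuity))
        intro x hx
        exact ((rpow_cont hs).comp (continuous_add_right t)).continuousWithinAt
      · rw [ae_restrict_iff' measurableSet_Ioi]
        filter_upwards with x hx
        have h2 := two_rpow_bound hs (le_of_lt hx) ht
        have h0 : (0:ℝ) ≤ Real.exp (-(b*x)) * (x + t) ^ s := by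
          have : (0:ℝ) ≤ (x+t)^s := Real.rpow_nonneg (by linarith [(mem_Ioi.1 hx).le]) s
          positivity
        have hx1 : (0:ℝ) ≤ x ^ s := Real.rpow_nonneg (le_of_lt hx) s
        have ht1 : (0:ℝ) ≤ t ^ s := Real.rpow_nonneg ht s
        have h1 : (0:ℝ) ≤ 2 ^ s * (Real.exp (-(b*x)) * x ^ s + Real.exp (-(b*x)) * t ^ s) := by
          positivity
        rw [Real.norm_eq_abs, Real.norm_eq_abs, abs_of_nonneg h0, abs_of_nonneg h1]
        calc Real.exp (-(b*x)) * (x + t) ^ s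
            ≤ Real.exp (-(b*x)) * (2 ^ s * (x ^ s + t ^ s)) :=
              mul_le_mul_of_nonneg_left h2 (Real.exp_pos _).le
          _ = 2 ^ s * (Real.exp (-(b*x)) * x ^ s + Real.exp (-(b*x)) * t ^ s) := by ring
  refine hle.trans ?_
  rw [integral_const_mul, integral_add ((g_int hs hb).mono_set (subset_refl _))
    ((exp_int hb 0).mul_const _), integral_mul_const, L_val hs hb, integral_exp_b hb]
  apply le_of_eq
  ring

lemma g_cont (hs : 0 < s) {b : ℝ} : Continuous fun w : ℝ => Real.exp (-(b*w)) * w ^ s :=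
  (Real.continuous_exp.comp (by continuity)).mul (rpow_cont hs)

lemma G_eq (hs : 0 < s) {b : ℝ} (hb : 0 < b) {r : ℝ} (hr : 0 ≤ r) :
    G s b r = (∫ w in Ioi (0:ℝ), Real.exp (-(b*w)) * w ^ s)
      - ∫ w in (0:ℝ)..r, Real.exp (-(b*w)) * w ^ s := by
  rw [intervalIntegral.integral_of_le hr, G, ← Ioc_union_Ioi_eq_Ioi hr,
    setIntegral_union Ioc_disjoint_Ioi_same measurableSet_Ioi
      ((g_int hs hb).mono_set Ioc_subset_Ioi_self) ((g_int hs hb).mono_set (Ioi_subset_Ioi hr))]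
  ring

lemma G_hasDeriv (hs : 0 < s) {b : ℝ} (hb : 0 < b) {r : ℝ} (hr : 0 < r) :
    HasDerivAt (G s b) (-(Real.exp (-(b*r)) * r ^ s)) r := by
  have hde : HasDerivAt (fun r : ℝ => (∫ w in Ioi (0:ℝ), Real.exp (-(b*w)) * w ^ s)
      - ∫ w in (0:ℝ)..r, Real.exp (-(b*w)) * w ^ s) (-(Real.exp (-(b*r)) * r ^ s)) r := by
    apply HasDerivAt.const_sub
    exact intervalIntegral.integral_hasDerivAt_right ((g_cont hs).intervalIntegrable _ _)
      ((g_cont hs).stronglyMeasurable.stronglyMeasurableAtFilter) (g_cont hs).continuousAt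
  apply hde.congr_of_eventuallyEq
  filter_upwards [Ioi_mem_nhds hr] with x hx
  exact G_eq hs hb (le_of_lt hx)

lemma G_contWithin (hs : 0 < s) {b : ℝ} (hb : 0 < b) :
    ContinuousWithinAt (G s b) (Ici 0) 0 := by
  have hc : Continuous fun r : ℝ => (∫ w in Ioi (0:ℝ), Real.exp (-(b*w)) * w ^ s)
      - ∫ w in (0:ℝ)..r, Real.exp (-(b*w)) * w ^ s :=
    continuous_const.sub (intervalIntegral.continuous_primitive
      (fun a b => (g_cont hs).intervalIntegrable a b) 0)
  apply hc.continuousWithinAt.congr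
  · exact fun y hy => G_eq hs hb hy
  · exact G_eq hs hb le_rfl

lemma G_zero (hs : 0 < s) {b : ℝ} (hb : 0 < b) :
    G s b 0 = Real.Gamma (s+1) / b ^ (s+1) := L_val hs hb

lemma G_tendsto (hs : 0 < s) {b : ℝ} (hb : 0 < b) : Tendsto (G s b) atTop (𝓝 0) := by
  have h1 := intervalIntegral_tendsto_integral_Ioi 0 (g_int hs hb) tendsto_id
  have h2 : Tendsto (fun r : ℝ => (∫ w in Ioi (0:ℝ), Real.exp (-(b*w)) * w ^ s)
      - ∫ w in (0:ℝ)..r, Real.exp (-(b*w)) * w ^ s) atTop (𝓝 0) := by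
    have h2 := h1.const_sub (∫ w in Ioi (0:ℝ), Real.exp (-(b*w)) * w ^ s)
    rwa [sub_self] at h2
  apply h2.congr'
  filter_upwards [eventually_ge_atTop (0:ℝ)] with r hr
  exact (G_eq hs hb hr).symm

lemma bound_tendsto (hs : 0 < s) {a b : ℝ} (ha : 0 < a) (hb : 0 < b) :
    Tendsto (fun t : ℝ => Real.exp (-(a*t)) * (2 ^ s *
      (Real.Gamma (s+1) / b ^ (s+1) + t ^ s / b))) atTop (𝓝 0) := by
  have h1 : Tendsto (fun t : ℝ => t ^ s * Real.exp (-a * t)) atTop (𝓝 0) :=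
    tendsto_rpow_mul_exp_neg_mul_atTop_nhds_zero s a ha
  have h2 : Tendsto (fun t : ℝ => Real.exp (-a * t)) atTop (𝓝 0) := by
    apply Real.tendsto_exp_atBot.comp
    exact tendsto_id.const_mul_atTop_of_neg (neg_neg_iff_pos.2 ha)
  have h3 := ((h2.const_mul (2 ^ s * (Real.Gamma (s+1) / b ^ (s+1)))).add
    (h1.const_mul (2 ^ s / b)))
  rw [mul_zero, mul_zero, add_zero] at h3
  apply h3.congr
  intro t
  rw [neg_mul]
  ring

lemma expG_tendsto (hs : 0 < s) {a b : ℝ} (ha : 0 < a) (hb : 0 < b) :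
    Tendsto (fun t : ℝ => Real.exp ((b-a)*t) * G s b t) atTop (𝓝 0) := by
  have key : ∀ t : ℝ, Real.exp ((b-a)*t) * G s b t = Real.exp (-(a*t)) * P s b t := by
    intro t
    rw [G_eq_P, ← mul_assoc, ← Real.exp_add]
    ring_nf
  apply squeeze_zero' ?_ ?_ (bound_tendsto hs ha hb)
  · filter_upwards [eventually_ge_atTop (0:ℝ)] with t ht
    rw [key]
    exact mul_nonneg (Real.exp_pos _).le (P_nonneg ht)
  · filter_upwards [eventually_ge_atTop (0:ℝ)] with t ht
    rw [key]
    exact mul_le_mul_of_nonneg_left (P_le hs hb ht) (Real.exp_pos _).le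

lemma K_integrand_int (hs : 0 < s) {a b : ℝ} (ha : 0 < a) (hb : 0 < b) :
    IntegrableOn (fun t : ℝ => Real.exp (-(a*t)) * P s b t) (Ioi 0) := by
  have hbd : IntegrableOn (fun t : ℝ => Real.exp (-(a*t)) * (2 ^ s *
      (Real.Gamma (s+1) / b ^ (s+1) + t ^ s / b))) (Ioi 0) := by
    have : IntegrableOn (fun t : ℝ => (2 ^ s * (Real.Gamma (s+1) / b ^ (s+1)))
        * Real.exp (-(a*t)) + (2 ^ s / b) * (Real.exp (-(a*t)) * t ^ s)) (Ioi 0) :=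
      (((exp_int ha 0).const_mul _).add ((g_int hs ha).const_mul _))
    apply this.congr_fun ?_ measurableSet_Ioi
    intro t _
    ring
  apply MeasureTheory.Integrable.mono hbd
  · -- a.e. strong measurability
    have : ContinuousOn (fun t : ℝ => Real.exp ((b-a)*t) * G s b t) (Ioi 0) := by
      intro t ht
      exact ((Real.continuous_exp.comp (continuous_const.mul continuous_id)).continuousAt.mul
        (G_hasDeriv hs hb ht).continuousAt).continuousWithinAt
    apply (this.aestronglyMeasurable measurableSet_Ioi).congr
    apply (ae_restrict_iff' measurableSet_Ioi).2
    filter_upwards with t _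
    rw [G_eq_P, ← mul_assoc, ← Real.exp_add]
    ring_nf
  · rw [ae_restrict_iff' measurableSet_Ioi]
    filter_upwards with t ht
    rw [Real.norm_eq_abs, Real.norm_eq_abs, abs_of_nonneg
      (mul_nonneg (Real.exp_pos _).le (P_nonneg (le_of_lt ht)))]
    have h1 := mul_le_mul_of_nonneg_left (P_le hs hb (le_of_lt ht)) (Real.exp_pos (-(a*t))).le
    refine h1.trans (le_abs_self _)

lemma K_val (hs : 0 < s) {a b : ℝ} (ha : 0 < a) (hb : 0 < b) (hab : a ≠ b) :
    ∫ t in Ioi (0:ℝ), Real.exp (-(a*t)) * P s b t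
      = (Real.Gamma (s+1) / a ^ (s+1) - Real.Gamma (s+1) / b ^ (s+1)) / (b - a) := by
  have hba : b - a ≠ 0 := sub_ne_zero.2 (Ne.symm hab)
  set H : ℝ → ℝ := fun t => (Real.exp ((b-a)*t) * G s b t - G s a t) / (b - a) with hH
  have hcont : ContinuousWithinAt H (Ici 0) 0 := by
    apply ContinuousWithinAt.div_const
    apply ContinuousWithinAt.sub ?_ (G_contWithin hs ha)
    exact ((Real.continuous_exp.comp (continuous_const.mul continuous_id)).continuousWithinAt).mul
      (G_contWithin hs hb)
  have hderiv : ∀ t ∈ Ioi (0:ℝ), HasDerivAt H (Real.exp (-(a*t)) * P s b t) t := by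
    intro t ht
    have h1 : HasDerivAt (fun t : ℝ => Real.exp ((b-a)*t)) ((b-a) * Real.exp ((b-a)*t)) t := by
      simpa [mul_comm] using (((hasDerivAt_id t).const_mul (b-a)).exp)
    have h2 := (h1.mul (G_hasDeriv hs hb ht)).sub (G_hasDeriv hs ha ht)
    have h3 := h2.div_const (b - a)
    refine h3.congr_deriv ?_
    symm
    have e1 : Real.exp ((b-a)*t) * Real.exp (-(b*t)) = Real.exp (-(a*t)) := by
      rw [← Real.exp_add]; ring_nf
    have e2 : Real.exp (-(a*t)) * P s b t = Real.exp ((b-a)*t) * G s b t := by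
      rw [G_eq_P, ← mul_assoc, e1]
    rw [e2, show Real.exp ((b-a)*t) * -(Real.exp (-(b*t)) * t ^ s)
      = -(Real.exp (-(a*t)) * t ^ s) from by rw [← e1]; ring]
    field_simp
    ring
  have hint : IntegrableOn (fun t : ℝ => Real.exp (-(a*t)) * P s b t) (Ioi 0) :=
    K_integrand_int hs ha hb
  have htend : Tendsto H atTop (𝓝 0) := by
    have := ((expG_tendsto hs ha hb).sub (G_tendsto hs ha)).div_const (b - a)
    simpa using this
  rw [MeasureTheory.integral_Ioi_of_hasDerivAt_of_tendsto hcont hderiv hint htend]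
  rw [hH]
  simp only [mul_zero, Real.exp_zero, one_mul, zero_sub]
  rw [G_zero hs ha, G_zero hs hb]
  field_simp
  ring

/-- the product measure on (0,∞) × (0,∞) -/
noncomputable def μ2 : Measure (ℝ × ℝ) := (volume.restrict (Ioi 0)).prod (volume.restrict (Ioi 0))

lemma μ2_eq : μ2 = (volume.prod volume).restrict ((Ioi (0:ℝ)) ×ˢ (Ioi (0:ℝ))) :=
  Measure.prod_restrict _ _

lemma B_cont (hs : 0 < s) (a b : ℝ) :
    Continuous (fun p : ℝ × ℝ => Real.exp (-(a*p.1)) * Real.exp (-(b*p.2)) * (p.1+p.2) ^ s) := by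
  apply Continuous.mul
  · exact (Real.continuous_exp.comp (by continuity)).mul
      (Real.continuous_exp.comp (by continuity))
  · exact (rpow_cont hs).comp (continuous_fst.add continuous_snd)

lemma B_bound_int (hs : 0 < s) {a b : ℝ} (ha : 0 < a) (hb : 0 < b) :
    Integrable (fun p : ℝ × ℝ => 2 ^ s * ((Real.exp (-(a*p.1)) * p.1 ^ s) * Real.exp (-(b*p.2))
      + Real.exp (-(a*p.1)) * (Real.exp (-(b*p.2)) * p.2 ^ s))) μ2 := by
  apply Integrable.const_mul
  exact ((g_int hs ha).mul_prod (exp_int hb 0)).add ((exp_int ha 0).mul_prod (g_int hs hb))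

lemma B_le (hs : 0 < s) {a b : ℝ} {p : ℝ × ℝ} (h1 : 0 ≤ p.1) (h2 : 0 ≤ p.2) :
    Real.exp (-(a*p.1)) * Real.exp (-(b*p.2)) * (p.1+p.2) ^ s
      ≤ 2 ^ s * ((Real.exp (-(a*p.1)) * p.1 ^ s) * Real.exp (-(b*p.2))
      + Real.exp (-(a*p.1)) * (Real.exp (-(b*p.2)) * p.2 ^ s)) := by
  have hb2 := two_rpow_bound hs h1 h2
  have he : (0:ℝ) ≤ Real.exp (-(a*p.1)) * Real.exp (-(b*p.2)) := by positivity
  calc Real.exp (-(a*p.1)) * Real.exp (-(b*p.2)) * (p.1+p.2) ^ s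
      ≤ Real.exp (-(a*p.1)) * Real.exp (-(b*p.2)) * (2 ^ s * (p.1 ^ s + p.2 ^ s)) :=
        mul_le_mul_of_nonneg_left hb2 he
    _ = 2 ^ s * ((Real.exp (-(a*p.1)) * p.1 ^ s) * Real.exp (-(b*p.2))
      + Real.exp (-(a*p.1)) * (Real.exp (-(b*p.2)) * p.2 ^ s)) := by ring

lemma B_nonneg {a b : ℝ} {p : ℝ × ℝ} (hp : 0 ≤ p.1 + p.2) :
    0 ≤ Real.exp (-(a*p.1)) * Real.exp (-(b*p.2)) * (p.1+p.2) ^ s := by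
  have : (0:ℝ) ≤ (p.1+p.2) ^ s := Real.rpow_nonneg hp s
  positivity

lemma B_int (hs : 0 < s) {a b : ℝ} (ha : 0 < a) (hb : 0 < b) :
    Integrable (fun p : ℝ × ℝ =>
      Real.exp (-(a*p.1)) * Real.exp (-(b*p.2)) * (p.1+p.2) ^ s) μ2 := by
  apply MeasureTheory.Integrable.mono (B_bound_int hs ha hb)
    ((B_cont hs a b).aestronglyMeasurable)
  rw [μ2_eq, ae_restrict_iff' (measurableSet_Ioi.prod measurableSet_Ioi)]
  filter_upwards with p hp
  rw [Real.norm_eq_abs, Real.norm_eq_abs, abs_of_nonneg (B_nonneg (by linarith [(mem_Ioi.1 hp.1).le, (mem_Ioi.1 hp.2).le]))]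
  exact (B_le hs (mem_Ioi.1 hp.1).le (mem_Ioi.1 hp.2).le).trans (le_abs_self _)

lemma K_prod_val (hs : 0 < s) {a b : ℝ} (ha : 0 < a) (hb : 0 < b) (hab : a ≠ b) :
    ∫ p, Real.exp (-(a*p.1)) * Real.exp (-(b*p.2)) * (p.1+p.2) ^ s ∂μ2
      = (Real.Gamma (s+1) / a ^ (s+1) - Real.Gamma (s+1) / b ^ (s+1)) / (b - a) := by
  rw [μ2, MeasureTheory.integral_prod _ (B_int hs ha hb)]
  rw [← K_val hs ha hb hab]
  apply setIntegral_congr_fun measurableSet_Ioi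
  intro t _
  simp only
  rw [P, ← integral_const_mul]
  apply setIntegral_congr_fun measurableSet_Ioi
  intro r _
  simp only
  rw [add_comm r t]
  ring

section Complexx

variable {u v : ℝ} {z : ℂ}

/-- the complex integrand on the quarter-plane -/
noncomputable def Phi (s u v : ℝ) (z : ℂ) (p : ℝ × ℝ) : ℂ :=
  ((Real.exp (-(u*p.1)) * Real.exp (-(v*p.2)) * (p.1+p.2) ^ s : ℝ) : ℂ)
    / (1 - z * Real.exp (-(p.1+p.2)))

noncomputable def Phin (s u v : ℝ) (z : ℂ) (n : ℕ) (p : ℝ × ℝ) : ℂ :=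
  z ^ n * ((Real.exp (-((u+n)*p.1)) * Real.exp (-((v+n)*p.2)) * (p.1+p.2) ^ s : ℝ) : ℂ)

lemma denom_ne (hz : ‖z‖ < 1) {w : ℝ} (hw : 0 < w) :
    1 - z * Real.exp (-w) ≠ 0 := by
  intro h
  have h1 : ‖z * Real.exp (-w)‖ < 1 := by
    rw [norm_mul, Complex.norm_real, Real.norm_eq_abs, abs_of_nonneg (Real.exp_pos _).le]
    calc ‖z‖ * Real.exp (-w) ≤ ‖z‖ * 1 := by
          apply mul_le_mul_of_nonneg_left _ (norm_nonneg z)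
          exact (Real.exp_le_one_iff).2 (by linarith)
      _ < 1 := by simpa using hz
  rw [sub_eq_zero] at h
  rw [← h] at h1
  simp at h1

lemma denom_ge (hz : ‖z‖ < 1) {w : ℝ} (hw : 0 < w) :
    1 - ‖z‖ ≤ ‖1 - z * Real.exp (-w)‖ := by
  have h1 : ‖z * Real.exp (-w)‖ ≤ ‖z‖ := by
    rw [norm_mul, Complex.norm_real, Real.norm_eq_abs, abs_of_nonneg (Real.exp_pos _).le]
    calc ‖z‖ * Real.exp (-w) ≤ ‖z‖ * 1 := by
          apply mul_le_mul_of_nonneg_left _ (norm_nonneg z)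
          exact (Real.exp_le_one_iff).2 (by linarith)
      _ = ‖z‖ := mul_one _
  calc 1 - ‖z‖ ≤ ‖(1:ℂ)‖ - ‖z * Real.exp (-w)‖ := by
        simp only [norm_one]; linarith
    _ ≤ ‖1 - z * Real.exp (-w)‖ := by
        have := norm_sub_norm_le (1:ℂ) (z * Real.exp (-w))
        simpa using this

lemma Phi_contOn (hs : 0 < s) (hz : ‖z‖ < 1) :
    ContinuousOn (Phi s u v z) ((Ioi (0:ℝ)) ×ˢ (Ioi (0:ℝ))) := by
  apply ContinuousOn.div
  · apply Continuous.continuousOn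
    apply Complex.continuous_ofReal.comp
    exact B_cont hs u v
  · apply Continuous.continuousOn
    continuity
  · intro p hp
    simp only [mem_prod, mem_Ioi] at hp
    exact denom_ne hz (by linarith [hp.1, hp.2])

lemma Phi_meas (hs : 0 < s) (hz : ‖z‖ < 1) :
    AEStronglyMeasurable (Phi s u v z) μ2 := by
  rw [μ2_eq]
  exact (Phi_contOn hs hz).aestronglyMeasurable
    (measurableSet_Ioi.prod measurableSet_Ioi)

lemma Phi_int (hs : 0 < s) (hu : 0 < u) (hv : 0 < v) (hz : ‖z‖ < 1) :
    Integrable (Phi s u v z) μ2 := by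
  have hbint : Integrable (fun p : ℝ × ℝ =>
      (1 - ‖z‖)⁻¹ * (Real.exp (-(u*p.1)) * Real.exp (-(v*p.2)) * (p.1+p.2) ^ s)) μ2 :=
    (B_int hs hu hv).const_mul _
  apply MeasureTheory.Integrable.mono hbint (Phi_meas hs hz)
  rw [μ2_eq, ae_restrict_iff' (measurableSet_Ioi.prod measurableSet_Ioi)]
  filter_upwards with p hp
  have h1 : (0:ℝ) < p.1 := hp.1
  have h2 : (0:ℝ) < p.2 := hp.2
  have hw : (0:ℝ) < p.1 + p.2 := by linarith
  have hden := denom_ge hz hw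
  have hzlt : 0 < 1 - ‖z‖ := by linarith
  have hBnn : (0:ℝ) ≤ Real.exp (-(u*p.1)) * Real.exp (-(v*p.2)) * (p.1+p.2) ^ s :=
    B_nonneg hw.le
  rw [Phi, norm_div, Complex.norm_real, Real.norm_eq_abs,
    abs_of_nonneg hBnn, Real.norm_eq_abs, abs_of_nonneg (mul_nonneg (inv_nonneg.2 hzlt.le) hBnn)]
  rw [div_eq_inv_mul]
  apply mul_le_mul_of_nonneg_right _ hBnn
  rw [inv_le_inv₀ (lt_of_lt_of_le hzlt hden) hzlt]
  exact hden

lemma Bn_eq (u v : ℝ) (n : ℕ) (p : ℝ × ℝ) :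
    Real.exp (-((u+n)*p.1)) * Real.exp (-((v+n)*p.2)) * (p.1+p.2) ^ s
      = Real.exp (-(u*p.1)) * Real.exp (-(v*p.2)) * (p.1+p.2) ^ s
        * Real.exp (-(p.1+p.2)) ^ n := by
  rw [← Real.exp_nat_mul, ← Real.exp_add]
  rw [show Real.exp (-(u*p.1)) * Real.exp (-(v*p.2)) * (p.1+p.2) ^ s
      * Real.exp (↑n * -(p.1+p.2))
    = Real.exp (-(u*p.1)) * (Real.exp (-(v*p.2)) * Real.exp (↑n * -(p.1+p.2)))
      * (p.1+p.2) ^ s from by ring, ← Real.exp_add, ← Real.exp_add]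
  congr 2
  ring

lemma Phi_tsum (hz : ‖z‖ < 1) {p : ℝ × ℝ} (h1 : 0 < p.1) (h2 : 0 < p.2) :
    Phi s u v z p = ∑' n : ℕ, Phin s u v z n p := by
  set q : ℂ := z * Real.exp (-(p.1+p.2)) with hq
  have hqlt : ‖q‖ < 1 := by
    rw [hq, norm_mul, Complex.norm_real, Real.norm_eq_abs,
      abs_of_nonneg (Real.exp_pos _).le]
    calc ‖z‖ * Real.exp (-(p.1+p.2)) ≤ ‖z‖ * 1 := by
          apply mul_le_mul_of_nonneg_left _ (norm_nonneg z)
          exact Real.exp_le_one_iff.2 (by linarith)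
      _ < 1 := by simpa using hz
  rw [Phi, div_eq_mul_inv, ← hq, ← tsum_geometric_of_norm_lt_one hqlt, ← tsum_mul_left]
  apply tsum_congr
  intro n
  rw [Phin, Bn_eq u v n p, hq, mul_pow]
  push_cast
  ring

lemma Phin_meas (hs : 0 < s) (n : ℕ) : AEStronglyMeasurable (Phin s u v z n) μ2 := by
  apply Continuous.aestronglyMeasurable
  apply continuous_const.mul
  exact Complex.continuous_ofReal.comp (B_cont hs (u + n) (v + n))

lemma Phin_norm_le (hs : 0 < s) (hu : 0 < u) (hv : 0 < v) (n : ℕ) {p : ℝ × ℝ}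
    (h1 : 0 < p.1) (h2 : 0 < p.2) :
    ‖Phin s u v z n p‖ ≤ (‖z‖) ^ n *
      (Real.exp (-(u*p.1)) * Real.exp (-(v*p.2)) * (p.1+p.2) ^ s) := by
  have hw : (0:ℝ) < p.1 + p.2 := by linarith
  rw [Phin, norm_mul, norm_pow, Complex.norm_real, Real.norm_eq_abs,
    abs_of_nonneg (by rw [Bn_eq u v n p]; positivity :
      (0:ℝ) ≤ Real.exp (-((u+n)*p.1)) * Real.exp (-((v+n)*p.2)) * (p.1+p.2) ^ s)]
  rw [Bn_eq u v n p]
  apply mul_le_mul_of_nonneg_left _ (pow_nonneg (norm_nonneg z) n)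
  calc Real.exp (-(u*p.1)) * Real.exp (-(v*p.2)) * (p.1+p.2) ^ s * Real.exp (-(p.1+p.2)) ^ n
      ≤ Real.exp (-(u*p.1)) * Real.exp (-(v*p.2)) * (p.1+p.2) ^ s * 1 :=
        mul_le_mul_of_nonneg_left
          (pow_le_one₀ (Real.exp_pos _).le (Real.exp_le_one_iff.2 (by linarith)))
          (B_nonneg hw.le)
    _ = Real.exp (-(u*p.1)) * Real.exp (-(v*p.2)) * (p.1+p.2) ^ s := mul_one _

lemma Phin_lintegral_le (hs : 0 < s) (hu : 0 < u) (hv : 0 < v) (n : ℕ) :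
    ∫⁻ p, ‖Phin s u v z n p‖₊ ∂μ2 ≤ ENNReal.ofReal ((‖z‖) ^ n) *
      ∫⁻ p, ENNReal.ofReal
        (Real.exp (-(u*p.1)) * Real.exp (-(v*p.2)) * (p.1+p.2) ^ s) ∂μ2 := by
  rw [← lintegral_const_mul' _ _ ENNReal.ofReal_ne_top]
  apply lintegral_mono_ae
  rw [μ2_eq, ae_restrict_iff' (measurableSet_Ioi.prod measurableSet_Ioi)]
  filter_upwards with p hp
  have hle := Phin_norm_le (z := z) hs hu hv n hp.1 hp.2
  calc (‖Phin s u v z n p‖₊ : ℝ≥0∞) = ENNReal.ofReal ‖Phin s u v z n p‖ :=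
        (ofReal_norm_eq_enorm _).symm
    _ ≤ ENNReal.ofReal ((‖z‖) ^ n *
        (Real.exp (-(u*p.1)) * Real.exp (-(v*p.2)) * (p.1+p.2) ^ s)) :=
        ENNReal.ofReal_le_ofReal hle
    _ = ENNReal.ofReal ((‖z‖) ^ n) * ENNReal.ofReal
        (Real.exp (-(u*p.1)) * Real.exp (-(v*p.2)) * (p.1+p.2) ^ s) :=
        ENNReal.ofReal_mul (pow_nonneg (norm_nonneg z) n)

lemma integral_Phi_eq (hs : 0 < s) (hu : 0 < u) (hv : 0 < v) (huv : u ≠ v)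
    (hz : ‖z‖ < 1) :
    ∫ p, Phi s u v z p ∂μ2 = ∑' n : ℕ, z ^ n *
      (((Real.Gamma (s+1) / (u+n) ^ (s+1) - Real.Gamma (s+1) / (v+n) ^ (s+1)) / (v-u) : ℝ) : ℂ)
    := by
  set C : ℝ≥0∞ := ∫⁻ p, ENNReal.ofReal
    (Real.exp (-(u*p.1)) * Real.exp (-(v*p.2)) * (p.1+p.2) ^ s) ∂μ2 with hCdef
  have hC : C ≠ ⊤ := by
    have h1 := (B_int hs hu hv).hasFiniteIntegral
    rw [HasFiniteIntegral] at h1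
    refine ne_top_of_le_ne_top h1.ne (lintegral_mono fun p => ?_)
    rw [← ofReal_norm_eq_enorm]
    exact ENNReal.ofReal_le_ofReal (le_abs_self _)
  have hsum : ∑' n : ℕ, ∫⁻ p, ‖Phin s u v z n p‖₊ ∂μ2 ≠ ⊤ := by
    apply ne_top_of_le_ne_top ?_ (ENNReal.tsum_le_tsum (Phin_lintegral_le hs hu hv))
    have : ∑' n : ℕ, ENNReal.ofReal ((‖z‖) ^ n) * C
        = (1 - ENNReal.ofReal (‖z‖))⁻¹ * C := by
      rw [ENNReal.tsum_mul_right]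
      congr 1
      rw [show (fun n : ℕ => ENNReal.ofReal (‖z‖ ^ n))
        = fun n : ℕ => (ENNReal.ofReal (‖z‖)) ^ n from
        funext fun n => ENNReal.ofReal_pow (norm_nonneg z) n]
      exact ENNReal.tsum_geometric _
    rw [this]
    apply (ENNReal.mul_lt_top _ hC.lt_top).ne
    rw [ENNReal.inv_lt_top]
    rw [tsub_pos_iff_lt]
    exact lt_of_lt_of_le (ENNReal.ofReal_lt_one.2 hz) (by norm_num)
  have hae : ∫ p, Phi s u v z p ∂μ2 = ∫ p, ∑' n : ℕ, Phin s u v z n p ∂μ2 := by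
    apply integral_congr_ae
    rw [Filter.EventuallyEq, μ2_eq, ae_restrict_iff' (measurableSet_Ioi.prod measurableSet_Ioi)]
    filter_upwards with p hp
    exact Phi_tsum hz hp.1 hp.2
  rw [hae, integral_tsum (fun n => Phin_meas hs n) hsum]
  apply tsum_congr
  intro n
  have hun : (0:ℝ) < u + n := by positivity
  have hvn : (0:ℝ) < v + n := by positivity
  have hne : (u + (n:ℝ)) ≠ (v + n) := fun h => huv (by linarith)
  calc ∫ p, Phin s u v z n p ∂μ2
      = z ^ n * ∫ p, ((Real.exp (-((u+n)*p.1)) * Real.exp (-((v+n)*p.2))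
          * (p.1+p.2) ^ s : ℝ) : ℂ) ∂μ2 := by
        rw [← integral_const_mul]; rfl
    _ = z ^ n * ((∫ p, Real.exp (-((u+n)*p.1)) * Real.exp (-((v+n)*p.2))
          * (p.1+p.2) ^ s ∂μ2 : ℝ) : ℂ) := by
        congr 1
        exact integral_ofReal
    _ = _ := by
        rw [K_prod_val hs hun hvn hne, add_sub_add_right_eq_sub]

lemma summable_S (hs : 0 < s) (hz : ‖z‖ < 1) {w : ℝ} (hw : 0 < w) :
    Summable (fun n : ℕ => z ^ n / (((w + n) ^ (s+1) : ℝ) : ℂ)) := by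
  have hσ : (0:ℝ) ≤ s + 1 := by linarith
  apply Summable.of_norm
  refine Summable.of_nonneg_of_le (fun n => norm_nonneg _) (fun n => ?_)
    ((summable_geometric_of_lt_one (norm_nonneg z) hz).mul_right ((w ^ (s+1))⁻¹))
  · rw [norm_div, norm_pow, Complex.norm_real, Real.norm_eq_abs,
      abs_of_nonneg (Real.rpow_nonneg (by positivity) _), div_eq_mul_inv]
    apply mul_le_mul_of_nonneg_left _ (pow_nonneg (norm_nonneg z) n)
    rw [inv_le_inv₀ (Real.rpow_pos_of_pos (by positivity) _) (Real.rpow_pos_of_pos hw _)]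
    exact Real.rpow_le_rpow hw.le (by linarith [Nat.cast_nonneg (α := ℝ) n]) hσ

lemma tsum_final (hs : 0 < s) (hu : 0 < u) (hv : 0 < v) (huv : u ≠ v)
    (hz : ‖z‖ < 1) :
    (∑' n : ℕ, z ^ n *
      (((Real.Gamma (s+1) / (u+n) ^ (s+1) - Real.Gamma (s+1) / (v+n) ^ (s+1)) / (v-u) : ℝ) : ℂ))
    = (Real.Gamma (s + 1) : ℂ) *
        ((∑' n : ℕ, z ^ n / (((v + n) ^ (s + 1) : ℝ) : ℂ)) -
          ∑' n : ℕ, z ^ n / (((u + n) ^ (s + 1) : ℝ) : ℂ)) / ((u - v : ℝ) : ℂ) := by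
  have hvu : ((v : ℂ) - u) ≠ 0 := by
    rw [sub_ne_zero]
    exact_mod_cast fun h => huv (by exact_mod_cast h.symm)
  have h1 : ∀ n : ℕ,
      z ^ n * (((Real.Gamma (s+1) / (u+n) ^ (s+1)
        - Real.Gamma (s+1) / (v+n) ^ (s+1)) / (v-u) : ℝ) : ℂ)
      = ((Real.Gamma (s+1) : ℂ) / (((v : ℂ) - u))) *
        (z ^ n / (((u + n) ^ (s + 1) : ℝ) : ℂ) - z ^ n / (((v + n) ^ (s + 1) : ℝ) : ℂ)) := by
    intro n
    have hun : ((((u + n) ^ (s+1) : ℝ)) : ℂ) ≠ 0 := by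
      exact_mod_cast (Real.rpow_pos_of_pos (by positivity) (s+1)).ne'
    have hvn : ((((v + n) ^ (s+1) : ℝ)) : ℂ) ≠ 0 := by
      exact_mod_cast (Real.rpow_pos_of_pos (by positivity) (s+1)).ne'
    push_cast
    field_simp
  rw [tsum_congr h1, tsum_mul_left,
    Summable.tsum_sub (summable_S hs hz hu) (summable_S hs hz hv)]
  have : ((u : ℂ) - v) ≠ 0 := by
    rw [sub_ne_zero]
    exact_mod_cast huv
  push_cast
  field_simp
  ring

lemma exp_neg_image : (fun t : ℝ => Real.exp (-t)) '' Ioi 0 = Ioo 0 1 := by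
  ext w
  constructor
  · rintro ⟨t, ht, rfl⟩
    exact ⟨Real.exp_pos _, Real.exp_lt_one_iff.2 (by simpa using ht)⟩
  · intro hw
    refine ⟨-Real.log w, ?_, by simp [Real.exp_log hw.1]⟩
    simpa using Real.log_neg hw.1 hw.2

lemma sub01 {E : Type*} [NormedAddCommGroup E] [NormedSpace ℝ E] (f : ℝ → E) :
    ∫ x in Ioo (0:ℝ) 1, f x = ∫ t in Ioi (0:ℝ), Real.exp (-t) • f (Real.exp (-t)) := by
  have h := integral_image_eq_integral_abs_deriv_smul (f := fun t : ℝ => Real.exp (-t))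
    (f' := fun t : ℝ => -Real.exp (-t)) (s := Ioi (0:ℝ)) measurableSet_Ioi
    (fun x _ => by simpa using ((hasDerivAt_id x).neg.exp).hasDerivWithinAt)
    (fun a _ b _ h => by
      have := Real.exp_injective h
      linarith [neg_injective this]) f
  rw [exp_neg_image] at h
  simp only [abs_neg, abs_of_pos (Real.exp_pos _)] at h
  exact h

end Complexx

end GS

open MeasureTheory

theorem guillera_sondow_first (u v : ℝ) (hu : 0 < u) (hv : 0 < v) (huv : u ≠ v)
    (z : ℂ) (hz : ‖z‖ < 1) (s : ℝ) (hs : 0 < s) :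
    ∫ x in (0:ℝ)..1, ∫ y in (0:ℝ)..1,
        ((x ^ (u - 1) * y ^ (v - 1) * (-Real.log (x * y)) ^ s : ℝ) : ℂ) / (1 - z * x * y)
      = (Real.Gamma (s + 1) : ℂ) *
        ((∑' n : ℕ, z ^ n / (((v + n) ^ (s + 1) : ℝ) : ℂ)) -
          ∑' n : ℕ, z ^ n / (((u + n) ^ (s + 1) : ℝ) : ℂ)) / ((u - v : ℝ) : ℂ) := by
  have inner_eq : ∀ x : ℝ, (∫ y in (0:ℝ)..1,
      ((x ^ (u - 1) * y ^ (v - 1) * (-Real.log (x * y)) ^ s : ℝ) : ℂ) / (1 - z * x * y))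
      = ∫ r in Set.Ioi (0:ℝ), Real.exp (-r) •
          (((x ^ (u - 1) * (Real.exp (-r)) ^ (v - 1)
            * (-Real.log (x * Real.exp (-r))) ^ s : ℝ) : ℂ)
            / (1 - z * x * Real.exp (-r))) := by
    intro x
    rw [intervalIntegral.integral_of_le zero_le_one, integral_Ioc_eq_integral_Ioo, GS.sub01]
  rw [intervalIntegral.integral_of_le zero_le_one, integral_Ioc_eq_integral_Ioo]
  simp_rw [inner_eq]
  rw [GS.sub01]
  have hiter : (∫ t in Set.Ioi (0:ℝ), Real.exp (-t) • ∫ r in Set.Ioi (0:ℝ), Real.exp (-r) •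
      ((((Real.exp (-t)) ^ (u - 1) * (Real.exp (-r)) ^ (v - 1)
        * (-Real.log (Real.exp (-t) * Real.exp (-r))) ^ s : ℝ) : ℂ)
        / (1 - z * Real.exp (-t) * Real.exp (-r))))
      = ∫ t in Set.Ioi (0:ℝ), ∫ r in Set.Ioi (0:ℝ), GS.Phi s u v z (t, r) := by
    apply setIntegral_congr_fun measurableSet_Ioi
    intro t ht
    simp only
    rw [← integral_smul]
    apply setIntegral_congr_fun measurableSet_Ioi
    intro r hr
    simp only
    have hxt : Real.exp (-t) ^ (u-1) = Real.exp (-((u-1)*t)) := by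
      rw [Real.rpow_def_of_pos (Real.exp_pos _), Real.log_exp]; ring_nf
    have hyr : Real.exp (-r) ^ (v-1) = Real.exp (-((v-1)*r)) := by
      rw [Real.rpow_def_of_pos (Real.exp_pos _), Real.log_exp]; ring_nf
    have hlog : -Real.log (Real.exp (-t) * Real.exp (-r)) = t + r := by
      rw [← Real.exp_add, Real.log_exp]; ring
    have hden : z * (Real.exp (-t) : ℂ) * (Real.exp (-r) : ℂ)
        = z * ((Real.exp (-(t+r)) : ℝ) : ℂ) := by
      rw [show ((-(t+r)) : ℝ) = (-t) + (-r) from by ring, Real.exp_add]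
      push_cast
      ring
    rw [GS.Phi, hxt, hyr, hlog, hden, Complex.real_smul, Complex.real_smul]
    rw [show ((Real.exp (-t) : ℝ) : ℂ) * (((Real.exp (-r) : ℝ) : ℂ) *
        (((Real.exp (-((u-1)*t)) * Real.exp (-((v-1)*r)) * (t+r) ^ s : ℝ) : ℂ)
          / (1 - z * ((Real.exp (-(t+r)) : ℝ) : ℂ))))
      = ((Real.exp (-t) * Real.exp (-((u-1)*t)) * (Real.exp (-r) * Real.exp (-((v-1)*r)))
          * (t+r) ^ s : ℝ) : ℂ) / (1 - z * ((Real.exp (-(t+r)) : ℝ) : ℂ)) from by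
        push_cast; ring]
    rw [← Real.exp_add, ← Real.exp_add, show -t + -((u-1)*t) = -(u*t) from by ring,
      show -r + -((v-1)*r) = -(v*r) from by ring]
  rw [hiter, ← MeasureTheory.integral_prod (GS.Phi s u v z)
      (by rw [show (volume.restrict (Set.Ioi (0:ℝ))).prod (volume.restrict (Set.Ioi (0:ℝ)))
          = GS.μ2 from rfl]; exact GS.Phi_int hs hu hv hz),
    show (volume.restrict (Set.Ioi (0:ℝ))).prod (volume.restrict (Set.Ioi (0:ℝ)))
          = GS.μ2 from rfl,
    GS.integral_Phi_eq hs hu hv huv hz, GS.tsum_final hs hu hv huv hz]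
end

section
/- For |z| < 1, real s, and real u > 0, the partial derivative in u of the Lerch series Φ(z,s,u) = ∑_{n=0}^{∞} z^n/(u+n)^s satisfies ∂Φ/∂u (z, s, u) = -s · Φ(z, s+1, u). -/
lemma aux_summable {r : ℝ} (hr0 : 0 ≤ r) (hr : r < 1) {c : ℝ} (hc : 0 < c)
    {t : ℝ} (ht : 0 ≤ t) : Summable fun n : ℕ => (c + n) ^ t * r ^ n := by
  set k := ⌈t⌉₊ with hk
  have h1 : Summable fun n : ℕ => (c + 1) ^ t * (2 ^ k * ((n : ℝ) ^ k * r ^ n)) := by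
    apply Summable.mul_left
    apply Summable.mul_left
    exact summable_pow_mul_geometric_of_norm_lt_one k (by rwa [Real.norm_eq_abs, abs_of_nonneg hr0])
  apply Summable.of_norm_bounded_eventually_nat h1
  filter_upwards [Filter.eventually_ge_atTop 1] with n hn
  have hn1 : (1 : ℝ) ≤ n := by exact_mod_cast hn
  have hcn : (0:ℝ) < c + n := by positivity
  have hb1 : c + n ≤ (c + 1) * (n + 1) := by nlinarith
  have step1 : (c + n) ^ t ≤ ((c + 1) * (n + 1)) ^ t :=
    Real.rpow_le_rpow hcn.le hb1 ht
  have step2 : ((c + 1) * (n + 1)) ^ t = (c+1)^t * (n+1:ℝ)^t := by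
    rw [Real.mul_rpow (by positivity) (by positivity)]
  have step3 : ((n:ℝ)+1) ^ t ≤ ((n:ℝ)+1) ^ (k:ℝ) :=
    Real.rpow_le_rpow_of_exponent_le (by linarith) (Nat.le_ceil t)
  have step4 : ((n:ℝ)+1) ^ (k:ℝ) = ((n:ℝ)+1) ^ k := Real.rpow_natCast _ _
  have step5 : ((n:ℝ)+1) ^ k ≤ (2*n:ℝ) ^ k := by
    apply pow_le_pow_left₀ (by positivity); linarith
  have h2 : ‖(c + n) ^ t * r ^ n‖ = (c + n) ^ t * r ^ n := by
    rw [Real.norm_eq_abs, abs_of_nonneg (by positivity)]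
  rw [h2]
  have hrn : (0:ℝ) ≤ r ^ n := by positivity
  calc (c + n) ^ t * r ^ n ≤ ((c+1)^t * ((2*n:ℝ)^k)) * r ^ n := by
        apply mul_le_mul_of_nonneg_right _ hrn
        calc (c+n)^t ≤ (c+1)^t * ((n:ℝ)+1)^t := by rw [← step2]; exact step1
          _ ≤ (c+1)^t * ((2*n:ℝ)^k) := by
              apply mul_le_mul_of_nonneg_left _ (by positivity)
              calc ((n:ℝ)+1)^t ≤ ((n:ℝ)+1)^(k:ℝ) := step3
                _ = ((n:ℝ)+1)^k := step4
                _ ≤ (2*n:ℝ)^k := step5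
    _ = (c + 1) ^ t * (2 ^ k * ((n : ℝ) ^ k * r ^ n)) := by ring

theorem lerch_deriv (z : ℂ) (hz : ‖z‖ < 1) (s : ℝ) (u : ℝ) (hu : 0 < u) :
    HasDerivAt (fun w : ℝ => ∑' n : ℕ, z ^ n / (((w + n) ^ s : ℝ) : ℂ))
      (-(s : ℂ) * ∑' n : ℕ, z ^ n / (((u + n) ^ (s + 1) : ℝ) : ℂ)) u := by
  set az := ‖z‖ with haz
  have haz0 : 0 ≤ az := norm_nonneg z
  set T : Set ℝ := Set.Ioo (u/2) (2*u) with hT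
  set g : ℕ → ℝ → ℂ := fun n w => z ^ n / (((w + n) ^ s : ℝ) : ℂ) with hg
  set g' : ℕ → ℝ → ℂ := fun n w => -(s : ℂ) * (z ^ n / (((w + n) ^ (s + 1) : ℝ) : ℂ)) with hg'
  set bnd : ℕ → ℝ := fun n => |s| * (((u/2) ^ (-(s+1)) + (2*u + n) ^ |s+1|) * az ^ n) with hbnd
  -- summability of the bound
  have hsum : Summable bnd := by
    apply Summable.mul_left
    have h1 : Summable fun n : ℕ => (u/2) ^ (-(s+1)) * az ^ n :=
      (summable_geometric_of_lt_one haz0 hz).mul_left _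
    have h2 : Summable fun n : ℕ => (2*u + n) ^ |s+1| * az ^ n :=
      aux_summable haz0 hz (by linarith) (abs_nonneg _)
    have h3 := h1.add h2
    convert h3 using 2 with n
    · rfl
    ring
  -- derivative of each term
  have hderiv : ∀ (n : ℕ), ∀ w ∈ T, HasDerivAt (g n) (g' n w) w := by
    intro n w hw
    have hw1 : u/2 < w := hw.1
    have hwpos : (0:ℝ) < w := by linarith
    have hx : (0:ℝ) < w + n := by positivity
    have h1 : HasDerivAt (fun w : ℝ => (w + n) ^ (-s)) (1 * (-s) * (w + n) ^ (-s-1)) w :=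
      HasDerivAt.rpow_const ((hasDerivAt_id w).add_const (n:ℝ)) (Or.inl hx.ne')
    have h2 := (h1.ofReal_comp).const_mul (z ^ n)
    have hlt : -(n:ℝ) < w := by linarith
    have hev : (g n) =ᶠ[nhds w] (fun v => z ^ n * (((v + n) ^ (-s) : ℝ) : ℂ)) := by
      filter_upwards [eventually_gt_nhds hlt] with v hv
      have hv' : (0:ℝ) ≤ v + n := by linarith
      simp only [hg]
      rw [Real.rpow_neg hv', Complex.ofReal_inv, div_eq_mul_inv]
    have h5 := h2.congr_of_eventuallyEq hev
    convert h5 using 1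
    · rfl
    simp only [hg']
    rw [show (-s - 1 : ℝ) = -(s+1) by ring, Real.rpow_neg hx.le]
    push_cast
    ring
  -- bound on the derivatives
  have hbound : ∀ (n : ℕ), ∀ w ∈ T, ‖g' n w‖ ≤ bnd n := by
    intro n w hw
    have hw1 : u/2 < w := hw.1
    have hw2 : w < 2*u := hw.2
    have hwpos : (0:ℝ) < w := by linarith
    have hx : (0:ℝ) < w + n := by positivity
    have hnorm : ‖g' n w‖ = |s| * (az ^ n / (w+n)^(s+1)) := by
      simp only [hg', norm_neg, norm_mul, norm_div, norm_pow, Complex.norm_real,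
        Real.norm_eq_abs, ← haz]
      rw [abs_of_nonneg (Real.rpow_nonneg hx.le _)]
    rw [hnorm, hbnd]
    apply mul_le_mul_of_nonneg_left _ (abs_nonneg s)
    have hkey : ((w+n):ℝ) ^ (-(s+1)) ≤ (u/2) ^ (-(s+1)) + (2*u + n) ^ |s+1| := by
      rcases le_or_gt 0 (s+1) with hcase | hcase
      · have h1 : ((w+n):ℝ) ^ (-(s+1)) ≤ (u/2) ^ (-(s+1)) :=
          Real.rpow_le_rpow_of_nonpos (by linarith) (by push_cast; linarith [Nat.cast_nonneg (α := ℝ) n]) (by linarith)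
        have h2 : (0:ℝ) ≤ (2*u + n) ^ |s+1| := Real.rpow_nonneg (by positivity) _
        linarith
      · have he : |s+1| = -(s+1) := abs_of_neg hcase
        have h1 : ((w+n):ℝ) ^ (-(s+1)) ≤ (2*u + n) ^ (-(s+1)) :=
          Real.rpow_le_rpow hx.le (by linarith) (by linarith)
        have h2 : (0:ℝ) ≤ (u/2) ^ (-(s+1)) := Real.rpow_nonneg (by linarith) _
        rw [he]
        linarith
    calc az ^ n / (w+n)^(s+1) = ((w+n):ℝ) ^ (-(s+1)) * az ^ n := by
          rw [Real.rpow_neg hx.le]; ring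
      _ ≤ ((u/2) ^ (-(s+1)) + (2*u + n) ^ |s+1|) * az ^ n := by
          apply mul_le_mul_of_nonneg_right hkey (by positivity)
  -- summability at u
  have hg0 : Summable fun n => g n u := by
    apply Summable.of_norm
    have hb : Summable fun n : ℕ => (u ^ (-s) + (u + n) ^ |s|) * az ^ n := by
      have h1 : Summable fun n : ℕ => u ^ (-s) * az ^ n :=
        (summable_geometric_of_lt_one haz0 hz).mul_left _
      have h2 : Summable fun n : ℕ => (u + n) ^ |s| * az ^ n :=
        aux_summable haz0 hz hu (abs_nonneg _)
      have h3 := h1.add h2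
      convert h3 using 2 with n
      ring
    apply Summable.of_nonneg_of_le (fun n => norm_nonneg _) _ hb
    intro n
    have hx : (0:ℝ) < u + n := by positivity
    have hnorm : ‖g n u‖ = az ^ n / (u+n)^s := by
      simp only [hg, norm_div, norm_pow, Complex.norm_real, Real.norm_eq_abs, ← haz]
      rw [abs_of_nonneg (Real.rpow_nonneg hx.le _)]
    rw [hnorm]
    have hkey : ((u+n):ℝ) ^ (-s) ≤ u ^ (-s) + (u + n) ^ |s| := by
      rcases le_or_gt 0 s with hcase | hcase
      · have h1 : ((u+n):ℝ) ^ (-s) ≤ u ^ (-s) :=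
          Real.rpow_le_rpow_of_nonpos hu (by linarith [Nat.cast_nonneg (α := ℝ) n]) (by linarith)
        have h2 : (0:ℝ) ≤ (u + n) ^ |s| := Real.rpow_nonneg hx.le _
        linarith
      · have he : |s| = -s := abs_of_neg hcase
        have h2 : (0:ℝ) ≤ u ^ (-s) := Real.rpow_nonneg hu.le _
        rw [he]
        linarith
    calc az ^ n / (u+n)^s = ((u+n):ℝ) ^ (-s) * az ^ n := by
          rw [Real.rpow_neg hx.le]; ring
      _ ≤ (u ^ (-s) + (u + n) ^ |s|) * az ^ n := by
          apply mul_le_mul_of_nonneg_right hkey (by positivity)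
  -- assemble
  have humem : u ∈ T := ⟨by linarith, by linarith⟩
  have H := hasDerivAt_tsum_of_isPreconnected hsum isOpen_Ioo isPreconnected_Ioo
    hderiv hbound humem hg0 humem
  convert H using 1
  · rfl
  simp only [hg']
  rw [tsum_mul_left]
end

section
/- For every integer m > 1, Euler's constant γ equals (m-2)! times the integral over [0,1]^m of (m-1 - x₁ - x₁x₂ - ⋯ - x₁x₂⋯x_{m-1}) / ((1 - x₁x₂⋯x_m)(-ln(x₁x₂⋯x_m))^{m-1}) dx₁⋯dx_m. -/
open MeasureTheory

/-- Partial product `x₁ x₂ ⋯ x_{j+1}` of the coordinates of `x : Fin m → ℝ`. -/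
noncomputable def partialProd (m : ℕ) (x : Fin m → ℝ) (j : ℕ) : ℝ :=
  ∏ i ∈ Finset.univ.filter (fun i : Fin m => (i : ℕ) ≤ j), x i

section auxiliary

open Set Real Filter Topology
open scoped ENNReal NNReal

/-- Telescoping geometric identity: with `b = a+1`,
`∑_{k<M} 1/(b^(k+1) a^(M-k)) = 1/a^M - 1/b^M`. -/
lemma geom_tel (a : ℝ) (ha : 0 < a) (M : ℕ) :
    ∑ k ∈ Finset.range M, 1 / ((a+1) ^ (k+1) * a ^ (M - k)) = 1 / a ^ M - 1 / (a+1) ^ M := by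
  induction M with
  | zero => simp
  | succ M ih =>
    rw [Finset.sum_range_succ]
    have h1 : ∀ k ∈ Finset.range M,
        1 / ((a+1) ^ (k+1) * a ^ (M + 1 - k)) = (1/a) * (1 / ((a+1) ^ (k+1) * a ^ (M - k))) := by
      intro k hk
      have hk' : k ≤ M := (Finset.mem_range.mp hk).le
      have : M + 1 - k = (M - k) + 1 := by omega
      rw [this, pow_succ]
      field_simp
      ring
    rw [Finset.sum_congr rfl h1, ← Finset.mul_sum, ih]
    have hb : (0:ℝ) < a + 1 := by linarith
    have : M + 1 - M = 1 := by omega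
    simp only [this, pow_one]
    field_simp
    ring

lemma g_nonneg (K : ℕ) (c s : ℝ) (hc : 0 < c) (hs : 0 ≤ s) :
    0 ≤ s ^ K * (((K:ℝ)+1) / (s+c) ^ (K+2) - 1 / (s+c) ^ (K+1) + 1 / (s+c+1) ^ (K+1)) := by
  have ha : (0:ℝ) < s + c := by linarith
  have hb : (0:ℝ) < s + c + 1 := by linarith
  apply mul_nonneg (by positivity)
  have key : 1 / (s+c) ^ (K+1) - 1 / (s+c+1) ^ (K+1) ≤ ((K:ℝ)+1) / (s+c) ^ (K+2) := by
    have hgt := geom_tel (s+c) ha (K+1)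
    rw [show s + c + 1 = (s+c) + 1 by ring, ← hgt]
    calc ∑ k ∈ Finset.range (K+1), 1 / (((s+c)+1) ^ (k+1) * (s+c) ^ (K + 1 - k))
        ≤ ∑ k ∈ Finset.range (K+1), 1 / (s+c) ^ (K+2) := by
          apply Finset.sum_le_sum
          intro k hk
          have hk' : k < K + 1 := Finset.mem_range.mp hk
          apply one_div_le_one_div_of_le (by positivity)
          calc (s+c) ^ (K+2) = (s+c) ^ (k+1) * (s+c) ^ (K+1-k) := by
                rw [← pow_add]; congr 1; omega
            _ ≤ ((s+c)+1) ^ (k+1) * (s+c) ^ (K+1-k) := by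
                apply mul_le_mul_of_nonneg_right _ (by positivity)
                exact pow_le_pow_left₀ ha.le (by linarith) _
      _ = ((K:ℝ)+1) / (s+c) ^ (K+2) := by
          rw [Finset.sum_const, Finset.card_range, nsmul_eq_mul]
          push_cast; ring
  linarith

lemma pow_div_deriv (d s : ℝ) (h : 0 < s + d) (n : ℕ) :
    HasDerivAt (fun t : ℝ => (t/(t+d))^(n+1)) (((n:ℝ)+1) * d * s^n / (s+d)^(n+2)) s := by
  have hbase : HasDerivAt (fun t : ℝ => t/(t+d)) (d/(s+d)^2) s := by
    have hne : id s + d ≠ 0 := by simp only [id_eq]; exact h.ne'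
    have hh := (hasDerivAt_id s).div ((hasDerivAt_id s).add_const d) hne
    refine hh.congr_deriv ?_; symm
    simp only [id_eq, one_mul, mul_one]
    rw [div_eq_div_iff (by positivity) (by positivity)]
    ring
  have := hbase.pow (n+1)
  refine this.congr_deriv ?_; symm
  have h2 : n + 1 - 1 = n := by omega
  rw [h2, div_pow]
  push_cast
  field_simp
  ring

/-- The scalar improper integral. -/
lemma scalar_integral (K : ℕ) (c : ℝ) (hc : 0 < c) :
    IntegrableOn (fun s => s ^ K * (((K:ℝ)+1) / (s+c) ^ (K+2) - 1 / (s+c) ^ (K+1) + 1 / (s+c+1) ^ (K+1)))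
      (Ioi 0) ∧
    ∫ s in Ioi 0, s ^ K * (((K:ℝ)+1) / (s+c) ^ (K+2) - 1 / (s+c) ^ (K+1) + 1 / (s+c+1) ^ (K+1))
      = 1 / c - (Real.log (c+1) - Real.log c) := by
  set g : ℝ → ℝ := fun s =>
    s ^ K * (((K:ℝ)+1) / (s+c) ^ (K+2) - 1 / (s+c) ^ (K+1) + 1 / (s+c+1) ^ (K+1)) with hg
  set Φ : ℝ → ℝ := fun s =>
    (s/(s+c)) ^ (K+1) / c + (Real.log (s+c+1) - Real.log (s+c))
      + ∑ j ∈ Finset.range K, ((s/(s+c)) ^ (j+1) - (s/(s+c+1)) ^ (j+1)) / (j+1) with hΦ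
  have hderiv : ∀ s ∈ Ici (0:ℝ), HasDerivAt Φ (g s) s := by
    intro s hs
    have hs0 : (0:ℝ) ≤ s := hs
    have ha : (0:ℝ) < s + c := by linarith
    have hb : (0:ℝ) < s + c + 1 := by linarith
    have hb' : (0:ℝ) < s + (c+1) := by linarith
    have h1 : HasDerivAt (fun t => (t/(t+c)) ^ (K+1) / c)
        (((K:ℝ)+1) * s^K / (s+c)^(K+2)) s := by
      have := (pow_div_deriv c s ha K).div_const c
      refine this.congr_deriv ?_; symm
      field_simp
    have h2 : HasDerivAt (fun t => Real.log (t+c+1) - Real.log (t+c))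
        (1/(s+c+1) - 1/(s+c)) s := by
      have hl1 : HasDerivAt (fun t : ℝ => Real.log (t+c+1)) (1/(s+c+1)) s := by
        have := (Real.hasDerivAt_log hb.ne').comp s
          (((hasDerivAt_id s).add_const c).add_const 1)
        simpa [one_div, Function.comp_def] using this
      have hl2 : HasDerivAt (fun t : ℝ => Real.log (t+c)) (1/(s+c)) s := by
        have := (Real.hasDerivAt_log ha.ne').comp s ((hasDerivAt_id s).add_const c)
        simpa [one_div, Function.comp_def] using this
      exact hl1.sub hl2
    have h3 : HasDerivAt (fun t => ∑ j ∈ Finset.range K,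
        ((t/(t+c)) ^ (j+1) - (t/(t+c+1)) ^ (j+1)) / (j+1))
        (∑ j ∈ Finset.range K,
          (s^j * (1/(s+c)^(j+1) - 1/(s+c+1)^(j+1))
            - s^(j+1) * (1/(s+c)^(j+2) - 1/(s+c+1)^(j+2)))) s := by
      apply HasDerivAt.fun_sum
      intro j hj
      have hj1 := pow_div_deriv c s ha j
      have hj2 := pow_div_deriv (c+1) s hb' j
      simp only [← add_assoc] at hj2
      have := (hj1.sub hj2).div_const ((j:ℝ)+1)
      refine this.congr_deriv ?_; symm
      have hj3 : ((j:ℝ)+1) ≠ 0 := by positivity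
      field_simp
      ring
    have hsum : HasDerivAt Φ
        (((K:ℝ)+1) * s^K / (s+c)^(K+2) + (1/(s+c+1) - 1/(s+c))
          + ∑ j ∈ Finset.range K,
            (s^j * (1/(s+c)^(j+1) - 1/(s+c+1)^(j+1))
              - s^(j+1) * (1/(s+c)^(j+2) - 1/(s+c+1)^(j+2)))) s := (h1.add h2).add h3
    have htel : ∑ j ∈ Finset.range K,
        (s^j * (1/(s+c)^(j+1) - 1/(s+c+1)^(j+1))
          - s^(j+1) * (1/(s+c)^(j+2) - 1/(s+c+1)^(j+2)))
        = (1/(s+c) - 1/(s+c+1)) - s^K * (1/(s+c)^(K+1) - 1/(s+c+1)^(K+1)) := by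
      have := Finset.sum_range_sub' (fun j => s^j * (1/(s+c)^(j+1) - 1/(s+c+1)^(j+1))) K
      simp only [pow_zero, one_mul, pow_one] at this
      simpa using this
    rw [htel] at hsum
    refine hsum.congr_deriv ?_; symm
    rw [hg]
    field_simp
    ring
  have hpos : ∀ s ∈ Ioi (0:ℝ), 0 ≤ g s :=
    fun s hs => g_nonneg K c s hc (le_of_lt hs)
  have hlim : Tendsto Φ atTop (𝓝 (1/c)) := by
    have hu : ∀ d : ℝ, Tendsto (fun s : ℝ => s/(s+d)) atTop (𝓝 1) := by
      intro d
      have he : (fun s : ℝ => s/(s+d)) =ᶠ[atTop] fun s => 1/(1+d/s) := by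
        filter_upwards [eventually_gt_atTop (max 0 (-d)), eventually_gt_atTop 0] with s hs hs0
        have hsd : 0 < s + d := by
          have := lt_of_le_of_lt (le_max_right 0 (-d)) hs; linarith
        have h1d : 1 + d/s = (s+d)/s := by field_simp
        rw [h1d, one_div_div]
      rw [tendsto_congr' he]
      have hd0 : Tendsto (fun s : ℝ => d / s) atTop (𝓝 0) :=
        Tendsto.div_atTop tendsto_const_nhds tendsto_id
      have h2 : Tendsto (fun s : ℝ => 1 + d/s) atTop (𝓝 1) := by
        simpa using (tendsto_const_nhds (x := (1:ℝ)) (f := atTop)).add hd0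
      simpa using h2.inv₀ (by norm_num)
    have t1 : Tendsto (fun s => (s/(s+c)) ^ (K+1) / c) atTop (𝓝 (1/c)) := by
      simpa using ((hu c).pow (K+1)).div_const c
    have t2 : Tendsto (fun s => Real.log (s+c+1) - Real.log (s+c)) atTop (𝓝 0) := by
      have he : (fun s : ℝ => Real.log (s+c+1) - Real.log (s+c))
          =ᶠ[atTop] fun s => Real.log ((s+c+1)/(s+c)) := by
        filter_upwards [eventually_gt_atTop 0] with s hs
        rw [Real.log_div (by linarith) (by linarith)]
      rw [tendsto_congr' he]
      have harg : Tendsto (fun s : ℝ => (s+c+1)/(s+c)) atTop (𝓝 1) := by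
        have he2 : (fun s : ℝ => (s+c+1)/(s+c)) =ᶠ[atTop] fun s => 1 + 1/(s+c) := by
          filter_upwards [eventually_gt_atTop 0] with s hs
          field_simp
        rw [tendsto_congr' he2]
        have hd0 : Tendsto (fun s : ℝ => (s+c)⁻¹) atTop (𝓝 0) :=
          (tendsto_atTop_add_const_right _ c tendsto_id).inv_tendsto_atTop
        simpa [one_div] using (tendsto_const_nhds (x := (1:ℝ)) (f := atTop)).add hd0
      have := (Real.continuousAt_log (by norm_num : (1:ℝ) ≠ 0)).tendsto.comp harg
      simpa [Function.comp_def] using this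
    have t3 : Tendsto (fun s => ∑ j ∈ Finset.range K,
        ((s/(s+c)) ^ (j+1) - (s/(s+c+1)) ^ (j+1)) / (j+1)) atTop (𝓝 0) := by
      have h3 : Tendsto (fun s => ∑ j ∈ Finset.range K,
          ((s/(s+c)) ^ (j+1) - (s/(s+c+1)) ^ (j+1)) / (j+1)) atTop
          (𝓝 (∑ j ∈ Finset.range K, ((1:ℝ)^(j+1) - 1^(j+1))/(j+1))) := by
        apply tendsto_finset_sum
        intro j hj
        have hucc : Tendsto (fun s : ℝ => s/(s+c+1)) atTop (𝓝 1) := by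
          have := hu (c+1); simp only [← add_assoc] at this; exact this
        exact ((((hu c).pow (j+1)).sub (hucc.pow (j+1))).div_const _)
      simpa using h3
    have hfin : Tendsto Φ atTop (𝓝 (1/c + 0 + 0)) := (t1.add t2).add t3
    simpa using hfin
  have key := integral_Ioi_of_hasDerivAt_of_nonneg' hderiv hpos hlim
  have hΦ0 : Φ 0 = Real.log (c+1) - Real.log c := by
    rw [hΦ]
    simp
  refine ⟨integrableOn_Ioi_deriv_of_nonneg' hderiv hpos hlim, ?_⟩
  rw [key, hΦ0]


lemma cn_nonneg (n : ℕ) : 0 ≤ 1/((n:ℝ)+1) - (Real.log ((n:ℝ)+2) - Real.log ((n:ℝ)+1)) := by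
  have h1 : (0:ℝ) < (n:ℝ)+1 := by positivity
  have h2 : Real.log ((n:ℝ)+2) - Real.log ((n:ℝ)+1) = Real.log (((n:ℝ)+2)/((n:ℝ)+1)) := by
    rw [Real.log_div (by positivity) (by positivity)]
  rw [h2]
  have h3 : Real.log (((n:ℝ)+2)/((n:ℝ)+1)) ≤ ((n:ℝ)+2)/((n:ℝ)+1) - 1 :=
    Real.log_le_sub_one_of_pos (by positivity)
  have h4 : ((n:ℝ)+2)/((n:ℝ)+1) - 1 = 1/((n:ℝ)+1) := by
    rw [div_sub_one (by positivity)]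
    norm_num
  linarith

/-- partial sums of `c n` are the Euler–Mascheroni sequence -/
lemma cn_partial (N : ℕ) :
    ∑ n ∈ Finset.range N, (1/((n:ℝ)+1) - (Real.log ((n:ℝ)+2) - Real.log ((n:ℝ)+1)))
      = Real.eulerMascheroniSeq N := by
  rw [Finset.sum_sub_distrib]
  have h1 : ∑ n ∈ Finset.range N, (Real.log ((n:ℝ)+2) - Real.log ((n:ℝ)+1))
      = Real.log ((N:ℝ)+1) := by
    have h := Finset.sum_range_sub (fun n => Real.log ((n:ℝ)+1)) N
    norm_num at h
    rw [← h, Finset.sum_sub_distrib]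
    congr 1
    apply Finset.sum_congr rfl
    intro n hn
    ring_nf
  rw [h1]
  have h2 : ∑ n ∈ Finset.range N, (1/((n:ℝ)+1)) = (harmonic N : ℝ) := by
    rw [harmonic]
    push_cast
    apply Finset.sum_congr rfl
    intro n hn
    rw [one_div]
  rw [h2, Real.eulerMascheroniSeq]

lemma cn_tsum : ∑' n : ℕ, ENNReal.ofReal (1/((n:ℝ)+1) - (Real.log ((n:ℝ)+2) - Real.log ((n:ℝ)+1)))
    = ENNReal.ofReal Real.eulerMascheroniConstant := by
  rw [ENNReal.tsum_eq_iSup_nat]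
  have hsum : ∀ N : ℕ, ∑ n ∈ Finset.range N,
      ENNReal.ofReal (1/((n:ℝ)+1) - (Real.log ((n:ℝ)+2) - Real.log ((n:ℝ)+1)))
      = ENNReal.ofReal (Real.eulerMascheroniSeq N) := by
    intro N
    rw [← ENNReal.ofReal_sum_of_nonneg (fun n _ => cn_nonneg n), cn_partial]
  simp only [hsum]
  have hmono : Monotone (fun N : ℕ => ENNReal.ofReal (Real.eulerMascheroniSeq N)) :=
    fun a b hab => ENNReal.ofReal_le_ofReal
      (Real.strictMono_eulerMascheroniSeq.monotone hab)
  have htend : Tendsto (fun N : ℕ => ENNReal.ofReal (Real.eulerMascheroniSeq N)) atTop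
      (𝓝 (ENNReal.ofReal Real.eulerMascheroniConstant)) :=
    (ENNReal.continuous_ofReal.tendsto _).comp Real.tendsto_eulerMascheroniSeq
  exact tendsto_nhds_unique (tendsto_atTop_iSup hmono) htend

-- 1D rpow integral on (0,1)
lemma rpow_Ioo (r : ℝ) (hr : 0 < r) :
    IntegrableOn (fun t : ℝ => t ^ r) (Ioo (0:ℝ) 1) ∧
    ∫ t in Ioo (0:ℝ) 1, t ^ r = 1/(r+1) := by
  have hii : IntervalIntegrable (fun t : ℝ => t ^ r) volume 0 1 :=
    intervalIntegral.intervalIntegrable_rpow' (by linarith)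
  constructor
  · have := (intervalIntegrable_iff_integrableOn_Ioc_of_le zero_le_one).mp hii
    exact this.mono_set Ioo_subset_Ioc_self
  · rw [← integral_Ioc_eq_integral_Ioo,
      ← intervalIntegral.integral_of_le zero_le_one,
      integral_rpow (Or.inl (by linarith))]
    rw [Real.one_rpow, Real.zero_rpow (by linarith : r + 1 ≠ 0)]
    norm_num

-- cube product integral
lemma cube_prod (m : ℕ) (f : Fin m → ℝ → ℝ) (hi : ∀ i, IntegrableOn (f i) (Ioo (0:ℝ) 1)) :
    IntegrableOn (fun x : Fin m → ℝ => ∏ i, f i (x i))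
      (Set.univ.pi fun _ : Fin m => Ioo (0:ℝ) 1) ∧
    ∫ x in Set.univ.pi (fun _ : Fin m => Ioo (0:ℝ) 1), ∏ i, f i (x i)
      = ∏ i, ∫ t in Ioo (0:ℝ) 1, f i t := by
  have hcube : MeasurableSet (Set.univ.pi fun _ : Fin m => Ioo (0:ℝ) 1) :=
    MeasurableSet.univ_pi (fun i => measurableSet_Ioo)
  have hind : (Set.univ.pi fun _ : Fin m => Ioo (0:ℝ) 1).indicator
      (fun x : Fin m → ℝ => ∏ i, f i (x i))
      = fun x : Fin m → ℝ => ∏ i, (Ioo (0:ℝ) 1).indicator (f i) (x i) := by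
    funext x
    by_cases hx : x ∈ Set.univ.pi fun _ : Fin m => Ioo (0:ℝ) 1
    · rw [Set.indicator_of_mem hx]
      apply Finset.prod_congr rfl
      intro i _
      rw [Set.indicator_of_mem (hx i (Set.mem_univ i))]
    · rw [Set.indicator_of_notMem hx]
      obtain ⟨i, hi0⟩ : ∃ i, x i ∉ Ioo (0:ℝ) 1 := by
        by_contra h
        push_neg at h
        exact hx (fun i _ => h i)
      symm
      apply Finset.prod_eq_zero (Finset.mem_univ i)
      rw [Set.indicator_of_notMem hi0]
    
  have hint : ∀ i, Integrable ((Ioo (0:ℝ) 1).indicator (f i)) :=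
    fun i => (integrable_indicator_iff measurableSet_Ioo).mpr (hi i)
  constructor
  · rw [← integrable_indicator_iff hcube, hind]
    exact Integrable.fintype_prod hint
  · rw [← integral_indicator hcube, hind,
      MeasureTheory.integral_fintype_prod_volume_eq_prod (f := fun i => (Ioo (0:ℝ) 1).indicator (f i))]
    exact Finset.prod_congr rfl fun i _ => integral_indicator measurableSet_Ioo

lemma card_filter_le (m j : ℕ) (hj : j + 1 ≤ m) :
    (Finset.univ.filter fun i : Fin m => (i : ℕ) ≤ j).card = j + 1 := by
  rw [Finset.card_filter]
  rw [Fin.sum_univ_eq_sum_range (fun i => if i ≤ j then 1 else 0) m]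
  rw [← Finset.card_filter]
  have : (Finset.range m).filter (fun i => i ≤ j) = Finset.range (j+1) := by
    ext i
    simp only [Finset.mem_filter, Finset.mem_range]
    omega
  rw [this, Finset.card_range]


section pieces

variable (m : ℕ) (ns : ℝ)

lemma piece0 (hns : 0 < ns) :
    IntegrableOn (fun x : Fin m → ℝ => (∏ i, x i) ^ ns)
      (Set.univ.pi fun _ : Fin m => Ioo (0:ℝ) 1) ∧
    ∫ x in Set.univ.pi (fun _ : Fin m => Ioo (0:ℝ) 1), (∏ i, x i) ^ ns
      = 1/(ns+1)^m := by
  have hcube : MeasurableSet (Set.univ.pi fun _ : Fin m => Ioo (0:ℝ) 1) :=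
    MeasurableSet.univ_pi (fun i => measurableSet_Ioo)
  have hEq : EqOn (fun x : Fin m → ℝ => ∏ i, (x i) ^ ns)
      (fun x : Fin m → ℝ => (∏ i, x i) ^ ns)
      (Set.univ.pi fun _ : Fin m => Ioo (0:ℝ) 1) := by
    intro x hx
    exact Real.finset_prod_rpow Finset.univ _ (fun i _ => (hx i (Set.mem_univ i)).1.le) ns
  obtain ⟨hI, hV⟩ := cube_prod m (fun _ t => t ^ ns) (fun i => (rpow_Ioo ns hns).1)
  refine ⟨hI.congr_fun hEq hcube, ?_⟩
  rw [← setIntegral_congr_fun hcube hEq, hV]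
  rw [(rpow_Ioo ns hns).2, Finset.prod_const, Finset.card_univ, Fintype.card_fin, one_div,
    one_div, ← inv_pow]

lemma piecej (hns : 0 < ns) (j : ℕ) (hj : j + 1 ≤ m) :
    IntegrableOn (fun x : Fin m → ℝ => (∏ i, x i) ^ ns * partialProd m x j)
      (Set.univ.pi fun _ : Fin m => Ioo (0:ℝ) 1) ∧
    ∫ x in Set.univ.pi (fun _ : Fin m => Ioo (0:ℝ) 1), (∏ i, x i) ^ ns * partialProd m x j
      = 1/((ns+2)^(j+1) * (ns+1)^(m-(j+1))) := by
  have hcube : MeasurableSet (Set.univ.pi fun _ : Fin m => Ioo (0:ℝ) 1) :=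
    MeasurableSet.univ_pi (fun i => measurableSet_Ioo)
  set f : Fin m → ℝ → ℝ := fun i t => if (i:ℕ) ≤ j then t ^ (ns+1) else t ^ ns with hf
  have hfi : ∀ i, IntegrableOn (f i) (Ioo (0:ℝ) 1) := by
    intro i
    rw [hf]
    by_cases hc : (i:ℕ) ≤ j
    · simpa [hc] using (rpow_Ioo (ns+1) (by linarith)).1
    · simpa [hc] using (rpow_Ioo ns hns).1
  have hEq : EqOn (fun x : Fin m → ℝ => ∏ i, f i (x i))
      (fun x : Fin m → ℝ => (∏ i, x i) ^ ns * partialProd m x j)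
      (Set.univ.pi fun _ : Fin m => Ioo (0:ℝ) 1) := by
    intro x hx
    have hxp : ∀ i, 0 < x i := fun i => (hx i (Set.mem_univ i)).1
    simp only
    have h1 : ∀ i : Fin m, f i (x i) = (x i) ^ ns * (if (i:ℕ) ≤ j then x i else 1) := by
      intro i
      rw [hf]
      by_cases hc : (i:ℕ) ≤ j
      · simp only [hc, if_true]
        rw [Real.rpow_add (hxp i), Real.rpow_one]
      · simp [hc]
    rw [Finset.prod_congr rfl (fun i _ => h1 i), Finset.prod_mul_distrib,
      Real.finset_prod_rpow Finset.univ _ (fun i _ => (hxp i).le) ns]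
    congr 1
    rw [partialProd, Finset.prod_filter]
  obtain ⟨hI, hV⟩ := cube_prod m f hfi
  refine ⟨hI.congr_fun hEq hcube, ?_⟩
  rw [← setIntegral_congr_fun hcube hEq, hV]
  have hval : ∀ i : Fin m, ∫ t in Ioo (0:ℝ) 1, f i t
      = if (i:ℕ) ≤ j then 1/(ns+2) else 1/(ns+1) := by
    intro i
    rw [hf]
    by_cases hc : (i:ℕ) ≤ j
    · simp only [hc, if_true]
      rw [(rpow_Ioo (ns+1) (by linarith)).2]
      ring_nf
    · simp only [hc, if_false]
      exact (rpow_Ioo ns hns).2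
  rw [Finset.prod_congr rfl (fun i _ => hval i), Finset.prod_ite, Finset.prod_const,
    Finset.prod_const, card_filter_le m j hj]
  have hcard : (Finset.univ.filter fun i : Fin m => ¬ (i:ℕ) ≤ j).card = m - (j+1) := by
    have h1 := Finset.card_filter_add_card_filter_not
      (s := (Finset.univ : Finset (Fin m))) (p := fun i : Fin m => (i:ℕ) ≤ j)
    rw [card_filter_le m j hj, Finset.card_univ, Fintype.card_fin] at h1
    omega
  rw [hcard, div_pow, div_pow, one_pow, one_pow, div_mul_div_comm, one_mul]

end pieces


lemma cube_A (K : ℕ) (ns : ℝ) (hns : 0 < ns) :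
    IntegrableOn (fun x : Fin (K+2) → ℝ =>
        (∏ i, x i) ^ ns * (((K:ℝ)+1) - ∑ j ∈ Finset.range (K+1), partialProd (K+2) x j))
      (Set.univ.pi fun _ : Fin (K+2) => Ioo (0:ℝ) 1) ∧
    ∫ x in Set.univ.pi (fun _ : Fin (K+2) => Ioo (0:ℝ) 1),
        (∏ i, x i) ^ ns * (((K:ℝ)+1) - ∑ j ∈ Finset.range (K+1), partialProd (K+2) x j)
      = (((K:ℝ)+1) / (ns+1) ^ (K+2) - 1/(ns+1)^(K+1) + 1/(ns+2)^(K+1)) := by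
  have hfun : (fun x : Fin (K+2) → ℝ =>
      (∏ i, x i) ^ ns * (((K:ℝ)+1) - ∑ j ∈ Finset.range (K+1), partialProd (K+2) x j))
      = fun x : Fin (K+2) → ℝ =>
        ((K:ℝ)+1) * ((∏ i, x i) ^ ns)
          - ∑ j ∈ Finset.range (K+1), ((∏ i, x i) ^ ns * partialProd (K+2) x j) := by
    funext x
    rw [mul_sub, Finset.mul_sum]
    ring_nf
  have hIj : ∀ j ∈ Finset.range (K+1),
      IntegrableOn (fun x : Fin (K+2) → ℝ => (∏ i, x i) ^ ns * partialProd (K+2) x j)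
        (Set.univ.pi fun _ : Fin (K+2) => Ioo (0:ℝ) 1) :=
    fun j hj => (piecej (K+2) ns hns j (by have := Finset.mem_range.mp hj; omega)).1
  have hI : IntegrableOn (fun x : Fin (K+2) → ℝ =>
      ((K:ℝ)+1) * ((∏ i, x i) ^ ns)
        - ∑ j ∈ Finset.range (K+1), ((∏ i, x i) ^ ns * partialProd (K+2) x j))
      (Set.univ.pi fun _ : Fin (K+2) => Ioo (0:ℝ) 1) := by
    apply Integrable.sub ((piece0 (K+2) ns hns).1.const_mul _)
    exact integrable_finset_sum _ hIj
  constructor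
  · rw [hfun]; exact hI
  rw [hfun]
  rw [integral_sub ((piece0 (K+2) ns hns).1.const_mul _) (integrable_finset_sum _ hIj),
    integral_const_mul, integral_finset_sum _ hIj, (piece0 (K+2) ns hns).2]
  have hvals : ∀ j ∈ Finset.range (K+1),
      ∫ x in Set.univ.pi (fun _ : Fin (K+2) => Ioo (0:ℝ) 1),
        (∏ i, x i) ^ ns * partialProd (K+2) x j
      = 1/((ns+2)^(j+1) * (ns+1)^(K+1-j)) := by
    intro j hj
    rw [(piecej (K+2) ns hns j (by have := Finset.mem_range.mp hj; omega)).2]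
    have he : K + 2 - (j+1) = K+1-j := by omega
    rw [he]
  rw [Finset.sum_congr rfl hvals]
  have := geom_tel (ns+1) (by linarith) (K+1)
  rw [show ns + 1 + 1 = ns + 2 by ring] at this
  rw [this]
  ring

lemma gamma1D (K : ℕ) {p : ℝ} (hp0 : 0 < p) (hp1 : p < 1) {q : ℝ} (hq : 0 ≤ q) (n : ℕ) :
    ∫⁻ s in Ioi (0:ℝ), ENNReal.ofReal (s ^ K / (K.factorial : ℝ) * p ^ ((n:ℝ)+s) * q)
      = ENNReal.ofReal (p ^ n * q / (-Real.log p) ^ (K+1)) := by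
  set r : ℝ := -Real.log p with hr
  have hrpos : 0 < r := neg_pos.mpr (Real.log_neg hp0 hp1)
  have hfact : (0:ℝ) < (K.factorial : ℝ) := Nat.cast_pos.mpr K.factorial_pos
  -- pointwise rewrite of the integrand
  have hptw : ∀ s ∈ Ioi (0:ℝ),
      ENNReal.ofReal (s ^ K / (K.factorial : ℝ) * p ^ ((n:ℝ)+s) * q)
      = ENNReal.ofReal ((p ^ n * q / (K.factorial : ℝ)) * (s ^ K * Real.exp (-(r*s)))) := by
    intro s hs
    congr 1
    have h1 : p ^ ((n:ℝ)+s) = p ^ n * Real.exp (-(r*s)) := by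
      rw [Real.rpow_add hp0, Real.rpow_natCast]
      congr 1
      rw [Real.rpow_def_of_pos hp0, hr]
      ring_nf
    rw [h1]
    ring
  rw [setLIntegral_congr_fun_ae measurableSet_Ioi (Filter.Eventually.of_forall hptw)]
  have hint : IntegrableOn (fun s : ℝ => s ^ K * Real.exp (-(r*s))) (Ioi 0) := by
    have h0 := integrableOn_rpow_mul_exp_neg_mul_rpow
      (p := 1) (s := (K:ℝ)) (b := r)
      (lt_of_lt_of_le (by norm_num) (Nat.cast_nonneg K)) one_pos hrpos
    apply h0.congr_fun ?_ measurableSet_Ioi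
    intro s hs
    simp [Real.rpow_natCast]
  have hval : ∫ s in Ioi (0:ℝ), s ^ K * Real.exp (-(r*s)) = (K.factorial : ℝ) / r ^ (K+1) := by
    have h0 := Real.integral_rpow_mul_exp_neg_mul_Ioi
      (a := (K:ℝ)+1) (r := r) (by positivity) hrpos
    have hcongr : ∫ s in Ioi (0:ℝ), s ^ K * Real.exp (-(r*s))
        = ∫ t in Ioi (0:ℝ), t ^ (((K:ℝ)+1)-1) * Real.exp (-(r*t)) := by
      apply setIntegral_congr_fun measurableSet_Ioi
      intro s hs
      simp only [show ((K:ℝ)+1)-1 = (K:ℝ) by ring, Real.rpow_natCast]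
    rw [hcongr, h0, Real.Gamma_nat_eq_factorial,
      show ((K:ℝ)+1) = ((K+1:ℕ):ℝ) by push_cast; ring, Real.rpow_natCast]
    rw [one_div, inv_pow]
    field_simp
  have hlhs : ∫⁻ s in Ioi (0:ℝ),
      ENNReal.ofReal ((p ^ n * q / (K.factorial : ℝ)) * (s ^ K * Real.exp (-(r*s))))
      = ENNReal.ofReal (∫ s in Ioi (0:ℝ),
          (p ^ n * q / (K.factorial : ℝ)) * (s ^ K * Real.exp (-(r*s)))) := by
    rw [← ofReal_integral_eq_lintegral_ofReal (hint.const_mul _)]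
    apply ae_restrict_of_forall_mem measurableSet_Ioi
    intro s hs
    have : (0:ℝ) < s := hs
    positivity
  rw [hlhs, integral_const_mul, hval]
  congr 1
  field_simp


lemma geom_ofReal (K : ℕ) {p q : ℝ} (hp0 : 0 < p) (hp1 : p < 1) (hq : 0 ≤ q) :
    ∑' n : ℕ, ENNReal.ofReal (p ^ n * q / (-Real.log p) ^ (K+1))
      = ENNReal.ofReal (q / ((1 - p) * (-Real.log p) ^ (K+1))) := by
  set r : ℝ := -Real.log p with hr
  have hrpos : 0 < r := neg_pos.mpr (Real.log_neg hp0 hp1)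
  have hc : 0 ≤ q / r ^ (K+1) := by positivity
  have h1 : ∀ n : ℕ, ENNReal.ofReal (p ^ n * q / r ^ (K+1))
      = ENNReal.ofReal p ^ n * ENNReal.ofReal (q / r ^ (K+1)) := by
    intro n
    rw [← ENNReal.ofReal_pow hp0.le, ← ENNReal.ofReal_mul (by positivity)]
    congr 1
    ring
  rw [tsum_congr h1, ENNReal.tsum_mul_right, ENNReal.tsum_geometric]
  have h2 : (1 - ENNReal.ofReal p)⁻¹ = ENNReal.ofReal ((1-p)⁻¹) := by
    rw [← ENNReal.ofReal_one, ← ENNReal.ofReal_sub 1 hp0.le,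
      ENNReal.ofReal_inv_of_pos (by linarith)]
  rw [h2, ← ENNReal.ofReal_mul (inv_nonneg.mpr (by linarith : (0:ℝ) ≤ 1 - p))]
  congr 1
  field_simp


end auxiliary

section main
open Set Real Filter Topology
open scoped ENNReal NNReal

theorem euler_mascheroni_m_dim (m : ℕ) (hm : 1 < m) :
    Real.eulerMascheroniConstant
      = Nat.factorial (m - 2) *
        ∫ x in Set.univ.pi (fun _ : Fin m => Set.Ioo (0:ℝ) 1),
          (m - 1 - ∑ j ∈ Finset.range (m - 1), partialProd m x j) /
            ((1 - ∏ i, x i) * (-Real.log (∏ i, x i)) ^ (m - 1)) ∂volume := by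
  obtain ⟨K, rfl⟩ : ∃ K, m = K + 2 := ⟨m - 2, by omega⟩
  have hm1 : K + 2 - 1 = K + 1 := by omega
  have hm2 : K + 2 - 2 = K := by omega
  rw [hm1, hm2]
  set cube : Set (Fin (K+2) → ℝ) := Set.univ.pi fun _ : Fin (K+2) => Ioo (0:ℝ) 1 with hcub
  have hcube : MeasurableSet cube := MeasurableSet.univ_pi (fun i => measurableSet_Ioo)
  set N : (Fin (K+2) → ℝ) → ℝ :=
    fun x => ((K:ℝ)+1) - ∑ j ∈ Finset.range (K+1), partialProd (K+2) x j with hN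
  set F : (Fin (K+2) → ℝ) → ℝ :=
    fun x => N x / ((1 - ∏ i, x i) * (-Real.log (∏ i, x i)) ^ (K+1)) with hF
  have hFeq : ∀ x : Fin (K+2) → ℝ,
      ((K+2:ℕ):ℝ) - 1 - (∑ j ∈ Finset.range (K+1), partialProd (K+2) x j) = N x := by
    intro x
    rw [hN]
    push_cast
    ring
  have hstmt : ∫ x in cube,
      (((K+2:ℕ):ℝ) - 1 - ∑ j ∈ Finset.range (K+1), partialProd (K+2) x j) /
        ((1 - ∏ i, x i) * (-Real.log (∏ i, x i)) ^ (K+1))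
      = ∫ x in cube, F x := by
    apply integral_congr_ae
    filter_upwards with x
    simp only [hF]
    rw [← hFeq x]
  rw [hstmt]
  -- basic facts on the cube
  have hNmeas : Measurable N := by
    apply Measurable.sub measurable_const
    apply Finset.measurable_sum
    intro j _
    unfold partialProd
    exact Finset.measurable_prod _ (fun i _ => measurable_pi_apply i)
  have hpmeas : Measurable (fun x : Fin (K+2) → ℝ => ∏ i, x i) :=
    Finset.measurable_prod _ (fun i _ => measurable_pi_apply i)
  have hFmeas : Measurable F := by
    apply hNmeas.div
    exact (measurable_const.sub hpmeas).mul
      ((hpmeas.log.neg).pow_const _)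
  have hcubefacts : ∀ x ∈ cube, 0 < (∏ i, x i) ∧ (∏ i, x i) < 1 ∧ 0 ≤ N x := by
    intro x hx
    have hxi : ∀ i, x i ∈ Ioo (0:ℝ) 1 := fun i => hx i (Set.mem_univ i)
    refine ⟨Finset.prod_pos (fun i _ => (hxi i).1), ?_, ?_⟩
    · calc ∏ i, x i < ∏ _i : Fin (K+2), 1 :=
            Finset.prod_lt_prod_of_nonempty (fun i _ => (hxi i).1)
              (fun i _ => (hxi i).2) Finset.univ_nonempty
        _ = 1 := Finset.prod_const_one
    · rw [hN]
      simp only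
      have hsum : ∑ j ∈ Finset.range (K+1), partialProd (K+2) x j
          ≤ ∑ _j ∈ Finset.range (K+1), (1:ℝ) := by
        apply Finset.sum_le_sum
        intro j _
        exact Finset.prod_le_one (fun i _ => (hxi i).1.le) (fun i _ => (hxi i).2.le)
      rw [Finset.sum_const, Finset.card_range, nsmul_eq_mul, mul_one] at hsum
      push_cast at hsum ⊢
      linarith
  have hFnn : ∀ x ∈ cube, 0 ≤ F x := by
    intro x hx
    obtain ⟨hp0, hp1, hNx⟩ := hcubefacts x hx
    have hlog : 0 < -Real.log (∏ i, x i) := neg_pos.mpr (Real.log_neg hp0 hp1)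
    simp only [hF]
    have hd : 0 < (1 - ∏ i, x i) * (-Real.log (∏ i, x i)) ^ (K+1) :=
      mul_pos (by linarith) (pow_pos hlog _)
    exact div_nonneg hNx hd.le
  -- the W functions
  set W : ℕ → (Fin (K+2) → ℝ) → ℝ → ℝ≥0∞ := fun n x s =>
    ENNReal.ofReal (s ^ K / (K.factorial : ℝ)
      * Real.exp (((n:ℝ)+s) * Real.log (∏ i, x i)) * N x) with hW
  have hWcube : ∀ n : ℕ, ∀ x ∈ cube, ∀ s : ℝ, W n x s
      = ENNReal.ofReal (s ^ K / (K.factorial : ℝ) * (∏ i, x i) ^ ((n:ℝ)+s) * N x) := by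
    intro n x hx s
    obtain ⟨hp0, _, _⟩ := hcubefacts x hx
    rw [hW]
    simp only
    rw [Real.rpow_def_of_pos hp0, mul_comm (Real.log _)]
  have hWmeas : ∀ n : ℕ, Measurable (fun q : (Fin (K+2) → ℝ) × ℝ => W n q.1 q.2) := by
    intro n
    apply ENNReal.measurable_ofReal.comp
    apply Measurable.mul
    · apply Measurable.mul
      · exact ((measurable_snd.pow_const K).div_const _)
      · exact (((measurable_const.add measurable_snd)).mul
          ((hpmeas.comp measurable_fst).log)).exp
    · exact hNmeas.comp measurable_fst
  -- pointwise expansion on the cube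
  have hptw : ∀ x ∈ cube, ENNReal.ofReal (F x) = ∑' n : ℕ, ∫⁻ s in Ioi (0:ℝ), W n x s := by
    intro x hx
    obtain ⟨hp0, hp1, hNx⟩ := hcubefacts x hx
    calc ENNReal.ofReal (F x)
        = ∑' n : ℕ, ENNReal.ofReal ((∏ i, x i) ^ n * N x / (-Real.log (∏ i, x i)) ^ (K+1)) := by
          rw [geom_ofReal K hp0 hp1 hNx, hF]
      _ = ∑' n : ℕ, ∫⁻ s in Ioi (0:ℝ), W n x s := by
          apply tsum_congr
          intro n
          rw [← gamma1D K hp0 hp1 hNx n]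
          exact lintegral_congr (fun s => (hWcube n x hx s).symm)
  -- main lintegral computation
  have hγnn : (0:ℝ) ≤ Real.eulerMascheroniConstant := by
    have := Real.one_half_lt_eulerMascheroniConstant
    linarith
  have hKfac : (0:ℝ) < (K.factorial : ℝ) := Nat.cast_pos.mpr K.factorial_pos
  have hlin : ∫⁻ x in cube, ENNReal.ofReal (F x)
      = ENNReal.ofReal (Real.eulerMascheroniConstant / (K.factorial : ℝ)) := by
    rw [setLIntegral_congr_fun_ae hcube (Filter.Eventually.of_forall hptw)]
    rw [lintegral_tsum (fun n =>
      ((hWmeas n).lintegral_prod_right' (ν := volume.restrict (Ioi 0))).aemeasurable)]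
    have hswap : ∀ n : ℕ, ∫⁻ x in cube, ∫⁻ s in Ioi (0:ℝ), W n x s
        = ∫⁻ s in Ioi (0:ℝ), ∫⁻ x in cube, W n x s :=
      fun n => lintegral_lintegral_swap ((hWmeas n).aemeasurable)
    simp_rw [hswap]
    have hinner : ∀ n : ℕ, ∫⁻ s in Ioi (0:ℝ), ∫⁻ x in cube, W n x s
        = ENNReal.ofReal ((1/(K.factorial : ℝ)) *
            (1/((n:ℝ)+1) - (Real.log ((n:ℝ)+2) - Real.log ((n:ℝ)+1)))) := by
      intro n
      have hstep : ∀ s ∈ Ioi (0:ℝ), ∫⁻ x in cube, W n x s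
          = ENNReal.ofReal ((1/(K.factorial : ℝ)) *
              (s ^ K * (((K:ℝ)+1) / (s+((n:ℝ)+1)) ^ (K+2) - 1/(s+((n:ℝ)+1))^(K+1)
                + 1/(s+((n:ℝ)+1)+1)^(K+1)))) := by
        intro s hs
        have hs0 : (0:ℝ) < s := hs
        have hns : (0:ℝ) < (n:ℝ) + s := by positivity
        have hWx : ∀ x ∈ cube, W n x s
            = ENNReal.ofReal ((s ^ K / (K.factorial : ℝ)) *
                ((∏ i, x i) ^ ((n:ℝ)+s) * N x)) := by
          intro x hx
          rw [hWcube n x hx s]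
          congr 1
          ring
        rw [setLIntegral_congr_fun_ae hcube (Filter.Eventually.of_forall hWx)]
        have hnn : 0 ≤ᵐ[volume.restrict cube] fun x : Fin (K+2) → ℝ =>
            (s ^ K / (K.factorial : ℝ)) * ((∏ i, x i) ^ ((n:ℝ)+s) * N x) := by
          apply ae_restrict_of_forall_mem hcube
          intro x hx
          obtain ⟨hp0, hp1, hNx⟩ := hcubefacts x hx
          have h1 : (0:ℝ) ≤ (∏ i, x i) ^ ((n:ℝ)+s) := Real.rpow_nonneg hp0.le _
          positivity
        rw [← ofReal_integral_eq_lintegral_ofReal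
          (((cube_A K ((n:ℝ)+s) hns).1.const_mul _)) hnn]
        rw [integral_const_mul, (cube_A K ((n:ℝ)+s) hns).2]
        congr 1
        rw [show (n:ℝ)+s+1 = s+((n:ℝ)+1) by ring, show (n:ℝ)+s+2 = s+((n:ℝ)+1)+1 by ring]
        field_simp
      rw [setLIntegral_congr_fun_ae measurableSet_Ioi (Filter.Eventually.of_forall hstep)]
      have hnn2 : 0 ≤ᵐ[volume.restrict (Ioi 0)] fun s : ℝ =>
          (1/(K.factorial : ℝ)) *
            (s ^ K * (((K:ℝ)+1) / (s+((n:ℝ)+1)) ^ (K+2) - 1/(s+((n:ℝ)+1))^(K+1)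
              + 1/(s+((n:ℝ)+1)+1)^(K+1))) := by
        apply ae_restrict_of_forall_mem measurableSet_Ioi
        intro s hs
        have := g_nonneg K ((n:ℝ)+1) s (by positivity) (le_of_lt hs)
        positivity
      rw [← ofReal_integral_eq_lintegral_ofReal
        ((scalar_integral K ((n:ℝ)+1) (by positivity)).1.const_mul _) hnn2]
      rw [integral_const_mul, (scalar_integral K ((n:ℝ)+1) (by positivity)).2,
        show (n:ℝ)+1+1 = (n:ℝ)+2 by ring]
    simp_rw [hinner]
    have hsplit : ∀ n : ℕ, ENNReal.ofReal ((1/(K.factorial : ℝ)) *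
        (1/((n:ℝ)+1) - (Real.log ((n:ℝ)+2) - Real.log ((n:ℝ)+1))))
        = ENNReal.ofReal (1/(K.factorial : ℝ)) *
          ENNReal.ofReal (1/((n:ℝ)+1) - (Real.log ((n:ℝ)+2) - Real.log ((n:ℝ)+1))) := by
      intro n
      rw [ENNReal.ofReal_mul (by positivity)]
    simp_rw [hsplit]
    rw [ENNReal.tsum_mul_left, cn_tsum, ← ENNReal.ofReal_mul (by positivity)]
    congr 1
    field_simp
  -- finish
  rw [integral_eq_lintegral_of_nonneg_ae
    (ae_restrict_of_forall_mem hcube hFnn) hFmeas.aestronglyMeasurable,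
    hlin, ENNReal.toReal_ofReal (by positivity)]
  field_simp

end main
end

section
/- Euler's constant γ equals ∫₀¹∫₀¹ (1-x₁)/((1 - x₁x₂)(-ln(x₁x₂))) dx₁ dx₂. -/
open MeasureTheory

open Real Set Filter Topology ENNReal in
private noncomputable def sondowH (u : ℝ) : ℝ := 1 / (1 - u) + 1 / Real.log u

open Real Set Filter Topology ENNReal in
private noncomputable def sondowG (u : ℝ) : ℝ := ((1 - u) * (-Real.log u))⁻¹

section aux

open Real Set Filter Topology ENNReal

private lemma log_neg' {u : ℝ} (hu : u ∈ Ioo (0:ℝ) 1) : Real.log u < 0 :=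
  Real.log_neg hu.1 hu.2

private lemma one_sub_le_neg_log {u : ℝ} (hu : u ∈ Ioo (0:ℝ) 1) : 1 - u ≤ -Real.log u := by
  have := Real.log_le_sub_one_of_pos hu.1
  linarith

private lemma neg_log_le {u : ℝ} (hu : u ∈ Ioo (0:ℝ) 1) : -Real.log u ≤ (1 - u) / u := by
  have hu0 := hu.1
  have h := Real.log_le_sub_one_of_pos (show (0:ℝ) < u⁻¹ by positivity)
  rw [Real.log_inv] at h
  have : u⁻¹ - 1 = (1 - u) / u := by field_simp
  linarith

private lemma sondowH_nonneg {u : ℝ} (hu : u ∈ Ioo (0:ℝ) 1) : 0 ≤ sondowH u := by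
  have h1 : (0:ℝ) < 1 - u := by linarith [hu.2]
  have h2 : (0:ℝ) < -Real.log u := by linarith [log_neg' hu]
  have h3 := one_sub_le_neg_log hu
  have : 1 / (-Real.log u) ≤ 1 / (1 - u) := one_div_le_one_div_of_le h1 h3
  have : 1 / Real.log u = -(1 / (-Real.log u)) := by
    rw [one_div, one_div, ← inv_neg, neg_neg]
  unfold sondowH
  rw [this]
  linarith [one_div_le_one_div_of_le h1 h3]

private lemma sondowH_le_one {u : ℝ} (hu : u ∈ Ioo (0:ℝ) 1) : sondowH u ≤ 1 := by
  have h1 : (0:ℝ) < 1 - u := by linarith [hu.2]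
  have h2 : (0:ℝ) < -Real.log u := by linarith [log_neg' hu]
  have h3 := neg_log_le hu
  have hu0 := hu.1
  have h4 : (0:ℝ) < (1 - u) / u := by positivity
  have h5 : 1 / ((1 - u) / u) ≤ 1 / (-Real.log u) := one_div_le_one_div_of_le h2 h3
  rw [one_div_div] at h5
  have h6 : 1 / Real.log u = -(1 / (-Real.log u)) := by
    rw [one_div, one_div, ← inv_neg, neg_neg]
  have h7 : 1 / (1 - u) - u / (1 - u) = 1 := by field_simp
  unfold sondowH
  rw [h6]
  linarith

private lemma sondowH_measurable : Measurable sondowH := by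
  unfold sondowH
  exact (measurable_const.div (measurable_const.sub measurable_id)).add
    (measurable_const.div Real.measurable_log)

end aux

section aux2

open Real Set Filter Topology ENNReal intervalIntegral

private lemma pow_sub_bound {u : ℝ} (hu : u ∈ Ioo (0:ℝ) 1) (n : ℕ) :
    1 - u ^ n ≤ n * (1 - u) := by
  have h := one_add_mul_le_pow (a := u - 1) (by nlinarith [hu.1] : (-2:ℝ) ≤ u - 1) n
  have : 1 + (u - 1) = u := by ring
  rw [this] at h
  nlinarith

private lemma q_nonneg {u : ℝ} (hu : u ∈ Ioo (0:ℝ) 1) (n : ℕ) :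
    0 ≤ (1 - u ^ n) / (-Real.log u) := by
  have h2 : (0:ℝ) < -Real.log u := by linarith [log_neg' hu]
  have h1 : u ^ n ≤ 1 := pow_le_one₀ hu.1.le hu.2.le
  exact div_nonneg (by linarith) h2.le

private lemma q_le {u : ℝ} (hu : u ∈ Ioo (0:ℝ) 1) (n : ℕ) :
    (1 - u ^ n) / (-Real.log u) ≤ n := by
  have h2 : (0:ℝ) < -Real.log u := by linarith [log_neg' hu]
  rw [div_le_iff₀ h2]
  calc 1 - u ^ n ≤ n * (1 - u) := pow_sub_bound hu n
    _ ≤ n * (-Real.log u) := by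
        have := one_sub_le_neg_log hu
        exact mul_le_mul_of_nonneg_left this (Nat.cast_nonneg n)

private lemma exp_interval_int {u : ℝ} (hu : u ∈ Ioo (0:ℝ) 1) (n : ℕ) :
    ∫ s in (0:ℝ)..(n:ℝ), Real.exp (Real.log u * s) = (1 - u ^ n) / (-Real.log u) := by
  have hc : Real.log u ≠ 0 := by linarith [log_neg' hu]
  rw [intervalIntegral.integral_comp_mul_left (fun x => Real.exp x) hc]
  rw [integral_exp]
  rw [mul_zero, Real.exp_zero, mul_comm (Real.log u) (n:ℝ), Real.exp_nat_mul,
    Real.exp_log hu.1]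
  rw [smul_eq_mul, div_neg, ← neg_div, neg_sub, inv_mul_eq_div]

private lemma rpow_int_Ioo {s : ℝ} (hs : 0 < s) :
    ∫ u in Ioo (0:ℝ) 1, u ^ s = 1 / (s + 1) := by
  rw [← MeasureTheory.integral_Ioc_eq_integral_Ioo, ← intervalIntegral.integral_of_le zero_le_one]
  rw [integral_rpow (Or.inl (by linarith))]
  rw [Real.one_rpow, Real.zero_rpow (by linarith)]
  ring

private lemma rpow_integrableOn {s : ℝ} (hs : 0 < s) :
    IntegrableOn (fun u : ℝ => u ^ s) (Ioo (0:ℝ) 1) volume := by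
  have h := (intervalIntegrable_rpow (μ := volume) (a := 0) (b := 1) (r := s) (Or.inl hs.le))
  rw [intervalIntegrable_iff_integrableOn_Ioo_of_le zero_le_one] at h
  exact h

private lemma Q_eq (n : ℕ) :
    ∫⁻ u in Ioo (0:ℝ) 1, ENNReal.ofReal ((1 - u ^ n) / (-Real.log u)) ∂volume
      = ENNReal.ofReal (Real.log (n + 1)) := by
  have step1 : ∫⁻ u in Ioo (0:ℝ) 1, ENNReal.ofReal ((1 - u ^ n) / (-Real.log u)) ∂volume
      = ∫⁻ u in Ioo (0:ℝ) 1, ∫⁻ s in Ioo (0:ℝ) (n:ℝ),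
          ENNReal.ofReal (Real.exp (Real.log u * s)) ∂volume ∂volume := by
    refine setLIntegral_congr_fun measurableSet_Ioo ?_
    intro u hu
    dsimp only
    rw [← MeasureTheory.ofReal_integral_eq_lintegral_ofReal]
    · rw [MeasureTheory.integral_Ioc_eq_integral_Ioo.symm,
        ← intervalIntegral.integral_of_le (Nat.cast_nonneg n), exp_interval_int hu]
    · have : IntegrableOn (fun s : ℝ => Real.exp (Real.log u * s)) (Icc (0:ℝ) (n:ℝ)) volume :=
        (Real.continuous_exp.comp (continuous_const.mul continuous_id)).integrableOn_Icc
      exact this.mono_set Ioo_subset_Icc_self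
    · exact Filter.Eventually.of_forall (fun s => Real.exp_nonneg _)
  rw [step1]
  have meas : AEMeasurable (Function.uncurry fun (u s : ℝ) =>
      ENNReal.ofReal (Real.exp (Real.log u * s)))
      ((volume.restrict (Ioo (0:ℝ) 1)).prod (volume.restrict (Ioo (0:ℝ) (n:ℝ)))) := by
    apply Measurable.aemeasurable
    exact (((Real.measurable_log.comp measurable_fst).mul measurable_snd).exp).ennreal_ofReal
  rw [MeasureTheory.lintegral_lintegral_swap meas]
  have step2 : ∀ s ∈ Ioo (0:ℝ) (n:ℝ),
      ∫⁻ u in Ioo (0:ℝ) 1, ENNReal.ofReal (Real.exp (Real.log u * s)) ∂volume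
        = ENNReal.ofReal (1 / (s + 1)) := by
    intro s hs
    have : ∫⁻ u in Ioo (0:ℝ) 1, ENNReal.ofReal (Real.exp (Real.log u * s)) ∂volume
        = ∫⁻ u in Ioo (0:ℝ) 1, ENNReal.ofReal (u ^ s) ∂volume := by
      refine setLIntegral_congr_fun measurableSet_Ioo ?_
      intro u hu
      dsimp only
      rw [Real.rpow_def_of_pos hu.1]
    rw [this, ← MeasureTheory.ofReal_integral_eq_lintegral_ofReal (rpow_integrableOn hs.1),
      rpow_int_Ioo hs.1]
    refine (MeasureTheory.ae_restrict_iff' measurableSet_Ioo).mpr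
      (Filter.Eventually.of_forall (fun u hu => Real.rpow_nonneg hu.1.le s))
  rw [setLIntegral_congr_fun measurableSet_Ioo step2]
  rw [← MeasureTheory.ofReal_integral_eq_lintegral_ofReal]
  · congr 1
    rw [MeasureTheory.integral_Ioc_eq_integral_Ioo.symm,
      ← intervalIntegral.integral_of_le (Nat.cast_nonneg n)]
    have : ∀ s : ℝ, (1:ℝ) / (s + 1) = (s + 1)⁻¹ := fun s => one_div _
    simp_rw [this]
    rw [intervalIntegral.integral_comp_add_right (fun x => x⁻¹) 1, zero_add]
    rw [integral_inv_of_pos one_pos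
      (by have := Nat.cast_nonneg (α := ℝ) n; linarith), div_one]
  · refine ContinuousOn.integrableOn_compact isCompact_Icc ?_ |>.mono_set Ioo_subset_Icc_self
    intro s hs
    apply ContinuousAt.continuousWithinAt
    have : s + 1 ≠ 0 := by rcases hs with ⟨h1, _⟩; intro h; linarith
    exact (continuousAt_const.div ((continuous_id.add continuous_const).continuousAt) this)
  · refine (MeasureTheory.ae_restrict_iff' measurableSet_Ioo).mpr
      (Filter.Eventually.of_forall (fun s hs => one_div_nonneg.mpr (by linarith [hs.1])))

private lemma intQ (n : ℕ) :
    ∫ u in Ioo (0:ℝ) 1, (1 - u ^ n) / Real.log u ∂volume = -Real.log (n + 1) := by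
  have h1 : ∀ u : ℝ, (1 - u ^ n) / Real.log u = -((1 - u ^ n) / (-Real.log u)) := by
    intro u; rw [div_neg, neg_neg]
  simp_rw [h1]
  rw [MeasureTheory.integral_neg, neg_inj]
  rw [MeasureTheory.integral_eq_lintegral_of_nonneg_ae]
  · rw [Q_eq n, ENNReal.toReal_ofReal]
    exact Real.log_nonneg (by linarith [Nat.cast_nonneg (α := ℝ) n])
  · refine (MeasureTheory.ae_restrict_iff' measurableSet_Ioo).mpr
      (Filter.Eventually.of_forall (fun u hu => q_nonneg hu n))
  · apply Measurable.aestronglyMeasurable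
    exact ((measurable_const.sub (measurable_id.pow_const n)).div
      Real.measurable_log.neg)

end aux2

section aux3

open Real Set Filter Topology ENNReal intervalIntegral Finset

private lemma h_integrableOn : IntegrableOn sondowH (Ioo (0:ℝ) 1) volume := by
  refine (MeasureTheory.integrable_const (1:ℝ)).mono'
    sondowH_measurable.aestronglyMeasurable ?_
  refine (MeasureTheory.ae_restrict_iff' measurableSet_Ioo).mpr
    (Filter.Eventually.of_forall (fun u hu => ?_))
  rw [Real.norm_eq_abs, abs_of_nonneg (sondowH_nonneg hu)]
  exact sondowH_le_one hu

private lemma pow_mul_h_integrableOn (n : ℕ) :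
    IntegrableOn (fun u : ℝ => u ^ n * sondowH u) (Ioo (0:ℝ) 1) volume := by
  refine (MeasureTheory.integrable_const (1:ℝ)).mono'
    ((measurable_id.pow_const n).mul sondowH_measurable).aestronglyMeasurable ?_
  refine (MeasureTheory.ae_restrict_iff' measurableSet_Ioo).mpr
    (Filter.Eventually.of_forall (fun u hu => ?_))
  have h0 := sondowH_nonneg hu
  have h1 := sondowH_le_one hu
  have hp : (0:ℝ) ≤ u ^ n := pow_nonneg hu.1.le n
  have hp1 : u ^ n ≤ 1 := pow_le_one₀ hu.1.le hu.2.le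
  rw [Real.norm_eq_abs, abs_of_nonneg (mul_nonneg hp h0)]
  nlinarith

private lemma q_integrableOn (n : ℕ) :
    IntegrableOn (fun u : ℝ => (1 - u ^ n) / Real.log u) (Ioo (0:ℝ) 1) volume := by
  refine (MeasureTheory.integrable_const (n:ℝ)).mono'
    ((measurable_const.sub (measurable_id.pow_const n)).div
      Real.measurable_log).aestronglyMeasurable ?_
  refine (MeasureTheory.ae_restrict_iff' measurableSet_Ioo).mpr
    (Filter.Eventually.of_forall (fun u hu => ?_))
  have h1 : (1 - u ^ n) / Real.log u = -((1 - u ^ n) / (-Real.log u)) := by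
    rw [div_neg, neg_neg]
  rw [Real.norm_eq_abs, h1, abs_neg, abs_of_nonneg (q_nonneg hu n)]
  exact q_le hu n

private lemma poly_integrableOn (n : ℕ) :
    IntegrableOn (fun u : ℝ => ∑ k ∈ range n, u ^ k) (Ioo (0:ℝ) 1) volume := by
  have : Continuous (fun u : ℝ => ∑ k ∈ range n, u ^ k) :=
    continuous_finset_sum _ (fun k _ => continuous_pow k)
  have h : IntegrableOn (fun u : ℝ => ∑ k ∈ range n, u ^ k) (Icc (0:ℝ) 1) volume :=
    this.integrableOn_Icc
  exact h.mono_set Ioo_subset_Icc_self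

private lemma poly_int (n : ℕ) :
    ∫ u in Ioo (0:ℝ) 1, (∑ k ∈ range n, u ^ k) ∂volume = (harmonic n : ℝ) := by
  rw [← MeasureTheory.integral_Ioc_eq_integral_Ioo, ← intervalIntegral.integral_of_le zero_le_one]
  rw [intervalIntegral.integral_finset_sum (fun k _ =>
    (continuous_pow k).intervalIntegrable 0 1)]
  have : ∀ k ∈ range n, ∫ u in (0:ℝ)..1, u ^ k = ((k:ℝ) + 1)⁻¹ := by
    intro k _
    rw [integral_pow]
    push_cast
    rw [one_pow, zero_pow (by positivity), sub_zero, one_div]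
  rw [Finset.sum_congr rfl this, harmonic]
  push_cast
  ring

private lemma pow_int_Ioo (n : ℕ) :
    ∫ u in Ioo (0:ℝ) 1, u ^ n ∂volume = ((n:ℝ) + 1)⁻¹ := by
  rw [← MeasureTheory.integral_Ioc_eq_integral_Ioo, ← intervalIntegral.integral_of_le zero_le_one]
  rw [integral_pow, one_pow, zero_pow (by positivity), sub_zero, one_div]

private lemma h_decomp {u : ℝ} (hu : u ∈ Ioo (0:ℝ) 1) (n : ℕ) :
    sondowH u = (∑ k ∈ range n, u ^ k) + (1 - u ^ n) / Real.log u + u ^ n * sondowH u := by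
  have hu1 : u ≠ 1 := ne_of_lt hu.2
  have hlog : Real.log u ≠ 0 := by linarith [log_neg' hu]
  have h1u : (1:ℝ) - u ≠ 0 := by intro h; apply hu1; linarith
  have h2 : u - 1 ≠ 0 := sub_ne_zero.mpr hu1
  rw [geom_sum_eq hu1]
  unfold sondowH
  field_simp
  ring

private lemma int_h :
    ∫ u in Ioo (0:ℝ) 1, sondowH u ∂volume = Real.eulerMascheroniConstant := by
  set I := ∫ u in Ioo (0:ℝ) 1, sondowH u ∂volume with hI
  set ε : ℕ → ℝ := fun n => ∫ u in Ioo (0:ℝ) 1, u ^ n * sondowH u ∂volume with hε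
  have key : ∀ n : ℕ, I = (harmonic n : ℝ) + (-Real.log (n + 1)) + ε n := by
    intro n
    have : I = ∫ u in Ioo (0:ℝ) 1,
        ((∑ k ∈ range n, u ^ k) + (1 - u ^ n) / Real.log u + u ^ n * sondowH u) ∂volume := by
      exact MeasureTheory.setIntegral_congr_fun measurableSet_Ioo (fun u hu => h_decomp hu n)
    have A := MeasureTheory.integral_add (μ := volume.restrict (Ioo (0:ℝ) 1))
      ((poly_integrableOn n).add (q_integrableOn n)) (pow_mul_h_integrableOn n)
    have B := MeasureTheory.integral_add (μ := volume.restrict (Ioo (0:ℝ) 1))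
      (poly_integrableOn n) (q_integrableOn n)
    simp only [Pi.add_apply] at A B
    rw [this, A, B, poly_int n, intQ n]
  have eps_nonneg : ∀ n : ℕ, 0 ≤ ε n := by
    intro n
    refine MeasureTheory.setIntegral_nonneg measurableSet_Ioo (fun u hu => ?_)
    exact mul_nonneg (pow_nonneg hu.1.le n) (sondowH_nonneg hu)
  have eps_le : ∀ n : ℕ, ε n ≤ ((n:ℝ) + 1)⁻¹ := by
    intro n
    have hpowint : IntegrableOn (fun u : ℝ => u ^ n) (Ioo (0:ℝ) 1) volume := by
      have : IntegrableOn (fun u : ℝ => u ^ n) (Icc (0:ℝ) 1) volume :=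
        (continuous_pow n).integrableOn_Icc
      exact this.mono_set Ioo_subset_Icc_self
    have hle : ε n ≤ ∫ u in Ioo (0:ℝ) 1, u ^ n ∂volume := by
      refine MeasureTheory.setIntegral_mono_on (pow_mul_h_integrableOn n) hpowint
        measurableSet_Ioo (fun u hu => ?_)
      have h1 := sondowH_le_one hu
      have h0 := pow_nonneg hu.1.le n
      nlinarith [sondowH_nonneg hu]
    rw [pow_int_Ioo n] at hle
    exact hle
  have heps : Tendsto ε atTop (𝓝 0) := by
    refine squeeze_zero eps_nonneg (fun n => (eps_le n).trans (le_of_eq (one_div _).symm))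
      tendsto_one_div_add_atTop_nhds_zero_nat
  have lim1 : Tendsto (fun n : ℕ => (harmonic n : ℝ) - Real.log ((n:ℝ) + 1)) atTop (𝓝 I) := by
    have heq : (fun n : ℕ => (harmonic n : ℝ) - Real.log ((n:ℝ) + 1)) = fun n => I - ε n := by
      funext n; rw [key n]; ring
    rw [heq]
    simpa using tendsto_const_nhds.sub heps
  exact tendsto_nhds_unique lim1 Real.tendsto_harmonic_sub_log_add_one

end aux3

section main

open Real Set Filter Topology ENNReal intervalIntegral

private lemma g_measurable : Measurable sondowG := by
  unfold sondowG
  exact ((measurable_const.sub measurable_id).mul Real.measurable_log.neg).inv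

private lemma g_nonneg_s18 {u : ℝ} (hu : u ∈ Ioo (0:ℝ) 1) : 0 ≤ sondowG u := by
  have h1 : (0:ℝ) < 1 - u := by linarith [hu.2]
  have h2 : (0:ℝ) < -Real.log u := by linarith [log_neg' hu]
  unfold sondowG
  positivity

private lemma g_le {x u : ℝ} (hx : x ∈ Ioo (0:ℝ) 1) (hu : u ∈ Ioo (0:ℝ) x) :
    sondowG u ≤ ((1 - x) * (-Real.log x))⁻¹ := by
  have hu1 : u ∈ Ioo (0:ℝ) 1 := ⟨hu.1, lt_trans hu.2 hx.2⟩
  have h1 : (0:ℝ) < 1 - x := by linarith [hx.2]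
  have h2 : (0:ℝ) < -Real.log x := by linarith [log_neg' hx]
  have h3 : 1 - x ≤ 1 - u := by linarith [hu.2]
  have h4 : -Real.log x ≤ -Real.log u := by
    have := Real.log_le_log hu.1 hu.2.le
    linarith
  unfold sondowG
  apply inv_anti₀ (by positivity)
  exact mul_le_mul h3 h4 h2.le (by linarith)

private lemma g_integrableOn {x : ℝ} (hx : x ∈ Ioo (0:ℝ) 1) :
    IntegrableOn sondowG (Ioo (0:ℝ) x) volume := by
  refine (MeasureTheory.integrable_const (((1 - x) * (-Real.log x))⁻¹)).mono'
    g_measurable.aestronglyMeasurable ?_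
  refine (MeasureTheory.ae_restrict_iff' measurableSet_Ioo).mpr
    (Filter.Eventually.of_forall (fun u hu => ?_))
  rw [Real.norm_eq_abs, abs_of_nonneg (g_nonneg_s18 ⟨hu.1, lt_trans hu.2 hx.2⟩)]
  exact g_le hx hu

private noncomputable def sondowGE (x : ℝ) : ℝ≥0∞ :=
  ∫⁻ u in Ioo (0:ℝ) x, ENNReal.ofReal (sondowG u) ∂volume

private lemma GE_mono : Monotone sondowGE := fun a b hab =>
  MeasureTheory.lintegral_mono_set (Set.Ioo_subset_Ioo le_rfl hab)

private lemma GE_eq {x : ℝ} (hx : x ∈ Ioo (0:ℝ) 1) :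
    sondowGE x = ENNReal.ofReal (∫ u in Ioo (0:ℝ) x, sondowG u ∂volume) := by
  rw [sondowGE, ← MeasureTheory.ofReal_integral_eq_lintegral_ofReal (g_integrableOn hx)]
  refine (MeasureTheory.ae_restrict_iff' measurableSet_Ioo).mpr
    (Filter.Eventually.of_forall (fun u hu => g_nonneg_s18 ⟨hu.1, lt_trans hu.2 hx.2⟩))

private lemma inner_eq {x : ℝ} (hx : x ∈ Ioo (0:ℝ) 1) :
    ∫ y in Ioo (0:ℝ) 1, (1 - x) / ((1 - x * y) * (-Real.log (x * y))) ∂volume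
      = (1 - x) * (x⁻¹ * ∫ u in Ioo (0:ℝ) x, sondowG u ∂volume) := by
  have step1 : ∫ y in Ioo (0:ℝ) 1, (1 - x) / ((1 - x * y) * (-Real.log (x * y))) ∂volume
      = ∫ y in Ioo (0:ℝ) 1, (1 - x) * sondowG (x * y) ∂volume := by
    refine MeasureTheory.setIntegral_congr_fun measurableSet_Ioo (fun y hy => ?_)
    unfold sondowG
    rw [div_eq_mul_inv]
  rw [step1, MeasureTheory.integral_const_mul]
  congr 1
  rw [← MeasureTheory.integral_Ioc_eq_integral_Ioo, ← intervalIntegral.integral_of_le zero_le_one]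
  rw [intervalIntegral.integral_comp_mul_left sondowG (ne_of_gt hx.1), mul_zero, mul_one,
    smul_eq_mul]
  congr 1
  rw [intervalIntegral.integral_of_le hx.1.le, MeasureTheory.integral_Ioc_eq_integral_Ioo]

private noncomputable def sondowPhi (x : ℝ) : ℝ := (1 - x) * (x⁻¹ * (sondowGE x).toReal)

private lemma Phi_measurable : Measurable sondowPhi := by
  unfold sondowPhi
  exact (measurable_const.sub measurable_id).mul
    (measurable_id.inv.mul GE_mono.measurable.ennreal_toReal)

private lemma log_int {u : ℝ} (hu : u ∈ Ioo (0:ℝ) 1) :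
    ∫ x in Ioo u 1, (1 - x) * x⁻¹ ∂volume = u - 1 - Real.log u := by
  rw [← MeasureTheory.integral_Ioc_eq_integral_Ioo, ← intervalIntegral.integral_of_le hu.2.le]
  have hderiv : ∀ x ∈ Set.uIcc u 1, HasDerivAt (fun t : ℝ => Real.log t - t) ((1 - x) * x⁻¹) x := by
    intro x hxmem
    rw [Set.uIcc_of_le hu.2.le] at hxmem
    have hx0 : (0:ℝ) < x := lt_of_lt_of_le hu.1 hxmem.1
    have h := (Real.hasDerivAt_log (ne_of_gt hx0)).sub (hasDerivAt_id' x)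
    rw [sub_mul, one_mul, mul_inv_cancel₀ (ne_of_gt hx0)]
    exact h
  have hcont : IntervalIntegrable (fun x : ℝ => (1 - x) * x⁻¹) volume u 1 := by
    apply ContinuousOn.intervalIntegrable
    rw [Set.uIcc_of_le hu.2.le]
    intro x hxmem
    have hx0 : (0:ℝ) < x := lt_of_lt_of_le hu.1 hxmem.1
    exact ((continuous_const.sub continuous_id).continuousAt.mul
      (continuousAt_inv₀ (ne_of_gt hx0))).continuousWithinAt
  rw [intervalIntegral.integral_eq_sub_of_hasDerivAt hderiv hcont]
  rw [Real.log_one]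
  ring

private lemma log_integrableOn {u : ℝ} (hu : u ∈ Ioo (0:ℝ) 1) :
    IntegrableOn (fun x : ℝ => (1 - x) * x⁻¹) (Ioo u 1) volume := by
  have hcont : ContinuousOn (fun x : ℝ => (1 - x) * x⁻¹) (Icc u 1) := by
    intro x hxmem
    have hx0 : (0:ℝ) < x := lt_of_lt_of_le hu.1 hxmem.1
    exact ((continuous_const.sub continuous_id).continuousAt.mul
      (continuousAt_inv₀ (ne_of_gt hx0))).continuousWithinAt
  exact (hcont.integrableOn_compact isCompact_Icc).mono_set Ioo_subset_Icc_self

private lemma log_lint {u : ℝ} (hu : u ∈ Ioo (0:ℝ) 1) :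
    ∫⁻ x in Ioo u 1, ENNReal.ofReal ((1 - x) * x⁻¹) ∂volume
      = ENNReal.ofReal (u - 1 - Real.log u) := by
  rw [← MeasureTheory.ofReal_integral_eq_lintegral_ofReal (log_integrableOn hu), log_int hu]
  refine (MeasureTheory.ae_restrict_iff' measurableSet_Ioo).mpr
    (Filter.Eventually.of_forall (fun x hx => ?_))
  have : (0:ℝ) < x := lt_trans hu.1 hx.1
  have : (0:ℝ) ≤ 1 - x := by linarith [hx.2]
  positivity

end main


open Real Set Filter Topology ENNReal in
private noncomputable def sondowF (x u : ℝ) : ℝ≥0∞ :=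
  (Set.Ioo (0:ℝ) x).indicator (fun v => ENNReal.ofReal ((1 - x) * (x⁻¹ * sondowG v))) u

section main2

open Real Set Filter Topology ENNReal

private lemma F_measurable : Measurable (Function.uncurry sondowF) := by
  have heq : Function.uncurry sondowF = fun p : ℝ × ℝ =>
      Set.indicator {q : ℝ × ℝ | 0 < q.2 ∧ q.2 < q.1}
        (fun q => ENNReal.ofReal ((1 - q.1) * (q.1⁻¹ * sondowG q.2))) p := by
    funext p
    rcases p with ⟨x, u⟩
    simp only [Function.uncurry, sondowF, Set.indicator_apply, Set.mem_Ioo, Set.mem_setOf_eq]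
  rw [heq]
  refine Measurable.indicator ?_ ?_
  · exact ((measurable_const.sub measurable_fst).mul
      (measurable_fst.inv.mul (g_measurable.comp measurable_snd))).ennreal_ofReal
  · exact (measurableSet_lt measurable_const measurable_snd).inter
      (measurableSet_lt measurable_snd measurable_fst)

private lemma stepA {x : ℝ} (hx : x ∈ Ioo (0:ℝ) 1) :
    ENNReal.ofReal (sondowPhi x) = ∫⁻ u in Ioo (0:ℝ) 1, sondowF x u ∂volume := by
  have hx1 : (0:ℝ) ≤ 1 - x := by linarith [hx.2]
  have hxi : (0:ℝ) ≤ x⁻¹ := inv_nonneg.mpr hx.1.le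
  have hGEne : sondowGE x ≠ ⊤ := by rw [GE_eq hx]; exact ENNReal.ofReal_ne_top
  have e1 : ENNReal.ofReal (sondowPhi x) = ENNReal.ofReal ((1 - x) * x⁻¹) * sondowGE x := by
    unfold sondowPhi
    rw [show (1 - x) * (x⁻¹ * (sondowGE x).toReal) = ((1 - x) * x⁻¹) * (sondowGE x).toReal
      by ring, ENNReal.ofReal_mul (mul_nonneg hx1 hxi), ENNReal.ofReal_toReal hGEne]
  rw [e1, sondowGE, ← MeasureTheory.lintegral_const_mul _ g_measurable.ennreal_ofReal]
  have e2 : ∫⁻ u in Ioo (0:ℝ) x, ENNReal.ofReal ((1 - x) * x⁻¹) * ENNReal.ofReal (sondowG u)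
        ∂volume
      = ∫⁻ u in Ioo (0:ℝ) x, ENNReal.ofReal ((1 - x) * (x⁻¹ * sondowG u)) ∂volume := by
    refine MeasureTheory.setLIntegral_congr_fun measurableSet_Ioo
      (fun u hu => ?_)
    rw [← ENNReal.ofReal_mul (by positivity), mul_assoc]
  rw [e2]
  have e3 : ∫⁻ u in Ioo (0:ℝ) 1, sondowF x u ∂volume
      = ∫⁻ u in Ioo (0:ℝ) x, ENNReal.ofReal ((1 - x) * (x⁻¹ * sondowG u)) ∂volume := by
    unfold sondowF
    rw [MeasureTheory.lintegral_indicator measurableSet_Ioo,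
      MeasureTheory.Measure.restrict_restrict measurableSet_Ioo,
      Set.inter_eq_left.mpr (Set.Ioo_subset_Ioo le_rfl hx.2.le)]
  rw [e3]

private lemma stepD {u : ℝ} (hu : u ∈ Ioo (0:ℝ) 1) :
    ∫⁻ x in Ioo (0:ℝ) 1, sondowF x u ∂volume
      = ENNReal.ofReal (sondowG u) * ENNReal.ofReal (u - 1 - Real.log u) := by
  have e1 : ∀ x : ℝ, sondowF x u
      = (Set.Ioi u).indicator (fun x => ENNReal.ofReal ((1 - x) * (x⁻¹ * sondowG u))) x := by
    intro x
    by_cases hc : u < x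
    · have hmem : u ∈ Ioo (0:ℝ) x := ⟨hu.1, hc⟩
      simp [sondowF, Set.indicator_apply, hmem, hc]
    · have hmem : u ∉ Ioo (0:ℝ) x := fun h => hc h.2
      simp [sondowF, Set.indicator_apply, hmem, hc]
  have hset : Set.Ioi u ∩ Set.Ioo (0:ℝ) 1 = Set.Ioo u 1 := by
    ext x
    simp only [Set.mem_inter_iff, Set.mem_Ioi, Set.mem_Ioo]
    constructor
    · rintro ⟨h1, _, h3⟩; exact ⟨h1, h3⟩
    · rintro ⟨h1, h2⟩; exact ⟨h1, lt_trans hu.1 h1, h2⟩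
  calc ∫⁻ x in Ioo (0:ℝ) 1, sondowF x u ∂volume
      = ∫⁻ x in Ioo (0:ℝ) 1,
          (Set.Ioi u).indicator (fun x => ENNReal.ofReal ((1 - x) * (x⁻¹ * sondowG u))) x
          ∂volume := MeasureTheory.lintegral_congr (fun x => e1 x)
    _ = ∫⁻ x in Ioo u 1, ENNReal.ofReal ((1 - x) * (x⁻¹ * sondowG u)) ∂volume := by
        rw [MeasureTheory.lintegral_indicator measurableSet_Ioi,
          MeasureTheory.Measure.restrict_restrict measurableSet_Ioi, hset]
    _ = ∫⁻ x in Ioo u 1, ENNReal.ofReal (sondowG u) * ENNReal.ofReal ((1 - x) * x⁻¹)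
          ∂volume := by
        refine MeasureTheory.setLIntegral_congr_fun measurableSet_Ioo
          (fun x hx => ?_)
        rw [← ENNReal.ofReal_mul (g_nonneg_s18 hu),
          show sondowG u * ((1 - x) * x⁻¹) = (1 - x) * (x⁻¹ * sondowG u) by ring]
    _ = ENNReal.ofReal (sondowG u) * ENNReal.ofReal (u - 1 - Real.log u) := by
        have hm : Measurable fun x : ℝ => ENNReal.ofReal ((1 - x) * x⁻¹) :=
          ((measurable_const.sub measurable_id).mul measurable_inv).ennreal_ofReal
        rw [MeasureTheory.lintegral_const_mul _ hm, log_lint hu]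

private lemma Lkey :
    ∫⁻ x in Ioo (0:ℝ) 1, ENNReal.ofReal (sondowPhi x) ∂volume
      = ENNReal.ofReal Real.eulerMascheroniConstant := by
  have e0 : ∫⁻ x in Ioo (0:ℝ) 1, ENNReal.ofReal (sondowPhi x) ∂volume
      = ∫⁻ x in Ioo (0:ℝ) 1, ∫⁻ u in Ioo (0:ℝ) 1, sondowF x u ∂volume ∂volume :=
    MeasureTheory.setLIntegral_congr_fun measurableSet_Ioo
      (fun x hx => stepA hx)
  rw [e0, MeasureTheory.lintegral_lintegral_swap F_measurable.aemeasurable]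
  have e1 : ∫⁻ u in Ioo (0:ℝ) 1, ∫⁻ x in Ioo (0:ℝ) 1, sondowF x u ∂volume ∂volume
      = ∫⁻ u in Ioo (0:ℝ) 1, ENNReal.ofReal (sondowH u) ∂volume := by
    refine MeasureTheory.setLIntegral_congr_fun measurableSet_Ioo
      (fun u hu => ?_)
    rw [stepD hu, ← ENNReal.ofReal_mul (g_nonneg_s18 hu)]
    congr 1
    have hlog : Real.log u ≠ 0 := by linarith [log_neg' hu]
    have h1u : (1:ℝ) - u ≠ 0 := by intro h; linarith [hu.2, h]
    unfold sondowG sondowH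
    field_simp
    ring
  rw [e1, ← MeasureTheory.ofReal_integral_eq_lintegral_ofReal h_integrableOn, int_h]
  refine (MeasureTheory.ae_restrict_iff' measurableSet_Ioo).mpr
    (Filter.Eventually.of_forall (fun u hu => sondowH_nonneg hu))

end main2

theorem sondow_gamma :
    Real.eulerMascheroniConstant
      = ∫ x in Set.Ioo (0:ℝ) 1, ∫ y in Set.Ioo (0:ℝ) 1,
          (1 - x) / ((1 - x * y) * (-Real.log (x * y))) ∂volume ∂volume := by
  have step0 : Set.EqOn
      (fun x : ℝ => ∫ y in Set.Ioo (0:ℝ) 1,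
        (1 - x) / ((1 - x * y) * (-Real.log (x * y))) ∂volume)
      sondowPhi (Set.Ioo (0:ℝ) 1) := by
    intro x hx
    have hnn : 0 ≤ ∫ u in Set.Ioo (0:ℝ) x, sondowG u ∂volume :=
      MeasureTheory.setIntegral_nonneg measurableSet_Ioo
        (fun u hu => g_nonneg_s18 ⟨hu.1, lt_trans hu.2 hx.2⟩)
    simp only
    rw [inner_eq hx, sondowPhi, GE_eq hx, ENNReal.toReal_ofReal hnn]
  rw [MeasureTheory.setIntegral_congr_fun measurableSet_Ioo step0]
  have phi_nonneg : 0 ≤ᵐ[volume.restrict (Set.Ioo (0:ℝ) 1)] sondowPhi := by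
    refine (MeasureTheory.ae_restrict_iff' measurableSet_Ioo).mpr
      (Filter.Eventually.of_forall (fun x hx => ?_))
    unfold sondowPhi
    have h1 : (0:ℝ) ≤ 1 - x := by linarith [hx.2]
    have h2 : (0:ℝ) < x := hx.1
    have h3 : (0:ℝ) ≤ (sondowGE x).toReal := ENNReal.toReal_nonneg
    positivity
  rw [MeasureTheory.integral_eq_lintegral_of_nonneg_ae phi_nonneg
    Phi_measurable.aestronglyMeasurable]
  rw [Lkey, ENNReal.toReal_ofReal]
  linarith [Real.one_half_lt_eulerMascheroniConstant]
end
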